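/- arXiv:2512.20439 — 13 statements merged into one kernel-verified Lean document; each statement's English description precedes it below -/
import Mathlib

section
/- Define P : ℝ² → ℝ² by P(x₁, x₂) = (x₁²/2 + 2x₁x₂, −x₂²/2 − x₁x₂). With the ℓ¹ norm on ℝ², the supremum of ‖P(x)‖₁ over the closed unit ball of ℓ¹² equals 1. -/
theorem stmt_2 :
    sSup { r : ℝ | ∃ x₁ x₂ : ℝ, |x₁| + |x₂| ≤ 1 ∧
      r = |x₁ ^ 2 / 2 + 2 * x₁ * x₂| + |-x₂ ^ 2 / 2 - x₁ * x₂| } = 1 := by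
  apply IsGreatest.csSup_eq
  constructor
  · refine ⟨1/2, 1/2, by rw [abs_of_nonneg (by norm_num : (0:ℝ) ≤ 1/2)]; norm_num, ?_⟩
    rw [abs_of_nonneg (by norm_num), abs_of_nonpos (by norm_num)]
    norm_num
  · rintro r ⟨x₁, x₂, h, rfl⟩
    have h1 : |x₁ ^ 2 / 2 + 2 * x₁ * x₂| ≤ |x₁| ^ 2 / 2 + 2 * (|x₁| * |x₂|) := by
      calc |x₁ ^ 2 / 2 + 2 * x₁ * x₂| ≤ |x₁ ^ 2 / 2| + |2 * x₁ * x₂| := abs_add_le _ _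
        _ = |x₁| ^ 2 / 2 + 2 * (|x₁| * |x₂|) := by
          rw [abs_div, abs_mul, abs_mul, sq_abs, ← sq_abs]
          norm_num
          ring
    have h2 : |-x₂ ^ 2 / 2 - x₁ * x₂| ≤ |x₂| ^ 2 / 2 + |x₁| * |x₂| := by
      calc |-x₂ ^ 2 / 2 - x₁ * x₂| ≤ |-x₂ ^ 2 / 2| + |x₁ * x₂| := abs_sub _ _
        _ = |x₂| ^ 2 / 2 + |x₁| * |x₂| := by
          rw [abs_div, abs_neg, abs_mul, sq_abs, ← sq_abs]
          norm_num
    have ha : (0:ℝ) ≤ |x₁| := abs_nonneg _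
    have hb : (0:ℝ) ≤ |x₂| := abs_nonneg _
    nlinarith [sq_nonneg (|x₁| - |x₂|), sq_nonneg (|x₁| + |x₂|)]
end

section
/- Let x = (x₁, x₂) ∈ ℝ² with |x₁| + |x₂| = 1 and let b = (b₁, b₂) ∈ ℝ² with max(|b₁|, |b₂|) = 1. If x₁²·b₁ + x₂²·b₂ = 1, then (|x₁| = 1 and x₂ = 0) or (x₁ = 0 and |x₂| = 1). -/
theorem stmt_3 (x₁ x₂ b₁ b₂ : ℝ) (hx : |x₁| + |x₂| = 1)
    (hb : max |b₁| |b₂| = 1) (h : x₁ ^ 2 * b₁ + x₂ ^ 2 * b₂ = 1) :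
    (|x₁| = 1 ∧ x₂ = 0) ∨ (x₁ = 0 ∧ |x₂| = 1) := by
  have hb1 : b₁ ≤ 1 := le_trans (le_abs_self _) (hb ▸ le_max_left _ _)
  have hb2 : b₂ ≤ 1 := le_trans (le_abs_self _) (hb ▸ le_max_right _ _)
  have h1 : |x₁| * |x₂| ≤ 0 := by
    nlinarith [sq_abs x₁, sq_abs x₂, sq_nonneg x₁, sq_nonneg x₂, sq_nonneg (|x₁| + |x₂|)]
  have h2 : x₁ = 0 ∨ x₂ = 0 := by
    rcases mul_eq_zero.mp (le_antisymm h1 (mul_nonneg (abs_nonneg _) (abs_nonneg _))) with h' | h'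
    · exact Or.inl (abs_eq_zero.mp h')
    · exact Or.inr (abs_eq_zero.mp h')
  rcases h2 with h' | h'
  · right
    refine ⟨h', ?_⟩
    simpa [h'] using hx
  · left
    refine ⟨?_, h'⟩
    simpa [h'] using hx
end

section
/- Define P : ℝ² → ℝ² by P(x₁, x₂) = (x₁²/2 + 2x₁x₂, −x₂²/2 − x₁x₂) and consider ℝ² with the ℓ¹ norm. For every x = (x₁, x₂) with |x₁| + |x₂| = 1 and every b = (b₁, b₂) with max(|b₁|,|b₂|) = 1 satisfying x₁²b₁ + x₂²b₂ = 1, we have |(x₁²/2 + 2x₁x₂)b₁ + (−x₂²/2 − x₁x₂)b₂| = 1/2. -/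
theorem stmt_4 (x₁ x₂ b₁ b₂ : ℝ) (hx : |x₁| + |x₂| = 1)
    (hb : max |b₁| |b₂| = 1) (h : x₁ ^ 2 * b₁ + x₂ ^ 2 * b₂ = 1) :
    |(x₁ ^ 2 / 2 + 2 * x₁ * x₂) * b₁ + (-x₂ ^ 2 / 2 - x₁ * x₂) * b₂| = 1 / 2 := by
  have hb1 : |b₁| ≤ 1 := hb ▸ le_max_left _ _
  have hb2 : |b₂| ≤ 1 := hb ▸ le_max_right _ _
  have hb1' := abs_le.mp hb1
  have hb2' := abs_le.mp hb2
  have h1 : |x₁| * |x₂| = 0 := by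
    nlinarith [abs_nonneg x₁, abs_nonneg x₂, sq_abs x₁, sq_abs x₂, sq_nonneg x₁, sq_nonneg x₂,
      mul_le_mul_of_nonneg_left hb1'.2 (sq_nonneg x₁),
      mul_le_mul_of_nonneg_left hb2'.2 (sq_nonneg x₂)]
  rcases mul_eq_zero.mp h1 with h0 | h0 <;> rw [abs_eq_zero] at h0 <;> subst h0
  · have hx2 : x₂ ^ 2 = 1 := by
      have : |x₂| = 1 := by simpa using hx
      nlinarith [sq_abs x₂]
    have hbb : b₂ = 1 := by nlinarith
    rw [hbb]; simp [hx2]; norm_num [abs_of_nonpos]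
  · have hx2 : x₁ ^ 2 = 1 := by
      have : |x₁| = 1 := by simpa using hx
      nlinarith [sq_abs x₁]
    have hbb : b₁ = 1 := by nlinarith
    rw [hbb]; simp [hx2]
end

section
/- For all real x₁, x₂ with |x₁| + |x₂| ≤ 1, we have |x₁²/2 + 2x₁x₂| + |x₂²/2 + x₁x₂| ≤ 1 − 2(|x₂| − 1/2)² ≤ 1. -/
theorem stmt_5 (x₁ x₂ : ℝ) (h : |x₁| + |x₂| ≤ 1) :
    |x₁ ^ 2 / 2 + 2 * x₁ * x₂| + |x₂ ^ 2 / 2 + x₁ * x₂|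
      ≤ 1 - 2 * (|x₂| - 1 / 2) ^ 2 ∧ 1 - 2 * (|x₂| - 1 / 2) ^ 2 ≤ 1 := by
  have ha := abs_nonneg x₁
  have hb := abs_nonneg x₂
  have h1 : |x₁ ^ 2 / 2 + 2 * x₁ * x₂| ≤ |x₁| ^ 2 / 2 + 2 * (|x₁| * |x₂|) := by
    calc |x₁ ^ 2 / 2 + 2 * x₁ * x₂| ≤ |x₁ ^ 2 / 2| + |2 * x₁ * x₂| := abs_add_le _ _
    _ = |x₁| ^ 2 / 2 + 2 * (|x₁| * |x₂|) := by
        rw [abs_div, abs_mul, abs_mul, ← sq_abs]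
        simp [abs_of_nonneg]
        ring
  have h2 : |x₂ ^ 2 / 2 + x₁ * x₂| ≤ |x₂| ^ 2 / 2 + |x₁| * |x₂| := by
    calc |x₂ ^ 2 / 2 + x₁ * x₂| ≤ |x₂ ^ 2 / 2| + |x₁ * x₂| := abs_add_le _ _
    _ = |x₂| ^ 2 / 2 + |x₁| * |x₂| := by
        rw [abs_div, abs_mul, ← sq_abs]
        simp [abs_of_nonneg]
  constructor
  · nlinarith [sq_nonneg (|x₁| + |x₂| - 1), mul_nonneg ha hb]
  · nlinarith [sq_nonneg (|x₂| - 1 / 2)]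
end

section
/- Let 1 < p < ∞ with conjugate exponent q (1/p + 1/q = 1), let k ≥ p be an integer, and let x = (x₁, x₂), b = (b₁, b₂) ∈ ℝ² satisfy |x₁|^p + |x₂|^p = 1, |b₁|^q + |b₂|^q = 1, and x₁^k b₁ + x₂^k b₂ = 1. Then (x₁ = 0 or x₂ = 0), and in either case x₂^k b₁ + x₁^k b₂ = 0. -/
-- a ≥ 0, a^p ≤ 1, p > 0 ⇒ a ≤ 1
lemma aux_le_one (a p : ℝ) (ha : 0 ≤ a) (hp : 0 < p) (h : a ^ p ≤ 1) : a ≤ 1 := by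
  by_contra hc
  push_neg at hc
  have : (1:ℝ) ^ p < a ^ p := Real.rpow_lt_rpow (by norm_num) hc hp
  rw [Real.one_rpow] at this
  linarith

lemma aux_eq_one (a p : ℝ) (ha : 0 ≤ a) (hp : 0 < p) (h : a ^ p = 1) : a = 1 := by
  rcases lt_trichotomy a 1 with h1 | h1 | h1
  · have : a ^ p < 1 ^ p := Real.rpow_lt_rpow ha h1 hp
    rw [Real.one_rpow] at this; linarith
  · exact h1
  · have : (1:ℝ) ^ p < a ^ p := Real.rpow_lt_rpow (by norm_num) h1 hp
    rw [Real.one_rpow] at this; linarith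

-- |a|^k ≤ |a|^p when |a| ≤ 1, p ≤ k, p > 0
lemma aux_pow_le (a p : ℝ) (k : ℕ) (ha : 0 ≤ a) (ha1 : a ≤ 1) (hp : 0 < p) (hk : p ≤ (k:ℝ)) :
    a ^ k ≤ a ^ p := by
  rw [← Real.rpow_natCast a k]
  rcases eq_or_lt_of_le ha with h0 | h0
  · rw [← h0, Real.zero_rpow (ne_of_gt (hp.trans_le hk)), Real.zero_rpow (ne_of_gt hp)]
  · exact Real.rpow_le_rpow_of_exponent_ge h0 ha1 hk

lemma aux_final (q : ℝ) (hq0 : 0 < q) (k : ℕ) (hk0 : k ≠ 0) (p : ℝ) (hp0 : 0 < p)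
    (x b₁ b₂ : ℝ) (hx : |x| ^ p = 1) (hb : |b₁| ^ q + |b₂| ^ q = 1)
    (h : x ^ k * b₂ = 1) : b₁ = 0 := by
  have hx1 : |x| = 1 := aux_eq_one _ _ (abs_nonneg _) hp0 hx
  have hb2 : |b₂| = 1 := by
    have : |x ^ k * b₂| = 1 := by rw [h, abs_one]
    rwa [abs_mul, abs_pow, hx1, one_pow, one_mul] at this
  have hb1 : |b₁| ^ q = 0 := by
    rw [hb2, Real.one_rpow] at hb; linarith
  by_contra hc
  have : 0 < |b₁| ^ q := Real.rpow_pos_of_pos (abs_pos.mpr hc) q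
  linarith

theorem stmt_7 (p q : ℝ) (hp : 1 < p) (hq : 1 / p + 1 / q = 1)
    (k : ℕ) (hk : p ≤ (k : ℝ)) (x₁ x₂ b₁ b₂ : ℝ)
    (hx : |x₁| ^ p + |x₂| ^ p = 1) (hb : |b₁| ^ q + |b₂| ^ q = 1)
    (h : x₁ ^ k * b₁ + x₂ ^ k * b₂ = 1) :
    (x₁ = 0 ∨ x₂ = 0) ∧ x₂ ^ k * b₁ + x₁ ^ k * b₂ = 0 := by
  have hp0 : 0 < p := by linarith
  have hq0 : 0 < q := by
    rcases lt_trichotomy q 0 with h1 | h1 | h1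
    · have h2 : 0 < 1/p := by positivity
      have h3 : 1/q < 0 := by exact div_neg_of_pos_of_neg one_pos h1
      have h4 : 1/p < 1 := by rw [div_lt_one hp0]; linarith
      linarith
    · exfalso; rw [h1, div_zero, add_zero] at hq; field_simp at hq; linarith
    · exact h1
  have hk0 : k ≠ 0 := by rintro rfl; simp at hk; linarith
  -- boundedness
  have hx1p : |x₁| ^ p ≤ 1 := by have := Real.rpow_nonneg (abs_nonneg x₂) p; linarith
  have hx2p : |x₂| ^ p ≤ 1 := by have := Real.rpow_nonneg (abs_nonneg x₁) p; linarith
  have hb1q : |b₁| ^ q ≤ 1 := by have := Real.rpow_nonneg (abs_nonneg b₂) q; linarith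
  have hb2q : |b₂| ^ q ≤ 1 := by have := Real.rpow_nonneg (abs_nonneg b₁) q; linarith
  have hx1le : |x₁| ≤ 1 := aux_le_one _ _ (abs_nonneg _) hp0 hx1p
  have hx2le : |x₂| ≤ 1 := aux_le_one _ _ (abs_nonneg _) hp0 hx2p
  have hb1le : |b₁| ≤ 1 := aux_le_one _ _ (abs_nonneg _) hq0 hb1q
  have hb2le : |b₂| ≤ 1 := aux_le_one _ _ (abs_nonneg _) hq0 hb2q
  -- chain
  have t1 : x₁ ^ k * b₁ ≤ |x₁| ^ k * |b₁| := by
    calc x₁ ^ k * b₁ ≤ |x₁ ^ k * b₁| := le_abs_self _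
    _ = |x₁| ^ k * |b₁| := by rw [abs_mul, abs_pow]
  have t2 : x₂ ^ k * b₂ ≤ |x₂| ^ k * |b₂| := by
    calc x₂ ^ k * b₂ ≤ |x₂ ^ k * b₂| := le_abs_self _
    _ = |x₂| ^ k * |b₂| := by rw [abs_mul, abs_pow]
  have t3 : |x₁| ^ k * |b₁| ≤ |x₁| ^ p * |b₁| :=
    mul_le_mul_of_nonneg_right (aux_pow_le _ _ _ (abs_nonneg _) hx1le hp0 hk) (abs_nonneg _)
  have t4 : |x₂| ^ k * |b₂| ≤ |x₂| ^ p * |b₂| :=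
    mul_le_mul_of_nonneg_right (aux_pow_le _ _ _ (abs_nonneg _) hx2le hp0 hk) (abs_nonneg _)
  have t5 : |x₁| ^ p * |b₁| ≤ |x₁| ^ p :=
    mul_le_of_le_one_right (Real.rpow_nonneg (abs_nonneg _) p) hb1le
  have t6 : |x₂| ^ p * |b₂| ≤ |x₂| ^ p :=
    mul_le_of_le_one_right (Real.rpow_nonneg (abs_nonneg _) p) hb2le
  have e1 : |x₁| ^ p * |b₁| = |x₁| ^ p := by nlinarith [Real.rpow_nonneg (abs_nonneg x₁) p, Real.rpow_nonneg (abs_nonneg x₂) p]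
  have e2 : |x₂| ^ p * |b₂| = |x₂| ^ p := by nlinarith [Real.rpow_nonneg (abs_nonneg x₁) p, Real.rpow_nonneg (abs_nonneg x₂) p]
  -- one of x is 0
  have hx0 : x₁ = 0 ∨ x₂ = 0 := by
    by_contra hc
    push_neg at hc
    obtain ⟨h1, h2⟩ := hc
    have p1 : 0 < |x₁| ^ p := Real.rpow_pos_of_pos (abs_pos.mpr h1) p
    have p2 : 0 < |x₂| ^ p := Real.rpow_pos_of_pos (abs_pos.mpr h2) p
    have hb1 : |b₁| = 1 := by
      have : |x₁| ^ p * (|b₁| - 1) = 0 := by linarith [e1]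
      rcases mul_eq_zero.mp this with h | h
      · linarith
      · linarith
    have hb2 : |b₂| = 1 := by
      have : |x₂| ^ p * (|b₂| - 1) = 0 := by linarith [e2]
      rcases mul_eq_zero.mp this with h | h
      · linarith
      · linarith
    rw [hb1, hb2, Real.one_rpow] at hb
    linarith
  refine ⟨hx0, ?_⟩
  rcases hx0 with h0 | h0
  · subst h0
    rw [zero_pow hk0, zero_mul, zero_add] at h
    rw [abs_zero, Real.zero_rpow (ne_of_gt hp0), zero_add] at hx
    have hbz : b₁ = 0 := aux_final q hq0 k hk0 p hp0 x₂ b₁ b₂ hx hb h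
    rw [hbz, zero_pow hk0, mul_zero, zero_mul, add_zero]
  · subst h0
    rw [zero_pow hk0, zero_mul, add_zero] at h
    rw [abs_zero, Real.zero_rpow (ne_of_gt hp0), add_zero] at hx
    have hbz : b₂ = 0 := aux_final q hq0 k hk0 p hp0 x₁ b₂ b₁ hx (by linarith) h
    rw [hbz, zero_pow hk0, zero_mul, mul_zero, zero_add]
end

section
/- For all real x₁, x₂ with max(|x₁|, |x₂|) ≤ 1, we have |x₁²x₂ − x₂³| ≤ 1, and the supremum of |x₁²x₂ − x₂³| over the closed unit ball of ℓ∞² equals 1 (attained at (0, 1)). -/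
lemma aux_bound (x₁ x₂ : ℝ) (h : max |x₁| |x₂| ≤ 1) :
    |x₁ ^ 2 * x₂ - x₂ ^ 3| ≤ 1 := by
  have h1 : |x₁| ≤ 1 := le_trans (le_max_left _ _) h
  have h2 : |x₂| ≤ 1 := le_trans (le_max_right _ _) h
  have e : x₁ ^ 2 * x₂ - x₂ ^ 3 = x₂ * (x₁ ^ 2 - x₂ ^ 2) := by ring
  rw [e, abs_mul]
  have hsq1 : x₁ ^ 2 ≤ 1 := by nlinarith [abs_nonneg x₁, sq_abs x₁]
  have hsq2 : x₂ ^ 2 ≤ 1 := by nlinarith [abs_nonneg x₂, sq_abs x₂]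
  have hd : |x₁ ^ 2 - x₂ ^ 2| ≤ 1 := by
    rw [abs_le]; constructor <;> nlinarith [sq_nonneg x₁, sq_nonneg x₂]
  calc |x₂| * |x₁ ^ 2 - x₂ ^ 2| ≤ 1 * 1 :=
        mul_le_mul h2 hd (abs_nonneg _) zero_le_one
    _ = 1 := one_mul 1

theorem stmt_8 :
    (∀ x₁ x₂ : ℝ, max |x₁| |x₂| ≤ 1 → |x₁ ^ 2 * x₂ - x₂ ^ 3| ≤ 1) ∧
    sSup { r : ℝ | ∃ x₁ x₂ : ℝ, max |x₁| |x₂| ≤ 1 ∧ r = |x₁ ^ 2 * x₂ - x₂ ^ 3| } = 1 := by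
  refine ⟨aux_bound, ?_⟩
  have hmem : (1 : ℝ) ∈ { r : ℝ | ∃ x₁ x₂ : ℝ, max |x₁| |x₂| ≤ 1 ∧ r = |x₁ ^ 2 * x₂ - x₂ ^ 3| } := by
    exact ⟨0, 1, by norm_num⟩
  have hub : ∀ r ∈ { r : ℝ | ∃ x₁ x₂ : ℝ, max |x₁| |x₂| ≤ 1 ∧ r = |x₁ ^ 2 * x₂ - x₂ ^ 3| }, r ≤ 1 := by
    rintro r ⟨x₁, x₂, h, rfl⟩
    exact aux_bound x₁ x₂ h
  exact le_antisymm (csSup_le ⟨1, hmem⟩ hub) (le_csSup ⟨1, hub⟩ hmem)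
end

section
/- Let x = (x₁, x₂) ∈ ℝ² with max(|x₁|, |x₂|) = 1 and b = (b₁, b₂) ∈ ℝ² with |b₁| + |b₂| = 1. If x₁³b₁ + x₂³b₂ = 1, then |(x₁²x₂ − x₂³)b₁| ≤ 2/(3√3). -/
lemma aux_cubic (t : ℝ) (ht : |t| ≤ 1) : |t - t ^ 3| ≤ 2 / (3 * Real.sqrt 3) := by
  have hs : (0:ℝ) < Real.sqrt 3 := Real.sqrt_pos.mpr (by norm_num)
  have hs2 : Real.sqrt 3 ^ 2 = 3 := Real.sq_sqrt (by norm_num)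
  have hsle : Real.sqrt 3 ≤ 2 := by nlinarith
  have key : ∀ u : ℝ, -1 ≤ u → u ≤ 1 → u - u ^ 3 ≤ 2 / (3 * Real.sqrt 3) := by
    intro u hu1 hu2
    rw [le_div_iff₀ (by positivity)]
    have expand : (Real.sqrt 3 * u - 1) ^ 2 * (Real.sqrt 3 * u + 2)
        = 2 - (u - u ^ 3) * (3 * Real.sqrt 3) := by
      linear_combination (Real.sqrt 3 * u ^ 3) * hs2
    have hnn := mul_nonneg (sq_nonneg (Real.sqrt 3 * u - 1))
      (by nlinarith : (0:ℝ) ≤ Real.sqrt 3 * u + 2)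
    linarith
  rcases abs_le.mp ht with ⟨h1, h2⟩
  have k1 := key t h1 h2
  have k2 := key (-t) (by linarith) (by linarith)
  have : (-t) - (-t) ^ 3 = -(t - t ^ 3) := by ring
  rw [this] at k2
  rw [abs_le]
  exact ⟨by linarith, k1⟩

theorem stmt_9 (x₁ x₂ b₁ b₂ : ℝ) (hx : max |x₁| |x₂| = 1)
    (hb : |b₁| + |b₂| = 1) (h : x₁ ^ 3 * b₁ + x₂ ^ 3 * b₂ = 1) :
    |(x₁ ^ 2 * x₂ - x₂ ^ 3) * b₁| ≤ 2 / (3 * Real.sqrt 3) := by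
  have hs : (0:ℝ) < Real.sqrt 3 := Real.sqrt_pos.mpr (by norm_num)
  have hx1 : |x₁| ≤ 1 := le_of_max_le_left hx.le
  have hx2 : |x₂| ≤ 1 := le_of_max_le_right hx.le
  have e1 : |x₁ ^ 3 * b₁| ≤ |b₁| := by
    rw [abs_mul, abs_pow]
    calc |x₁| ^ 3 * |b₁| ≤ 1 ^ 3 * |b₁| := by gcongr
      _ = |b₁| := by ring
  have e2 : |x₂ ^ 3 * b₂| ≤ |b₂| := by
    rw [abs_mul, abs_pow]
    calc |x₂| ^ 3 * |b₂| ≤ 1 ^ 3 * |b₂| := by gcongr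
      _ = |b₂| := by ring
  have q1 : x₁ ^ 3 * b₁ = |b₁| := by
    have := abs_le.mp e1
    have := abs_le.mp e2
    linarith
  have q2 : x₂ ^ 3 * b₂ = |b₂| := by
    have := abs_le.mp e1
    have := abs_le.mp e2
    linarith
  by_cases hb1 : b₁ = 0
  · rw [hb1, mul_zero, abs_zero]; positivity
  · have hx1' : x₁ ^ 2 = 1 := by
      have hb1' : 0 < |b₁| := abs_pos.mpr hb1
      have heq : |x₁| ^ 3 * |b₁| = 1 * |b₁| := by
        rw [← abs_pow, ← abs_mul, q1, abs_abs, one_mul]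
      have h3 : |x₁| ^ 3 = 1 := by
        have := mul_right_cancel₀ hb1'.ne' heq; linarith
      have habs : |x₁| = 1 := by
        rcases lt_or_eq_of_le hx1 with hlt | heq'
        · exfalso
          have := pow_lt_one₀ (abs_nonneg x₁) hlt (by norm_num : (3:ℕ) ≠ 0)
          rw [h3] at this; exact lt_irrefl 1 this
        · exact heq'
      calc x₁ ^ 2 = |x₁| ^ 2 := (sq_abs x₁).symm
        _ = 1 := by rw [habs]; norm_num
    by_cases hb2 : b₂ = 0
    · have hb1' : |b₁| = 1 := by rw [hb2, abs_zero] at hb; linarith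
      have : |(x₁ ^ 2 * x₂ - x₂ ^ 3) * b₁| = |x₂ - x₂ ^ 3| := by
        rw [abs_mul, hb1', mul_one, hx1', one_mul]
      rw [this]
      exact aux_cubic x₂ hx2
    · have hx2' : x₂ ^ 2 = 1 := by
        have hb2' : 0 < |b₂| := abs_pos.mpr hb2
        have heq : |x₂| ^ 3 * |b₂| = 1 * |b₂| := by
          rw [← abs_pow, ← abs_mul, q2, abs_abs, one_mul]
        have h3 : |x₂| ^ 3 = 1 := by
          have := mul_right_cancel₀ hb2'.ne' heq; linarith
        have habs : |x₂| = 1 := by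
          rcases lt_or_eq_of_le hx2 with hlt | heq'
          · exfalso
            have := pow_lt_one₀ (abs_nonneg x₂) hlt (by norm_num : (3:ℕ) ≠ 0)
            rw [h3] at this; exact lt_irrefl 1 this
          · exact heq'
        calc x₂ ^ 2 = |x₂| ^ 2 := (sq_abs x₂).symm
          _ = 1 := by rw [habs]; norm_num
      have hz : x₁ ^ 2 * x₂ - x₂ ^ 3 = 0 := by
        linear_combination x₂ * hx1' - x₂ * hx2'
      rw [hz, zero_mul, abs_zero]; positivity
end

section
/- Let X, Y be Banach spaces, Q a continuous k-homogeneous polynomial from X to Y with ‖Q‖ = 1, and T ∈ L(Y) a bounded linear operator. If v(T) denotes the classical numerical radius of T (v(T) = sup{|y*(T y)| : y ∈ S_Y, y* ∈ S_{Y*}, y*(y) = 1}) and v_Q denotes the numerical radius of a k-homogeneous polynomial with respect to Q, then v_Q(T ∘ Q) ≤ v(T). -/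
noncomputable section

/-- `P : X → Y` is a continuous `k`-homogeneous polynomial: it is given by a continuous
`k`-linear map evaluated on the diagonal. -/
def IsHomPoly (𝕜 : Type*) [RCLike 𝕜] {X Y : Type*} [NormedAddCommGroup X] [NormedSpace 𝕜 X]
    [NormedAddCommGroup Y] [NormedSpace 𝕜 Y] (k : ℕ) (P : X → Y) : Prop :=
  ∃ A : ContinuousMultilinearMap 𝕜 (fun _ : Fin k => X) Y, ∀ x, P x = A (fun _ => x)

/-- The norm of a polynomial: the supremum of `‖P x‖` over the closed unit ball. -/
def polyNorm {X Y : Type*} [NormedAddCommGroup X] [NormedAddCommGroup Y] (P : X → Y) : ℝ :=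
  sSup { r : ℝ | ∃ x : X, ‖x‖ ≤ 1 ∧ r = ‖P x‖ }

/-- `v_{Q,δ}(P)`. -/
def vQdelta (𝕜 : Type*) [RCLike 𝕜] {X Y : Type*} [NormedAddCommGroup X] [NormedSpace 𝕜 X]
    [NormedAddCommGroup Y] [NormedSpace 𝕜 Y] (Q P : X → Y) (δ : ℝ) : ℝ :=
  sSup { r : ℝ | ∃ (x : X) (f : Y →L[𝕜] 𝕜), ‖x‖ = 1 ∧ ‖f‖ = 1 ∧
    1 - δ < RCLike.re (f (Q x)) ∧ r = ‖f (P x)‖ }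

/-- The numerical radius of `P` with respect to `Q`, as `inf_{δ>0} v_{Q,δ}(P)`. -/
def numRad (𝕜 : Type*) [RCLike 𝕜] {X Y : Type*} [NormedAddCommGroup X] [NormedSpace 𝕜 X]
    [NormedAddCommGroup Y] [NormedSpace 𝕜 Y] (Q P : X → Y) : ℝ :=
  sInf { r : ℝ | ∃ δ : ℝ, 0 < δ ∧ r = vQdelta 𝕜 Q P δ }

/-- The approximated spatial numerical range `V_Q(P)`. -/
def VQ (𝕜 : Type*) [RCLike 𝕜] {X Y : Type*} [NormedAddCommGroup X] [NormedSpace 𝕜 X]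
    [NormedAddCommGroup Y] [NormedSpace 𝕜 Y] (Q P : X → Y) : Set 𝕜 :=
  ⋂ δ ∈ Set.Ioi (0 : ℝ), closure { z : 𝕜 | ∃ (x : X) (f : Y →L[𝕜] 𝕜), ‖x‖ = 1 ∧ ‖f‖ = 1 ∧
    1 - δ < RCLike.re (f (Q x)) ∧ z = f (P x) }

/-- The polynomial numerical index `n_Q^{(k)}(X,Y)`. -/
def polyIndex (𝕜 : Type*) [RCLike 𝕜] {X Y : Type*} [NormedAddCommGroup X] [NormedSpace 𝕜 X]
    [NormedAddCommGroup Y] [NormedSpace 𝕜 Y] (k : ℕ) (Q : X → Y) : ℝ :=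
  sInf { r : ℝ | ∃ P : X → Y, IsHomPoly 𝕜 k P ∧ polyNorm P = 1 ∧ r = numRad 𝕜 Q P }

/-- The classical numerical radius of a bounded linear operator. -/
def numRadOp (𝕜 : Type*) [RCLike 𝕜] {Y : Type*} [NormedAddCommGroup Y] [NormedSpace 𝕜 Y]
    (T : Y →L[𝕜] Y) : ℝ :=
  sSup { r : ℝ | ∃ (y : Y) (f : Y →L[𝕜] 𝕜), ‖y‖ = 1 ∧ ‖f‖ = 1 ∧ f y = 1 ∧ r = ‖f (T y)‖ }

end


open RCLike

section AuxBPB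

section Aux
variable {𝕜 : Type*} [RCLike 𝕜] {E : Type*} [NormedAddCommGroup E] [NormedSpace 𝕜 E]

lemma aux_norm_le_of_forall_re_le (h : E →L[𝕜] 𝕜) {C : ℝ} (hC : 0 ≤ C)
    (H : ∀ u : E, |RCLike.re (h u)| ≤ C * ‖u‖) : ‖h‖ ≤ C := by
  refine h.opNorm_le_bound hC fun u => ?_
  obtain ⟨c, hc, hcu⟩ := RCLike.exists_norm_eq_mul_self (h u)
  have h1 : (‖h u‖ : 𝕜) = h (c • u) := by rw [map_smul, smul_eq_mul, ← hcu]
  have h2 : ‖h u‖ = RCLike.re (h (c • u)) := by rw [← h1, RCLike.ofReal_re]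
  calc ‖h u‖ = RCLike.re (h (c • u)) := h2
    _ ≤ |RCLike.re (h (c • u))| := le_abs_self _
    _ ≤ C * ‖c • u‖ := H _
    _ = C * ‖u‖ := by rw [norm_smul, hc, one_mul]

lemma aux_eq_one_of_re {k : 𝕜} (h1 : RCLike.re k = 1) (h2 : ‖k‖ ≤ 1) : k = 1 := by
  have hn : ‖k‖ = 1 := le_antisymm h2 (by calc (1:ℝ) = RCLike.re k := h1.symm
    _ ≤ ‖k‖ := RCLike.re_le_norm k)
  have him : RCLike.im k = 0 := by
    have h3 := RCLike.norm_sq_eq_def (z := k)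
    rw [hn, h1] at h3
    nlinarith [sq_nonneg (RCLike.im k)]
  apply RCLike.ext <;> simp [h1, him]
end Aux

section Max
variable {𝕜 : Type*} [RCLike 𝕜] {E : Type*} [NormedAddCommGroup E] [NormedSpace 𝕜 E]
  [CompleteSpace E]

lemma aux_exists_max (f : E →L[𝕜] 𝕜) (hf : ‖f‖ ≤ 1) {ε : ℝ} (hε : 0 < ε)
    {y : E} (hy : ‖y‖ ≤ 1) :
    ∃ z : E, ‖z‖ ≤ 1 ∧ ε * ‖z - y‖ ≤ re (f z) - re (f y) ∧
      (∀ w : E, ‖w‖ ≤ 1 → ε * ‖w - z‖ ≤ re (f w) - re (f z) → w = z) := by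
  have hre : ∀ w : E, ‖w‖ ≤ 1 → re (f w) ≤ 1 := by
    intro w hw
    calc re (f w) ≤ ‖f w‖ := RCLike.re_le_norm _
      _ ≤ ‖f‖ * ‖w‖ := f.le_opNorm w
      _ ≤ 1 := by nlinarith [norm_nonneg (f : E →L[𝕜] 𝕜)]
  have step : ∀ b : E, ‖b‖ ≤ 1 → ∀ τ : ℝ, 0 < τ → ∃ a : E, ‖a‖ ≤ 1 ∧
      ε * ‖a - b‖ ≤ re (f a) - re (f b) ∧
      ∀ w : E, ‖w‖ ≤ 1 → ε * ‖w - b‖ ≤ re (f w) - re (f b) → re (f w) ≤ re (f a) + τ := by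
    intro b hb τ hτ
    set S : Set ℝ :=
      (fun w => re (f w)) '' {w : E | ‖w‖ ≤ 1 ∧ ε * ‖w - b‖ ≤ re (f w) - re (f b)} with hS
    have hbS : re (f b) ∈ S := ⟨b, ⟨hb, by simp⟩, rfl⟩
    have hSbdd : BddAbove S := ⟨1, by rintro r ⟨w, ⟨hw, -⟩, rfl⟩; exact hre w hw⟩
    obtain ⟨r, hrS, hr⟩ := exists_lt_of_lt_csSup ⟨_, hbS⟩ (show sSup S - τ < sSup S by linarith)
    obtain ⟨a, ⟨ha1, ha2⟩, rfl⟩ := hrS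
    refine ⟨a, ha1, ha2, fun w hw hwb => ?_⟩
    have : re (f w) ≤ sSup S := le_csSup hSbdd ⟨w, ⟨hw, hwb⟩, rfl⟩
    linarith
  choose next h1 h2 h3 using step
  let seq : ℕ → {p : E // ‖p‖ ≤ 1} := fun n =>
    Nat.rec ⟨y, hy⟩ (fun n p => ⟨next p.1 p.2 ((1/2)^n) (by positivity),
      h1 p.1 p.2 ((1/2)^n) (by positivity)⟩) n
  set a : ℕ → ℝ := fun n => re (f (seq n).1) with ha
  have hseq0 : (seq 0).1 = y := rfl
  have hstep1 : ∀ n, ε * ‖(seq (n+1)).1 - (seq n).1‖ ≤ a (n+1) - a n := fun n =>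
    h2 (seq n).1 (seq n).2 ((1/2)^n) (by positivity)
  have hstep3 : ∀ n, ∀ w : E, ‖w‖ ≤ 1 → ε * ‖w - (seq n).1‖ ≤ re (f w) - a n →
      re (f w) ≤ a (n+1) + (1/2)^n := fun n =>
    h3 (seq n).1 (seq n).2 ((1/2)^n) (by positivity)
  have chain : ∀ n m, n ≤ m → ε * ‖(seq m).1 - (seq n).1‖ ≤ a m - a n := by
    intro n m hnm
    induction m, hnm using Nat.le_induction with
    | base => simp
    | succ m hnm ih =>
      have tri : ‖(seq (m+1)).1 - (seq n).1‖ ≤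
          ‖(seq (m+1)).1 - (seq m).1‖ + ‖(seq m).1 - (seq n).1‖ :=
        norm_sub_le_norm_sub_add_norm_sub _ _ _
      have := hstep1 m
      nlinarith [norm_nonneg ((seq (m+1)).1 - (seq n).1)]
  have amono : Monotone a := monotone_nat_of_le_succ fun n => by
    have := hstep1 n
    nlinarith [norm_nonneg ((seq (n+1)).1 - (seq n).1)]
  have habdd : BddAbove (Set.range a) := ⟨1, by rintro r ⟨n, rfl⟩; exact hre _ (seq n).2⟩
  set L : ℝ := ⨆ n, a n with hL
  have haL : Filter.Tendsto a Filter.atTop (nhds L) := tendsto_atTop_ciSup amono habdd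
  have haleL : ∀ n, a n ≤ L := fun n => le_ciSup habdd n
  have hcs : CauchySeq (fun n => (seq n).1) := by
    refine Metric.cauchySeq_iff'.2 fun η hη => ?_
    have h05 : L - ε * η < L := by nlinarith
    obtain ⟨N, hN⟩ := exists_lt_of_lt_ciSup h05
    refine ⟨N, fun n hn => ?_⟩
    have hc := chain N n hn
    have : ε * dist (seq n).1 (seq N).1 < ε * η := by
      rw [dist_eq_norm]
      have := haleL n
      linarith
    exact lt_of_mul_lt_mul_left this hε.le
  obtain ⟨z, hz⟩ := cauchySeq_tendsto_of_complete hcs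
  have hz1 : ‖z‖ ≤ 1 :=
    le_of_tendsto (hz.norm) (Filter.Eventually.of_forall fun n => (seq n).2)
  have hfz : Filter.Tendsto a Filter.atTop (nhds (re (f z))) :=
    ((RCLike.continuous_re.comp f.continuous).tendsto z).comp hz
  have hLz : re (f z) = L := tendsto_nhds_unique hfz haL
  have hchainz : ∀ n, ε * ‖z - (seq n).1‖ ≤ re (f z) - a n := by
    intro n
    have t1 : Filter.Tendsto (fun m => ε * ‖(seq m).1 - (seq n).1‖) Filter.atTop
        (nhds (ε * ‖z - (seq n).1‖)) := (((hz.sub_const _).norm).const_mul ε)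
    have t2 : Filter.Tendsto (fun m => a m - a n) Filter.atTop
        (nhds (re (f z) - a n)) := hfz.sub_const _
    exact le_of_tendsto_of_tendsto t1 t2
      (Filter.eventually_atTop.2 ⟨n, fun m hm => chain n m hm⟩)
  refine ⟨z, hz1, hchainz 0, fun w hw hwz => ?_⟩
  have hup : ∀ n, re (f w) ≤ a (n+1) + (1/2)^n := by
    intro n
    refine hstep3 n w hw ?_
    have tri : ‖w - (seq n).1‖ ≤ ‖w - z‖ + ‖z - (seq n).1‖ :=
      norm_sub_le_norm_sub_add_norm_sub _ _ _
    have := hchainz n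
    nlinarith
  have hwle : re (f w) ≤ re (f z) := by
    by_contra hcon
    push_neg at hcon
    obtain ⟨n, hn⟩ := exists_pow_lt_of_lt_one (show (0:ℝ) < re (f w) - re (f z) by linarith)
      (show (1:ℝ)/2 < 1 by norm_num)
    have := hup n
    have := haleL (n+1)
    rw [hLz] at *
    linarith
  have : ‖w - z‖ ≤ 0 := by
    have := hwz
    nlinarith
  exact sub_eq_zero.1 (norm_le_zero_iff.1 this)
end Max

section BPB
variable {𝕜 : Type*} [RCLike 𝕜] {E : Type*} [NormedAddCommGroup E] [NormedSpace 𝕜 E]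
  [NormedSpace ℝ E] [IsScalarTower ℝ 𝕜 E]

lemma aux_re_smul (f : E →L[𝕜] 𝕜) (t : ℝ) (v : E) : re (f (t • v)) = t * re (f v) := by
  rw [f.map_smul_of_tower, RCLike.smul_re]

/-- The support functional of the Bishop–Phelps cone at the maximal point. -/
lemma aux_cone_phi (f : E →L[𝕜] 𝕜) {ε : ℝ} (hε : 0 < ε) {z : E} (hz1' : ‖z‖ = 1)
    (hmax : ∀ w : E, ‖w‖ ≤ 1 → ε * ‖w - z‖ ≤ re (f w) - re (f z) → w = z) :
    ∃ φ : E →ₗ[ℝ] ℝ, φ z = 1 ∧ (∀ v, |φ v| ≤ ‖v‖) ∧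
      (∀ w : E, ε * ‖w‖ ≤ re (f w) → 0 ≤ φ w) := by
  set K : Set E := {w : E | ε * ‖w‖ ≤ re (f w)} with hK
  have hK0 : (0 : E) ∈ K := by simp [hK]
  have hKadd : ∀ w₁ ∈ K, ∀ w₂ ∈ K, w₁ + w₂ ∈ K := by
    intro w₁ h₁ w₂ h₂
    simp only [hK, Set.mem_setOf_eq] at h₁ h₂ ⊢
    calc ε * ‖w₁ + w₂‖ ≤ ε * (‖w₁‖ + ‖w₂‖) := by
          have := norm_add_le w₁ w₂; nlinarith
      _ ≤ re (f w₁) + re (f w₂) := by linarith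
      _ = re (f (w₁ + w₂)) := by rw [map_add, map_add]
  have hKsmul : ∀ c : ℝ, 0 ≤ c → ∀ w ∈ K, c • w ∈ K := by
    intro c hc w hwK
    simp only [hK, Set.mem_setOf_eq] at hwK ⊢
    rw [norm_smul, Real.norm_eq_abs, abs_of_nonneg hc, aux_re_smul]
    calc ε * (c * ‖w‖) = c * (ε * ‖w‖) := by ring
      _ ≤ c * re (f w) := mul_le_mul_of_nonneg_left hwK hc
  set N : E → ℝ := fun v => sInf ((fun w => ‖v + w‖) '' K) with hN
  have hNne : ∀ v : E, ((fun w => ‖v + w‖) '' K).Nonempty := fun v => ⟨‖v + 0‖, 0, hK0, rfl⟩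
  have hNbdd : ∀ v : E, BddBelow ((fun w => ‖v + w‖) '' K) :=
    fun v => ⟨0, by rintro r ⟨w, -, rfl⟩; positivity⟩
  have hN0 : ∀ v, 0 ≤ N v := fun v => le_csInf (hNne v) (by rintro r ⟨w, -, rfl⟩; positivity)
  have hNnorm : ∀ v, N v ≤ ‖v‖ := fun v => by
    have := csInf_le (hNbdd v) ⟨0, hK0, rfl⟩
    simpa using this
  have hNsmul_le : ∀ c : ℝ, 0 < c → ∀ v, N (c • v) ≤ c * N v := by
    intro c hc v
    have key : ∀ b ∈ ((fun w => ‖v + w‖) '' K), N (c • v) ≤ c * b := by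
      rintro b ⟨w, hwK, rfl⟩
      have hmem : ‖c • v + c • w‖ ∈ (fun w => ‖c • v + w‖) '' K :=
        ⟨c • w, hKsmul c hc.le w hwK, rfl⟩
      have heq : ‖c • v + c • w‖ = c * ‖v + w‖ := by
        rw [← smul_add, norm_smul, Real.norm_eq_abs, abs_of_pos hc]
      have := csInf_le (hNbdd (c • v)) hmem
      rw [heq] at this
      exact this
    have h2 : N (c • v) / c ≤ N v :=
      le_csInf (hNne v) fun b hb => (div_le_iff₀' hc).2 (key b hb)
    calc N (c • v) = N (c • v) / c * c := by field_simp
      _ ≤ N v * c := by gcongr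
      _ = c * N v := mul_comm _ _
  have hNsmul : ∀ c : ℝ, 0 < c → ∀ v, N (c • v) = c * N v := by
    intro c hc v
    refine le_antisymm (hNsmul_le c hc v) ?_
    have h := hNsmul_le c⁻¹ (by positivity) (c • v)
    rw [inv_smul_smul₀ (ne_of_gt hc)] at h
    calc c * N v ≤ c * (c⁻¹ * N (c • v)) := by
          have := hN0 (c • v); nlinarith
      _ = N (c • v) := by field_simp
  have hNadd : ∀ v₁ v₂, N (v₁ + v₂) ≤ N v₁ + N v₂ := by
    intro v₁ v₂
    have key : ∀ b₁ ∈ ((fun w => ‖v₁ + w‖) '' K), ∀ b₂ ∈ ((fun w => ‖v₂ + w‖) '' K),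
        N (v₁ + v₂) ≤ b₁ + b₂ := by
      rintro b₁ ⟨w₁, h₁, rfl⟩ b₂ ⟨w₂, h₂, rfl⟩
      have hmem : ‖v₁ + v₂ + (w₁ + w₂)‖ ∈ (fun w => ‖v₁ + v₂ + w‖) '' K :=
        ⟨w₁ + w₂, hKadd w₁ h₁ w₂ h₂, rfl⟩
      refine le_trans (csInf_le (hNbdd _) hmem) ?_
      calc ‖v₁ + v₂ + (w₁ + w₂)‖ = ‖v₁ + w₁ + (v₂ + w₂)‖ := by
            rw [show v₁ + v₂ + (w₁ + w₂) = v₁ + w₁ + (v₂ + w₂) by abel]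
        _ ≤ ‖v₁ + w₁‖ + ‖v₂ + w₂‖ := norm_add_le _ _
    have h1 : ∀ b₁ ∈ ((fun w => ‖v₁ + w‖) '' K), N (v₁ + v₂) - b₁ ≤ N v₂ := fun b₁ hb₁ =>
      le_csInf (hNne v₂) fun b₂ hb₂ => by linarith [key b₁ hb₁ b₂ hb₂]
    have h2 : N (v₁ + v₂) - N v₂ ≤ N v₁ :=
      le_csInf (hNne v₁) fun b₁ hb₁ => by linarith [h1 b₁ hb₁]
    linarith
  have hNz : 1 ≤ N z := by
    refine le_csInf (hNne z) ?_
    rintro r ⟨w, hwK, rfl⟩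
    simp only [hK, Set.mem_setOf_eq] at hwK
    by_contra hcon
    push_neg at hcon
    have hzw : z + w = z := by
      refine hmax (z + w) hcon.le ?_
      rw [add_sub_cancel_left, map_add, map_add]
      linarith
    have hw0 : w = 0 := by
      have := congrArg (fun p => p - z) hzw
      simpa using this
    rw [hw0, add_zero, hz1'] at hcon
    exact absurd hcon (lt_irrefl 1)
  have hzne : z ≠ 0 := by
    intro h; rw [h, norm_zero] at hz1'; exact one_ne_zero hz1'.symm
  have Hspan : ∀ c : ℝ, c • z = 0 → c • (1 : ℝ) = 0 := by
    intro c hc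
    rcases eq_or_ne c 0 with h | h
    · simp [h]
    · exfalso
      apply hzne
      have h2 := congrArg (fun v => c⁻¹ • v) hc
      simpa [smul_smul, inv_mul_cancel₀ h] using h2
  have hf₀le : ∀ x : (LinearPMap.mkSpanSingleton' (σ := RingHom.id ℝ) z (1:ℝ) Hspan).domain,
      (LinearPMap.mkSpanSingleton' (σ := RingHom.id ℝ) z (1:ℝ) Hspan) x ≤ N x := by
    intro x
    have hx : (x : E) ∈ Submodule.span ℝ {z} := x.2
    obtain ⟨c, hc⟩ := Submodule.mem_span_singleton.1 hx
    have hmem : c • z ∈ (LinearPMap.mkSpanSingleton' (σ := RingHom.id ℝ) z (1:ℝ) Hspan).domain := hc ▸ x.2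
    have hxeq : x = ⟨c • z, hmem⟩ := Subtype.ext hc.symm
    have happ : (LinearPMap.mkSpanSingleton' (σ := RingHom.id ℝ) z (1:ℝ) Hspan) x = c := by
      rw [hxeq, LinearPMap.mkSpanSingleton'_apply, RingHom.id_apply, smul_eq_mul, mul_one]
    have hNcz : c ≤ N (c • z) := by
      rcases lt_trichotomy c 0 with h | h | h
      · linarith [hN0 (c • z)]
      · rw [h]; simpa [h] using hN0 ((0:ℝ) • z)
      · rw [hNsmul c h]; nlinarith
    calc (LinearPMap.mkSpanSingleton' (σ := RingHom.id ℝ) z (1:ℝ) Hspan) x = c := happ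
      _ ≤ N (c • z) := hNcz
      _ = N x := by rw [hxeq]
  obtain ⟨φ, hφeq, hφle⟩ := exists_extension_of_le_sublinear
      (LinearPMap.mkSpanSingleton' (σ := RingHom.id ℝ) z (1:ℝ) Hspan) N
      (fun c hc v => hNsmul c hc v) hNadd hf₀le
  have hφz : φ z = 1 := by
    have hmem : z ∈ (LinearPMap.mkSpanSingleton' (σ := RingHom.id ℝ) z (1:ℝ) Hspan).domain :=
      Submodule.mem_span_singleton_self z
    have h := hφeq ⟨z, hmem⟩
    rw [h, LinearPMap.mkSpanSingleton'_apply_self]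
  refine ⟨φ, hφz, fun v => ?_, fun w hw => ?_⟩
  · rw [abs_le]
    refine ⟨?_, (hφle v).trans (hNnorm v)⟩
    have h1 : φ (-v) ≤ N (-v) := hφle _
    have h2 : N (-v) ≤ ‖-v‖ := hNnorm _
    rw [map_neg, norm_neg] at *
    linarith
  · have h1 : φ (-w) ≤ N (-w) := hφle _
    have h2 : N (-w) ≤ ‖-w + w‖ := csInf_le (hNbdd _) ⟨w, hw, rfl⟩
    rw [neg_add_cancel, norm_zero] at h2
    rw [map_neg] at h1
    linarith

/-- Turn the support functional into a norm-one `𝕜`-linear functional. -/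
lemma aux_g_of_phi (φ : E →ₗ[ℝ] ℝ) {z : E} (hz1' : ‖z‖ = 1) (hφz : φ z = 1)
    (hφb : ∀ v, |φ v| ≤ ‖v‖) :
    ∃ g : E →L[𝕜] 𝕜, ‖g‖ = 1 ∧ g z = 1 ∧ ∀ v, re (g v) = φ v := by
  set φc : E →L[ℝ] ℝ := LinearMap.mkContinuous φ 1 (fun v => by
    rw [Real.norm_eq_abs, one_mul]; exact hφb v) with hφc
  have hgre : ∀ v, re ((φc.extendTo𝕜' : E →L[𝕜] 𝕜) v) = φ v := by
    intro v
    have h := ContinuousLinearMap.extendTo𝕜'_apply (𝕜 := 𝕜) φc v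
    show re (StrongDual.extendRCLike φc v) = φ v
    rw [h, map_sub]
    simp [hφc]
  have hgn1 : ‖(φc.extendTo𝕜' : E →L[𝕜] 𝕜)‖ ≤ 1 := by
    show ‖StrongDual.extendRCLike φc‖ ≤ 1
    rw [ContinuousLinearMap.norm_extendTo𝕜']
    exact LinearMap.mkContinuous_norm_le φ zero_le_one _
  have hgz : (φc.extendTo𝕜' : E →L[𝕜] 𝕜) z = 1 := by
    refine aux_eq_one_of_re ?_ ?_
    · rw [hgre z, hφz]
    · calc ‖(φc.extendTo𝕜' : E →L[𝕜] 𝕜) z‖ ≤ ‖(φc.extendTo𝕜' : E →L[𝕜] 𝕜)‖ * ‖z‖ :=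
          ContinuousLinearMap.le_opNorm _ z
        _ ≤ 1 := by rw [hz1', mul_one]; exact hgn1
  refine ⟨φc.extendTo𝕜', le_antisymm hgn1 ?_, hgz, hgre⟩
  calc (1 : ℝ) = ‖(φc.extendTo𝕜' : E →L[𝕜] 𝕜) z‖ := by rw [hgz, norm_one]
    _ ≤ ‖(φc.extendTo𝕜' : E →L[𝕜] 𝕜)‖ * ‖z‖ := ContinuousLinearMap.le_opNorm _ z
    _ = ‖(φc.extendTo𝕜' : E →L[𝕜] 𝕜)‖ := by rw [hz1', mul_one]


set_option maxHeartbeats 1000000 in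
/-- Phelps-type estimate: a cone-positive norm-one functional is close to `f`. -/
lemma aux_phelps (f g : E →L[𝕜] 𝕜) {ε δ : ℝ} (hε : 0 < ε) (hε4 : ε ≤ 1/4)
    (hδ : 0 < δ) (hδε : δ ≤ ε * ε) (hf : ‖f‖ = 1) (hg1 : ‖g‖ ≤ 1)
    {z : E} (hz1' : ‖z‖ = 1) (hgz : re (g z) = 1)
    (hcone : ∀ w : E, ε * ‖w‖ ≤ re (f w) → 0 ≤ re (g w))
    (hfz : 1 - δ < re (f z)) (hfz1 : re (f z) ≤ 1) :
    ‖g - f‖ ≤ 6 * ε := by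
  have hgb : ∀ v : E, |re (g v)| ≤ ‖v‖ := by
    intro v
    calc |re (g v)| ≤ ‖g v‖ := abs_re_le_norm _
      _ ≤ ‖g‖ * ‖v‖ := g.le_opNorm v
      _ ≤ ‖v‖ := by nlinarith [norm_nonneg v]
  have H1 : ∀ u : E, ‖u‖ ≤ 1 → |re ((f - g) u)| ≤ 6 * ε := by
    intro u hu
    set d : ℝ := re (f z) with hd
    have hdpos : (0 : ℝ) < d := by nlinarith
    have hd3 : (15 : ℝ)/16 ≤ d := by nlinarith
    set μ : ℝ := re (f u) / d with hμ
    set u₀ : E := u - μ • z with hu₀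
    have hfu₀ : re (f u₀) = 0 := by
      rw [hu₀, map_sub, map_sub, aux_re_smul, hμ]
      field_simp
      linear_combination (re (f u)) * hd
    have hμd : |μ| * d ≤ 1 := by
      rw [hμ, abs_div, abs_of_pos hdpos, div_mul_cancel₀ _ (ne_of_gt hdpos)]
      calc |re (f u)| ≤ ‖f u‖ := abs_re_le_norm _
        _ ≤ ‖f‖ * ‖u‖ := f.le_opNorm u
        _ ≤ 1 := by rw [hf, one_mul]; exact hu
    have hμ0 : 0 ≤ |μ| := abs_nonneg _
    have hμB : |μ| ≤ 16/15 := by nlinarith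
    have hn₀ : ‖u₀‖ ≤ 1 + |μ| := by
      calc ‖u₀‖ ≤ ‖u‖ + ‖μ • z‖ := norm_sub_le _ _
        _ ≤ 1 + |μ| := by
            rw [norm_smul, Real.norm_eq_abs, hz1', mul_one]; linarith
    have hdε : (0 : ℝ) < d - ε := by nlinarith
    have hkey : (d - ε) * |re (g u₀)| ≤ ε * ‖u₀‖ := by
      rcases eq_or_ne u₀ 0 with h0 | h0
      · simp [h0]
      · have hnpos : 0 < ‖u₀‖ := norm_pos_iff.2 h0
        set r : ℝ := (d - ε) / (ε * ‖u₀‖) with hr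
        have hrpos : 0 < r := div_pos hdε (by positivity)
        have hrdef : r * (ε * ‖u₀‖) = d - ε := by
          rw [hr]; field_simp
        have hKpm : ∀ s : ℝ, |s| ≤ r → ε * ‖z + s • u₀‖ ≤ re (f (z + s • u₀)) := by
          intro s hs
          have hre' : re (f (z + s • u₀)) = d := by
            rw [map_add, map_add, aux_re_smul, hfu₀, mul_zero, add_zero]
          rw [hre']
          calc ε * ‖z + s • u₀‖ ≤ ε * (‖z‖ + ‖s • u₀‖) := by
                have := norm_add_le z (s • u₀); nlinarith
            _ = ε * (1 + |s| * ‖u₀‖) := by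
                rw [hz1', norm_smul, Real.norm_eq_abs]
            _ ≤ ε * (1 + r * ‖u₀‖) := by
                have h5 : |s| * ‖u₀‖ ≤ r * ‖u₀‖ := by nlinarith
                nlinarith
            _ = ε + r * (ε * ‖u₀‖) := by ring
            _ = d := by rw [hrdef]; ring
        have hgs : ∀ s : ℝ, re (g (z + s • u₀)) = 1 + s * re (g u₀) := fun s => by
          rw [map_add, map_add, aux_re_smul, hgz]
        have hplus := hcone _ (hKpm r (by rw [abs_of_pos hrpos]))
        have hminus := hcone _ (hKpm (-r) (by rw [abs_neg, abs_of_pos hrpos]))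
        rw [hgs] at hplus hminus
        have hr1 : r * |re (g u₀)| ≤ 1 := by
          rcases abs_cases (re (g u₀)) with ⟨heq, -⟩ | ⟨heq, -⟩ <;> rw [heq] <;> nlinarith
        calc (d - ε) * |re (g u₀)| = r * |re (g u₀)| * (ε * ‖u₀‖) := by rw [← hrdef]; ring
          _ ≤ 1 * (ε * ‖u₀‖) := by
              have h3 : (0:ℝ) ≤ ε * ‖u₀‖ := by positivity
              nlinarith
          _ = ε * ‖u₀‖ := one_mul _
    have hdecomp : re ((f - g) u) = -(re (g u₀)) + μ * (d - 1) := by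
      have h1 : re ((f - g) u) = re (f u) - re (g u) := by
        rw [ContinuousLinearMap.sub_apply, map_sub]
      have h2 : re (g u) = re (g u₀) + μ := by
        have : u = u₀ + μ • z := by rw [hu₀]; abel
        rw [this, map_add, map_add, aux_re_smul, hgz, mul_one]
      have h3 : re (f u) = μ * d := by
        rw [hμ]; field_simp
      rw [h1, h2, h3]; ring
    have hA0 : 0 ≤ |re (g u₀)| := abs_nonneg _
    have hA1 : (d - ε) * |re (g u₀)| ≤ ε * (1 + |μ|) := hkey.trans (by nlinarith)
    have hAle : |re (g u₀)| ≤ 4 * ε := by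
      nlinarith [mul_nonneg hA0 (show (0:ℝ) ≤ d - ε - 11/16 by nlinarith)]
    have hBterm : |μ| * (1 - d) ≤ 2 * ε := by
      have h1d : 0 ≤ 1 - d := by linarith
      nlinarith [mul_nonneg (show (0:ℝ) ≤ 16/15 - |μ| by linarith) h1d]
    rw [hdecomp]
    calc |-(re (g u₀)) + μ * (d - 1)| ≤ |(-(re (g u₀)))| + |μ * (d - 1)| := abs_add_le _ _
      _ = |re (g u₀)| + |μ| * (1 - d) := by
          rw [abs_neg, abs_mul, abs_of_nonpos (show d - 1 ≤ 0 by linarith)]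
          ring
      _ ≤ 6 * ε := by linarith
  rw [norm_sub_rev]
  refine aux_norm_le_of_forall_re_le (f - g) (by positivity) ?_
  intro u
  rcases eq_or_ne u 0 with rfl | hu0
  · simp
  · have hpos : 0 < ‖u‖ := norm_pos_iff.2 hu0
    have hnu : ‖(‖u‖⁻¹ • u)‖ ≤ 1 := by
      rw [norm_smul, Real.norm_eq_abs, abs_of_pos (by positivity),
        inv_mul_cancel₀ (ne_of_gt hpos)]
    have h1 := H1 _ hnu
    have h2 : re ((f - g) u) = ‖u‖ * re ((f - g) (‖u‖⁻¹ • u)) := by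
      rw [aux_re_smul (f - g) (‖u‖⁻¹) u]
      field_simp
    rw [h2, abs_mul, abs_of_pos hpos]
    calc ‖u‖ * |re ((f - g) (‖u‖⁻¹ • u))| ≤ ‖u‖ * (6 * ε) := by nlinarith
      _ = 6 * ε * ‖u‖ := by ring

/-- Bishop–Phelps–Bollobás. -/
lemma aux_bpb [CompleteSpace E] (f : E →L[𝕜] 𝕜) (hf : ‖f‖ = 1) {ε δ : ℝ} (hε : 0 < ε)
    (hε4 : ε ≤ 1/4) (hδ : 0 < δ) (hδε : δ ≤ ε * ε) {y : E} (hy : ‖y‖ ≤ 1)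
    (hfy : 1 - δ < re (f y)) :
    ∃ (z : E) (g : E →L[𝕜] 𝕜), ‖z‖ = 1 ∧ ‖g‖ = 1 ∧ g z = 1 ∧
      ‖z - y‖ ≤ ε ∧ ‖g - f‖ ≤ 6 * ε := by
  obtain ⟨z, hz1, hzy, hmax⟩ := aux_exists_max f hf.le hε hy
  have hre1 : ∀ w : E, ‖w‖ ≤ 1 → re (f w) ≤ 1 := by
    intro w hw
    calc re (f w) ≤ ‖f w‖ := RCLike.re_le_norm _
      _ ≤ ‖f‖ * ‖w‖ := f.le_opNorm w
      _ ≤ 1 := by rw [hf, one_mul]; exact hw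
  have hfz : 1 - δ < re (f z) := by
    have h0 : 0 ≤ ε * ‖z - y‖ := by positivity
    linarith
  have hfz1 : re (f z) ≤ 1 := hre1 z hz1
  have hdzy : ‖z - y‖ ≤ ε := by
    have h1 : ε * ‖z - y‖ ≤ δ := by linarith
    calc ‖z - y‖ = ε * ‖z - y‖ / ε := by field_simp
      _ ≤ δ / ε := by gcongr
      _ ≤ ε := by rw [div_le_iff₀ hε]; linarith
  have hz1' : ‖z‖ = 1 := by
    rcases lt_or_eq_of_le hz1 with hlt | heq
    · exfalso
      obtain ⟨u', hu'1, hu'2⟩ := f.exists_lt_apply_of_lt_opNorm (r := ε) (by rw [hf]; linarith)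
      obtain ⟨c, hc, hcu⟩ := RCLike.exists_norm_eq_mul_self (f u')
      have hru : ε < re (f (c • u')) := by
        rw [map_smul, smul_eq_mul, ← hcu, RCLike.ofReal_re]; exact hu'2
      have hun : ‖c • u'‖ ≤ 1 := by
        rw [norm_smul, hc, one_mul]; exact hu'1.le
      set t : ℝ := 1 - ‖z‖ with ht
      have htpos : 0 < t := by simp only [ht]; linarith
      have hwn : ‖z + t • (c • u')‖ ≤ 1 := by
        calc ‖z + t • (c • u')‖ ≤ ‖z‖ + ‖t • (c • u')‖ := norm_add_le _ _
          _ ≤ ‖z‖ + t * 1 := by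
              rw [norm_smul, Real.norm_eq_abs, abs_of_pos htpos]; gcongr
          _ = 1 := by rw [ht]; ring
      have hrw : re (f (z + t • (c • u'))) = re (f z) + t * re (f (c • u')) := by
        rw [map_add, map_add, aux_re_smul]
      have hwz : ε * ‖z + t • (c • u') - z‖ ≤ re (f (z + t • (c • u'))) - re (f z) := by
        have h1 : ‖z + t • (c • u') - z‖ = t * ‖c • u'‖ := by
          rw [add_sub_cancel_left, norm_smul, Real.norm_eq_abs, abs_of_pos htpos]
        rw [h1, hrw]
        have h2 : ε * (t * ‖c • u'‖) ≤ ε * t := by nlinarith [mul_pos hε htpos]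
        nlinarith
      have heqz := hmax _ hwn hwz
      have h3 : t * re (f (c • u')) = 0 := by
        have h2 : re (f (z + t • (c • u'))) = re (f z) := by rw [heqz]
        rw [hrw] at h2; linarith
      nlinarith
    · exact heq
  obtain ⟨φ, hφz, hφb, hφK⟩ := aux_cone_phi f hε hz1' hmax
  obtain ⟨g, hgn, hgz, hgre⟩ := aux_g_of_phi (𝕜 := 𝕜) φ hz1' hφz hφb
  have hgz' : re (g z) = 1 := by rw [hgre, hφz]
  have hcone : ∀ w : E, ε * ‖w‖ ≤ re (f w) → 0 ≤ re (g w) := fun w hw => by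
    rw [hgre]; exact hφK w hw
  have hfg := aux_phelps f g hε hε4 hδ hδε hf hgn.le hz1' hgz' hcone hfz hfz1
  exact ⟨z, g, hz1', hgn, hgz, hdzy, hfg⟩

end BPB

end AuxBPB

theorem stmt_13 (𝕜 : Type*) [RCLike 𝕜] (X Y : Type*) [NormedAddCommGroup X] [NormedSpace 𝕜 X]
    [NormedAddCommGroup Y] [NormedSpace 𝕜 Y] [CompleteSpace X] [CompleteSpace Y]
    (k : ℕ) (Q : X → Y) (hQ : IsHomPoly 𝕜 k Q) (hQ1 : polyNorm Q = 1)
    (T : Y →L[𝕜] Y) :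
    numRad 𝕜 Q (fun x => T (Q x)) ≤ numRadOp 𝕜 T := by
  letI : NormedSpace ℝ Y := NormedSpace.restrictScalars ℝ 𝕜 Y
  letI : IsScalarTower ℝ 𝕜 Y := RestrictScalars.isScalarTower ℝ 𝕜 Y
  obtain ⟨A, hA⟩ := hQ
  have hOpBdd : ∀ r ∈ {r : ℝ | ∃ (y : Y) (f : Y →L[𝕜] 𝕜), ‖y‖ = 1 ∧ ‖f‖ = 1 ∧ f y = 1 ∧
      r = ‖f (T y)‖}, r ≤ ‖T‖ := by
    rintro r ⟨y, f, hy, hf, -, rfl⟩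
    calc ‖f (T y)‖ ≤ ‖f‖ * ‖T y‖ := f.le_opNorm _
      _ ≤ 1 * (‖T‖ * ‖y‖) := by
          rw [hf]
          gcongr
          exact T.le_opNorm y
      _ = ‖T‖ := by rw [hy, one_mul, mul_one]
  have hQle : ∀ x : X, ‖x‖ ≤ 1 → ‖Q x‖ ≤ 1 := by
    intro x hx
    have hbdd : BddAbove {r : ℝ | ∃ x : X, ‖x‖ ≤ 1 ∧ r = ‖Q x‖} := by
      refine ⟨‖A‖, ?_⟩
      rintro r ⟨x', hx', rfl⟩
      rw [hA]
      calc ‖A (fun _ => x')‖ ≤ ‖A‖ * ∏ _i : Fin k, ‖x'‖ := A.le_opNorm _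
        _ ≤ ‖A‖ * 1 := by
            have := Finset.prod_le_one (s := (Finset.univ : Finset (Fin k)))
              (f := fun _ => ‖x'‖) (fun i _ => norm_nonneg x') (fun i _ => hx')
            have hA0 := norm_nonneg A
            nlinarith
        _ = ‖A‖ := mul_one _
    have hmem : ‖Q x‖ ∈ {r : ℝ | ∃ x : X, ‖x‖ ≤ 1 ∧ r = ‖Q x‖} := ⟨x, hx, rfl⟩
    have h := le_csSup hbdd hmem
    have h1 : sSup {r : ℝ | ∃ x : X, ‖x‖ ≤ 1 ∧ r = ‖Q x‖} = 1 := hQ1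
    rwa [h1] at h
  have key : ∀ ε : ℝ, 0 < ε → numRad 𝕜 Q (fun x => T (Q x)) ≤ numRadOp 𝕜 T + ε := by
    intro ε hε
    set ε' : ℝ := min (1/4) (ε / (7 * (‖T‖ + 1))) with hε'def
    have hε'0 : 0 < ε' := lt_min (by norm_num) (by positivity)
    have hε'4 : ε' ≤ 1/4 := min_le_left _ _
    have hδ0 : 0 < ε' * ε' := by positivity
    have hOp0 : 0 ≤ numRadOp 𝕜 T :=
      Real.sSup_nonneg (by rintro r ⟨y, f, -, -, -, rfl⟩; positivity)
    have step1 : numRad 𝕜 Q (fun x => T (Q x)) ≤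
        vQdelta 𝕜 Q (fun x => T (Q x)) (ε' * ε') := by
      apply csInf_le
      · refine ⟨0, ?_⟩
        rintro r ⟨δ, hδ, rfl⟩
        exact Real.sSup_nonneg (by rintro r ⟨x, f, -, -, -, rfl⟩; positivity)
      · exact ⟨ε' * ε', hδ0, rfl⟩
    refine step1.trans ?_
    refine Real.sSup_le ?_ (by linarith)
    rintro r ⟨x, f, hx, hf, hre, rfl⟩
    have hQx : ‖Q x‖ ≤ 1 := hQle x hx.le
    obtain ⟨z, g, hz, hg, hgz, hzy, hgf⟩ := aux_bpb f hf hε'0 hε'4 hδ0 le_rfl hQx hre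
    have h1 : ‖g (T z)‖ ≤ numRadOp 𝕜 T :=
      le_csSup ⟨‖T‖, hOpBdd⟩ ⟨z, g, hz, hg, hgz, rfl⟩
    have hdec : f (T (Q x)) = g (T z) + (f - g) (T (Q x)) + g (T (Q x - z)) := by
      rw [map_sub T, map_sub g, ContinuousLinearMap.sub_apply]
      ring
    have h2 : ‖(f - g) (T (Q x))‖ ≤ 6 * ε' * ‖T‖ := by
      calc ‖(f - g) (T (Q x))‖ ≤ ‖f - g‖ * ‖T (Q x)‖ := (f - g).le_opNorm _
        _ ≤ (6 * ε') * (‖T‖ * 1) := by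
            have hfg' : ‖f - g‖ ≤ 6 * ε' := by rwa [norm_sub_rev]
            have hTQ : ‖T (Q x)‖ ≤ ‖T‖ * 1 := by
              have := T.le_opNorm (Q x)
              have h0 := norm_nonneg T
              nlinarith
            have h6 : (0:ℝ) ≤ 6 * ε' := by positivity
            have h0 : (0:ℝ) ≤ ‖T (Q x)‖ := norm_nonneg _
            nlinarith [norm_nonneg (f - g)]
        _ = 6 * ε' * ‖T‖ := by ring
    have h3 : ‖g (T (Q x - z))‖ ≤ ‖T‖ * ε' := by
      have hQz : ‖Q x - z‖ ≤ ε' := by rwa [norm_sub_rev]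
      calc ‖g (T (Q x - z))‖ ≤ ‖g‖ * ‖T (Q x - z)‖ := g.le_opNorm _
        _ ≤ 1 * (‖T‖ * ε') := by
            rw [hg]
            gcongr
            calc ‖T (Q x - z)‖ ≤ ‖T‖ * ‖Q x - z‖ := T.le_opNorm _
              _ ≤ ‖T‖ * ε' := by
                  have h0 := norm_nonneg T
                  nlinarith
        _ = ‖T‖ * ε' := one_mul _
    have h7 : 7 * ε' * ‖T‖ ≤ ε := by
      have hε'le : ε' ≤ ε / (7 * (‖T‖ + 1)) := min_le_right _ _
      have hpos : (0:ℝ) < 7 * (‖T‖ + 1) := by positivity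
      have h8 : ε' * (7 * (‖T‖ + 1)) ≤ ε := by
        rw [← le_div_iff₀ hpos]
        exact hε'le
      nlinarith [norm_nonneg T, hε'0.le]
    calc ‖f (T (Q x))‖ ≤ ‖g (T z)‖ + ‖(f - g) (T (Q x))‖ + ‖g (T (Q x - z))‖ := by
          rw [hdec]; exact norm_add₃_le
      _ ≤ numRadOp 𝕜 T + 6 * ε' * ‖T‖ + ‖T‖ * ε' := by linarith
      _ ≤ numRadOp 𝕜 T + ε := by linarith
  by_contra hcon
  push_neg at hcon
  have h := key ((numRad 𝕜 Q (fun x => T (Q x)) - numRadOp 𝕜 T)/2) (by linarith)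
  linarith
end

section
/- Let X, Y be Banach spaces, Q a continuous k-homogeneous polynomial from X to Y with ‖Q‖ = 1. If there exists a bounded linear operator T on Y with numerical radius v(T) = 0 and T ∘ Q ≠ 0, then n_Q^{(k)}(X, Y) = 0. -/
section stmt14aux
variable {𝕜 : Type*} [RCLike 𝕜] {Y : Type*} [NormedAddCommGroup Y] [NormedSpace 𝕜 Y]

lemma stmt14_exact_pair_zero (T : Y →L[𝕜] Y) (hT : numRadOp 𝕜 T = 0)
    (y : Y) (f : Y →L[𝕜] 𝕜) (hy : ‖y‖ = 1) (hf : ‖f‖ = 1) (hfy : f y = 1) :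
    f (T y) = 0 := by
  have hb : BddAbove { r : ℝ | ∃ (y : Y) (f : Y →L[𝕜] 𝕜), ‖y‖ = 1 ∧ ‖f‖ = 1 ∧ f y = 1 ∧
      r = ‖f (T y)‖ } := by
    refine ⟨‖T‖, ?_⟩
    rintro r ⟨y, f, hy, hf, -, rfl⟩
    calc ‖f (T y)‖ ≤ ‖f‖ * ‖T y‖ := f.le_opNorm _
      _ ≤ 1 * (‖T‖ * ‖y‖) := by rw [hf]; gcongr; exact T.le_opNorm _
      _ = ‖T‖ := by rw [hy]; ring
  have h1 : ‖f (T y)‖ ≤ numRadOp 𝕜 T := le_csSup hb ⟨y, f, hy, hf, hfy, rfl⟩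
  rw [hT] at h1
  simpa using le_antisymm h1 (norm_nonneg _)

lemma stmt14_expansive (T : Y →L[𝕜] Y) (hT : numRadOp 𝕜 T = 0) (c : 𝕜) (y : Y) :
    ‖y‖ ≤ ‖y + c • T y‖ := by
  rcases eq_or_ne y 0 with rfl | hy0
  · simp
  obtain ⟨f, hf1, hfy⟩ := exists_dual_vector 𝕜 y (norm_ne_zero_iff.2 hy0)
  have hyn : (0:ℝ) < ‖y‖ := norm_pos_iff.2 hy0
  set u : Y := ((‖y‖⁻¹ : ℝ) : 𝕜) • y with hu
  have hun : ‖u‖ = 1 := by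
    rw [hu, norm_smul, RCLike.norm_ofReal, abs_of_pos (inv_pos.2 hyn), inv_mul_cancel₀ hyn.ne']
  have hfu : f u = 1 := by
    rw [hu, map_smul, hfy, smul_eq_mul, ← RCLike.ofReal_mul, inv_mul_cancel₀ hyn.ne',
      RCLike.ofReal_one]
  have h0 : f (T u) = 0 := stmt14_exact_pair_zero T hT u f hun hf1 hfu
  have hTy : f (T y) = 0 := by
    have : T u = ((‖y‖⁻¹ : ℝ) : 𝕜) • T y := by rw [hu, map_smul]
    rw [this, map_smul, smul_eq_mul, mul_eq_zero] at h0
    rcases h0 with h | h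
    · exact absurd h (by simpa [RCLike.ofReal_eq_zero] using inv_ne_zero hyn.ne')
    · exact h
  calc ‖y‖ = ‖f y‖ := by rw [hfy]; simp
    _ = ‖f (y + c • T y)‖ := by rw [map_add, map_smul, smul_eq_mul, hTy, mul_zero, add_zero]
    _ ≤ ‖f‖ * ‖y + c • T y‖ := f.le_opNorm _
    _ = ‖y + c • T y‖ := by rw [hf1, one_mul]

lemma stmt14_upper_bound (T : Y →L[𝕜] Y) (hT : numRadOp 𝕜 T = 0) (c : 𝕜) (y : Y) :
    ‖y + c • T y‖ ≤ ‖y‖ + ‖c‖ ^ 2 * (‖T‖ ^ 2 * ‖y‖) := by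
  have key : (y + c • T y) + (-c) • T (y + c • T y) = y - (c * c) • T (T y) := by
    rw [map_add, map_smul]
    rw [neg_smul, smul_add, smul_smul]
    abel
  calc ‖y + c • T y‖ ≤ ‖(y + c • T y) + (-c) • T (y + c • T y)‖ := stmt14_expansive T hT _ _
    _ = ‖y - (c * c) • T (T y)‖ := by rw [key]
    _ ≤ ‖y‖ + ‖(c * c) • T (T y)‖ := norm_sub_le _ _
    _ ≤ ‖y‖ + ‖c‖ ^ 2 * (‖T‖ ^ 2 * ‖y‖) := by
        gcongr
        rw [norm_smul, norm_mul]
        have h1 : ‖T (T y)‖ ≤ ‖T‖ * (‖T‖ * ‖y‖) := by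
          calc ‖T (T y)‖ ≤ ‖T‖ * ‖T y‖ := T.le_opNorm _
            _ ≤ ‖T‖ * (‖T‖ * ‖y‖) := by gcongr; exact T.le_opNorm _
        calc ‖c‖ * ‖c‖ * ‖T (T y)‖ ≤ ‖c‖ * ‖c‖ * (‖T‖ * (‖T‖ * ‖y‖)) := by
              gcongr
          _ = ‖c‖ ^ 2 * (‖T‖ ^ 2 * ‖y‖) := by ring

lemma stmt14_approx_pair_bound (T : Y →L[𝕜] Y) (hT : numRadOp 𝕜 T = 0) (y : Y) (f : Y →L[𝕜] 𝕜)
    (hy : ‖y‖ ≤ 1) (hf : ‖f‖ = 1) {δ h : ℝ} (hh : 0 < h)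
    (hre : 1 - δ < RCLike.re (f y)) : ‖f (T y)‖ ≤ h * ‖T‖ ^ 2 + δ / h := by
  have hrele : RCLike.re (f y) ≤ 1 := by
    calc RCLike.re (f y) ≤ ‖f y‖ := RCLike.re_le_norm _
      _ ≤ ‖f‖ * ‖y‖ := f.le_opNorm _
      _ ≤ 1 * 1 := by rw [hf]; gcongr
      _ = 1 := one_mul 1
  have hδ : 0 < δ := by linarith
  set a := f (T y) with ha
  rcases eq_or_ne a 0 with h0 | h0
  · rw [h0, norm_zero]; positivity
  have han : (0:ℝ) < ‖a‖ := norm_pos_iff.2 h0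
  set c : 𝕜 := ((h / ‖a‖ : ℝ) : 𝕜) * (starRingEnd 𝕜 a) with hc
  have hcn : ‖c‖ = h := by
    rw [hc, norm_mul, RCLike.norm_ofReal, RCLike.norm_conj,
      abs_of_pos (div_pos hh han), div_mul_cancel₀ _ han.ne']
  have hca : RCLike.re (c * a) = h * ‖a‖ := by
    rw [hc, mul_assoc, mul_comm (starRingEnd 𝕜 a) a, RCLike.mul_conj]
    rw [← RCLike.ofReal_pow, ← RCLike.ofReal_mul, RCLike.ofReal_re]
    rw [div_mul_eq_mul_div, pow_two, mul_div_assoc, mul_div_cancel_left₀ _ han.ne']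
  have hkey : RCLike.re (f y) + h * ‖a‖ ≤ 1 + h ^ 2 * ‖T‖ ^ 2 := by
    have h1 : RCLike.re (f (y + c • T y)) = RCLike.re (f y) + RCLike.re (c * a) := by
      rw [map_add, map_smul, smul_eq_mul, map_add, ha]
    have h2 : RCLike.re (f (y + c • T y)) ≤ ‖y + c • T y‖ := by
      calc RCLike.re (f (y + c • T y)) ≤ ‖f (y + c • T y)‖ := RCLike.re_le_norm _
        _ ≤ ‖f‖ * ‖y + c • T y‖ := f.le_opNorm _
        _ = ‖y + c • T y‖ := by rw [hf, one_mul]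
    have h3 := stmt14_upper_bound T hT c y
    rw [hcn] at h3
    have h4 : ‖y‖ + h ^ 2 * (‖T‖ ^ 2 * ‖y‖) ≤ 1 + h ^ 2 * ‖T‖ ^ 2 := by
      have : h ^ 2 * (‖T‖ ^ 2 * ‖y‖) ≤ h ^ 2 * ‖T‖ ^ 2 := by
        calc h ^ 2 * (‖T‖ ^ 2 * ‖y‖) ≤ h ^ 2 * (‖T‖ ^ 2 * 1) := by gcongr
          _ = h ^ 2 * ‖T‖ ^ 2 := by ring
      linarith
    rw [h1, hca] at h2
    linarith [h2.trans (h3.trans h4)]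
  have h6 : h * ‖a‖ ≤ δ + h ^ 2 * ‖T‖ ^ 2 := by linarith
  have h5 : h * ‖a‖ ≤ h * (h * ‖T‖ ^ 2 + δ / h) := by
    rw [mul_add, mul_div_cancel₀ _ hh.ne']
    nlinarith
  exact le_of_mul_le_mul_left h5 hh

lemma stmt14_vQdelta_nonneg {X : Type*} [NormedAddCommGroup X] [NormedSpace 𝕜 X]
    (Q P : X → Y) (δ : ℝ) : 0 ≤ vQdelta 𝕜 Q P δ :=
  Real.sSup_nonneg (by rintro r ⟨x, f, -, -, -, rfl⟩; positivity)

lemma stmt14_numRad_nonneg {X : Type*} [NormedAddCommGroup X] [NormedSpace 𝕜 X]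
    (Q P : X → Y) : 0 ≤ numRad 𝕜 Q P :=
  Real.sInf_nonneg (by rintro r ⟨δ, -, rfl⟩; exact stmt14_vQdelta_nonneg Q P δ)

end stmt14aux

theorem stmt_14 (𝕜 : Type*) [RCLike 𝕜] (X Y : Type*) [NormedAddCommGroup X] [NormedSpace 𝕜 X]
    [NormedAddCommGroup Y] [NormedSpace 𝕜 Y] [CompleteSpace X] [CompleteSpace Y]
    (k : ℕ) (Q : X → Y) (hQ : IsHomPoly 𝕜 k Q) (hQ1 : polyNorm Q = 1)
    (T : Y →L[𝕜] Y) (hT : numRadOp 𝕜 T = 0) (hTQ : (fun x => T (Q x)) ≠ 0) :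
    polyIndex 𝕜 k Q = 0 := by
  obtain ⟨A, hA⟩ := hQ
  have hQb : ∀ x : X, ‖x‖ ≤ 1 → ‖Q x‖ ≤ ‖A‖ := by
    intro x hx
    rw [hA]
    calc ‖A (fun _ => x)‖ ≤ ‖A‖ * ∏ _i : Fin k, ‖x‖ := A.le_opNorm _
      _ ≤ ‖A‖ * 1 := by
          refine mul_le_mul_of_nonneg_left ?_ (norm_nonneg A)
          rw [Finset.prod_const]
          simpa using pow_le_one₀ (norm_nonneg x) hx
      _ = ‖A‖ := mul_one _
  have hQBdd : BddAbove { r : ℝ | ∃ x : X, ‖x‖ ≤ 1 ∧ r = ‖Q x‖ } :=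
    ⟨‖A‖, by rintro r ⟨x, hx, rfl⟩; exact hQb x hx⟩
  have hQle : ∀ x : X, ‖x‖ ≤ 1 → ‖Q x‖ ≤ 1 := by
    intro x hx
    have := le_csSup hQBdd (⟨x, hx, rfl⟩ :
      (‖Q x‖) ∈ { r : ℝ | ∃ x : X, ‖x‖ ≤ 1 ∧ r = ‖Q x‖ })
    rwa [show sSup { r : ℝ | ∃ x : X, ‖x‖ ≤ 1 ∧ r = ‖Q x‖ } = polyNorm Q from rfl, hQ1] at this
  set g : X → Y := fun x => T (Q x) with hg
  have hgb : ∀ x : X, ‖x‖ ≤ 1 → ‖g x‖ ≤ ‖T‖ := by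
    intro x hx
    calc ‖T (Q x)‖ ≤ ‖T‖ * ‖Q x‖ := T.le_opNorm _
      _ ≤ ‖T‖ * 1 := mul_le_mul_of_nonneg_left (hQle x hx) (norm_nonneg T)
      _ = ‖T‖ := mul_one _
  have hgBdd : BddAbove { r : ℝ | ∃ x : X, ‖x‖ ≤ 1 ∧ r = ‖g x‖ } :=
    ⟨‖T‖, by rintro r ⟨x, hx, rfl⟩; exact hgb x hx⟩
  have hgne : { r : ℝ | ∃ x : X, ‖x‖ ≤ 1 ∧ r = ‖g x‖ }.Nonempty :=
    ⟨‖g 0‖, 0, by simp, rfl⟩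
  set c₀ : ℝ := polyNorm g with hc₀
  have hc₀s : c₀ = sSup { r : ℝ | ∃ x : X, ‖x‖ ≤ 1 ∧ r = ‖g x‖ } := rfl
  have hub : ∀ x : X, ‖x‖ ≤ 1 → ‖g x‖ ≤ c₀ := by
    intro x hx
    rw [hc₀s]
    exact le_csSup hgBdd ⟨x, hx, rfl⟩
  obtain ⟨x₀, hx₀⟩ : ∃ x : X, g x ≠ 0 := by
    by_contra hcon
    push_neg at hcon
    exact hTQ (funext hcon)
  obtain ⟨x₁, hx₁, hgx₁⟩ : ∃ x : X, ‖x‖ ≤ 1 ∧ g x ≠ 0 := by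
    by_cases hb : ‖x₀‖ ≤ 1
    · exact ⟨x₀, hb, hx₀⟩
    · push_neg at hb
      have hnp : (0:ℝ) < ‖x₀‖ := lt_trans one_pos hb
      refine ⟨((‖x₀‖⁻¹ : ℝ) : 𝕜) • x₀, ?_, ?_⟩
      · rw [norm_smul, RCLike.norm_ofReal, abs_of_pos (inv_pos.2 hnp),
          inv_mul_cancel₀ hnp.ne']
      · have hQs : Q (((‖x₀‖⁻¹ : ℝ) : 𝕜) • x₀)
            = ((‖x₀‖⁻¹ : ℝ) : 𝕜) ^ k • Q x₀ := by
          rw [hA, hA]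
          have := A.map_smul_univ (fun _ : Fin k => ((‖x₀‖⁻¹ : ℝ) : 𝕜)) (fun _ => x₀)
          simpa [Finset.prod_const] using this
        show T (Q (((‖x₀‖⁻¹ : ℝ) : 𝕜) • x₀)) ≠ 0
        rw [hQs, map_smul]
        refine smul_ne_zero (pow_ne_zero _ ?_) hx₀
        simpa [RCLike.ofReal_eq_zero] using inv_ne_zero hnp.ne'
  have hc₀pos : (0:ℝ) < c₀ := lt_of_lt_of_le (norm_pos_iff.2 hgx₁) (hub x₁ hx₁)
  set P : X → Y := fun x => ((c₀⁻¹ : ℝ) : 𝕜) • g x with hP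
  have hPx : ∀ x : X, ‖P x‖ = c₀⁻¹ * ‖g x‖ := by
    intro x
    show ‖((c₀⁻¹ : ℝ) : 𝕜) • g x‖ = _
    rw [norm_smul, RCLike.norm_ofReal, abs_of_pos (inv_pos.2 hc₀pos)]
  have hPel : ∀ x : X, ‖x‖ ≤ 1 → ‖P x‖ ≤ 1 := by
    intro x hx
    rw [hPx]
    calc c₀⁻¹ * ‖g x‖ ≤ c₀⁻¹ * c₀ :=
          mul_le_mul_of_nonneg_left (hub x hx) (inv_nonneg.2 hc₀pos.le)
      _ = 1 := inv_mul_cancel₀ hc₀pos.ne'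
  have hPpoly : IsHomPoly 𝕜 k P := by
    refine ⟨((c₀⁻¹ : ℝ) : 𝕜) • T.compContinuousMultilinearMap A, fun x => ?_⟩
    show ((c₀⁻¹ : ℝ) : 𝕜) • T (Q x) = _
    rw [hA]
    simp
  have hPBdd : BddAbove { r : ℝ | ∃ x : X, ‖x‖ ≤ 1 ∧ r = ‖P x‖ } :=
    ⟨1, by rintro r ⟨x, hx, rfl⟩; exact hPel x hx⟩
  have hPnorm : polyNorm P = 1 := by
    apply le_antisymm
    · exact Real.sSup_le (by rintro r ⟨x, hx, rfl⟩; exact hPel x hx) zero_le_one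
    · refine le_of_forall_pos_le_add ?_
      intro ε hε
      have hlt : c₀ - c₀ * ε < sSup { r : ℝ | ∃ x : X, ‖x‖ ≤ 1 ∧ r = ‖g x‖ } := by
        rw [← hc₀s]; nlinarith
      obtain ⟨r, hrS, hrgt⟩ := exists_lt_of_lt_csSup hgne hlt
      obtain ⟨x, hx, rfl⟩ := hrS
      have h1 : c₀⁻¹ * ‖g x‖ ≤ polyNorm P :=
        le_csSup hPBdd ⟨x, hx, (hPx x).symm⟩
      have h2 : 1 - ε < c₀⁻¹ * ‖g x‖ := by
        have hmul := mul_lt_mul_of_pos_left hrgt (inv_pos.2 hc₀pos)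
        have he : c₀⁻¹ * (c₀ - c₀ * ε) = 1 - ε := by
          field_simp
        linarith [he ▸ hmul]
      linarith
  have hrad : numRad 𝕜 Q P = 0 := by
    refine le_antisymm ?_ (stmt14_numRad_nonneg Q P)
    refine le_of_forall_pos_le_add ?_
    intro ε hε
    set h : ℝ := ε * c₀ / (2 * (‖T‖ ^ 2 + 1)) with hh
    have hhpos : 0 < h := by positivity
    set δ : ℝ := ε * c₀ * h / 2 with hδdef
    have hδpos : 0 < δ := by positivity
    have hdh : δ / h = ε * c₀ / 2 := by
      have : δ = (ε * c₀ / 2) * h := by rw [hδdef]; ring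
      rw [this, mul_div_cancel_right₀ _ hhpos.ne']
    have hv : vQdelta 𝕜 Q P δ ≤ ε := by
      refine Real.sSup_le ?_ hε.le
      rintro r ⟨x, f, hx1, hf1, hre, rfl⟩
      have hy : ‖Q x‖ ≤ 1 := hQle x hx1.le
      have hb := stmt14_approx_pair_bound T hT (Q x) f hy hf1 hhpos hre
      have heq : ‖f (P x)‖ = c₀⁻¹ * ‖f (g x)‖ := by
        show ‖f (((c₀⁻¹ : ℝ) : 𝕜) • g x)‖ = _
        rw [map_smul, smul_eq_mul, norm_mul, RCLike.norm_ofReal,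
          abs_of_pos (inv_pos.2 hc₀pos)]
      rw [heq]
      have hfg : ‖f (g x)‖ ≤ h * ‖T‖ ^ 2 + δ / h := hb
      have harith : c₀⁻¹ * (h * ‖T‖ ^ 2 + δ / h) ≤ ε := by
        rw [hdh]
        have e1 : c₀⁻¹ * (ε * c₀ / 2) = ε / 2 := by field_simp
        have e2 : c₀⁻¹ * h = ε / (2 * (‖T‖ ^ 2 + 1)) := by
          rw [hh]; field_simp
        have e3 : ε / (2 * (‖T‖ ^ 2 + 1)) * ‖T‖ ^ 2 ≤ ε / 2 := by
          rw [div_mul_eq_mul_div, div_le_div_iff₀ (by positivity) (by norm_num : (0:ℝ) < 2)]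
          nlinarith [sq_nonneg ‖T‖, hε.le]
        calc c₀⁻¹ * (h * ‖T‖ ^ 2 + ε * c₀ / 2)
            = (c₀⁻¹ * h) * ‖T‖ ^ 2 + c₀⁻¹ * (ε * c₀ / 2) := by ring
          _ = ε / (2 * (‖T‖ ^ 2 + 1)) * ‖T‖ ^ 2 + ε / 2 := by rw [e1, e2]
          _ ≤ ε / 2 + ε / 2 := by linarith
          _ = ε := by ring
      calc c₀⁻¹ * ‖f (g x)‖ ≤ c₀⁻¹ * (h * ‖T‖ ^ 2 + δ / h) :=
            mul_le_mul_of_nonneg_left hfg (inv_nonneg.2 hc₀pos.le)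
        _ ≤ ε := harith
    have hle : numRad 𝕜 Q P ≤ vQdelta 𝕜 Q P δ :=
      csInf_le ⟨0, by rintro r ⟨δ', -, rfl⟩; exact stmt14_vQdelta_nonneg Q P δ'⟩
        ⟨δ, hδpos, rfl⟩
    linarith
  have hmem : (0:ℝ) ∈ { r : ℝ | ∃ P' : X → Y, IsHomPoly 𝕜 k P' ∧ polyNorm P' = 1 ∧
      r = numRad 𝕜 Q P' } := ⟨P, hPpoly, hPnorm, hrad.symm⟩
  refine le_antisymm ?_ ?_
  · exact csInf_le ⟨0, by rintro r ⟨P', -, -, rfl⟩; exact stmt14_numRad_nonneg Q P'⟩ hmem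
  · exact Real.sInf_nonneg (by rintro r ⟨P', -, -, rfl⟩; exact stmt14_numRad_nonneg Q P')
end

section
/- Let X, Y be Banach spaces, Q a continuous k-homogeneous polynomial from X to Y with ‖Q‖ = 1. Suppose that ⋂{ker T : T ∈ L(Y), v(T) = 0} = {0}. Then n_Q^{(k)}(X, Y) = 0. -/
section Aux

variable {𝕜 Y : Type*} [RCLike 𝕜] [NormedAddCommGroup Y] [NormedSpace 𝕜 Y]

lemma norming_kills (T : Y →L[𝕜] Y) (hT : numRadOp 𝕜 T = 0) {w : Y} (hw : w ≠ 0)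
    {g : Y →L[𝕜] 𝕜} (hg : ‖g‖ = 1) (hgw : g w = (‖w‖ : 𝕜)) : g (T w) = 0 := by
  set u : Y := (‖w‖ : 𝕜)⁻¹ • w with hu
  have hwn : (‖w‖ : ℝ) ≠ 0 := norm_ne_zero_iff.mpr hw
  have hwk : (‖w‖ : 𝕜) ≠ 0 := by exact_mod_cast RCLike.ofReal_ne_zero.mpr hwn
  have hun : ‖u‖ = 1 := by
    rw [hu, norm_smul, norm_inv, RCLike.norm_ofReal, abs_of_nonneg (norm_nonneg w)]
    field_simp
  have hgu : g u = 1 := by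
    rw [hu, map_smul, smul_eq_mul, hgw, inv_mul_cancel₀ hwk]
  have hbdd : BddAbove { r : ℝ | ∃ (y : Y) (f : Y →L[𝕜] 𝕜), ‖y‖ = 1 ∧ ‖f‖ = 1 ∧ f y = 1 ∧ r = ‖f (T y)‖ } := by
    refine ⟨‖T‖, ?_⟩
    rintro r ⟨y, f, hy, hf, -, rfl⟩
    calc ‖f (T y)‖ ≤ ‖f‖ * ‖T y‖ := f.le_opNorm _
      _ ≤ 1 * (‖T‖ * ‖y‖) := by rw [hf]; gcongr; exact T.le_opNorm _
      _ = ‖T‖ := by rw [hy]; ring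
  have hmem : ‖g (T u)‖ ∈ { r : ℝ | ∃ (y : Y) (f : Y →L[𝕜] 𝕜), ‖y‖ = 1 ∧ ‖f‖ = 1 ∧ f y = 1 ∧ r = ‖f (T y)‖ } :=
    ⟨u, g, hun, hg, hgu, rfl⟩
  have h0 : ‖g (T u)‖ ≤ 0 := hT ▸ le_csSup hbdd hmem
  have hTu : g (T u) = 0 := norm_le_zero_iff.mp h0
  have : w = (‖w‖ : 𝕜) • u := by rw [hu, smul_smul, mul_inv_cancel₀ hwk, one_smul]
  rw [this, map_smul, map_smul, smul_eq_mul, hTu, mul_zero]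

lemma key_bound (T : Y →L[𝕜] Y) (hT : numRadOp 𝕜 T = 0) {y : Y} (hy : ‖y‖ ≤ 1)
    {f : Y →L[𝕜] 𝕜} (hf : ‖f‖ = 1) {δ : ℝ} (hδ : 0 < δ)
    (hfy : 1 - δ < RCLike.re (f y)) : ‖f (T y)‖ ≤ 2 * ‖T‖ * Real.sqrt δ := by
  rcases eq_or_ne (f (T y)) 0 with h0 | h0
  · rw [h0, norm_zero]
    positivity
  have hTy : T y ≠ 0 := fun h => h0 (by rw [h, map_zero])
  have hM : 0 < ‖T‖ := by
    by_contra h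
    push_neg at h
    have : T = 0 := le_antisymm h (norm_nonneg T) |> norm_eq_zero.mp
    exact hTy (by rw [this]; rfl)
  set r : ℝ := ‖f (T y)‖ with hr
  have hrpos : 0 < r := norm_pos_iff.mpr h0
  set t : ℝ := Real.sqrt δ / ‖T‖ with ht
  have htpos : 0 < t := div_pos (Real.sqrt_pos.mpr hδ) hM
  set a : 𝕜 := (t : 𝕜) * (r : 𝕜) * (f (T y))⁻¹ with ha
  have haf : a * f (T y) = (t : 𝕜) * (r : 𝕜) := by
    rw [ha]; field_simp
  have hanorm : ‖a‖ = t := by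
    rw [ha, norm_mul, norm_mul, norm_inv, RCLike.norm_ofReal, RCLike.norm_ofReal, ← hr,
      abs_of_pos htpos, abs_of_pos hrpos]
    field_simp
  set w : Y := y + a • T y with hw
  have hfw : RCLike.re (f w) = RCLike.re (f y) + t * r := by
    rw [hw, map_add, map_smul, smul_eq_mul, haf, ← RCLike.ofReal_mul, map_add,
      RCLike.ofReal_re]
  -- upper bound on ‖w‖
  have hwb : ‖w‖ ≤ 1 + t ^ 2 * ‖T‖ ^ 2 := by
    rcases eq_or_ne w 0 with hw0 | hw0
    · rw [hw0, norm_zero]; positivity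
    obtain ⟨g, hg1, hgw⟩ := exists_dual_vector 𝕜 w (norm_ne_zero_iff.mpr hw0)
    have hgTw : g (T w) = 0 := norming_kills T hT hw0 hg1 hgw
    have hgTy : g (T y) = -(a * g (T (T y))) := by
      have h := hgTw
      rw [hw] at h
      simp only [map_add, map_smul, smul_eq_mul] at h
      linear_combination h
    have hgww : (‖w‖ : 𝕜) = g y - a ^ 2 * g (T (T y)) := by
      rw [← hgw, hw, map_add, map_smul, smul_eq_mul, hgTy]; ring
    have : ‖w‖ = RCLike.re (g y) - RCLike.re (a ^ 2 * g (T (T y))) := by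
      have := congrArg RCLike.re hgww
      rwa [RCLike.ofReal_re, map_sub] at this
    rw [this]
    have h1 : RCLike.re (g y) ≤ 1 := by
      calc RCLike.re (g y) ≤ ‖g y‖ := RCLike.re_le_norm _
        _ ≤ ‖g‖ * ‖y‖ := g.le_opNorm _
        _ ≤ 1 * 1 := by rw [hg1]; gcongr
        _ = 1 := one_mul 1
    have h2 : -RCLike.re (a ^ 2 * g (T (T y))) ≤ t ^ 2 * ‖T‖ ^ 2 := by
      calc -RCLike.re (a ^ 2 * g (T (T y))) ≤ ‖a ^ 2 * g (T (T y))‖ := by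
            linarith [(abs_le.mp (RCLike.abs_re_le_norm (a ^ 2 * g (T (T y))))).1]
        _ = ‖a‖ ^ 2 * ‖g (T (T y))‖ := by rw [norm_mul, norm_pow]
        _ ≤ t ^ 2 * (‖T‖ * (‖T‖ * ‖y‖)) := by
            rw [hanorm]
            gcongr
            calc ‖g (T (T y))‖ ≤ ‖g‖ * ‖T (T y)‖ := g.le_opNorm _
              _ = ‖T (T y)‖ := by rw [hg1, one_mul]
              _ ≤ ‖T‖ * ‖T y‖ := T.le_opNorm _
              _ ≤ ‖T‖ * (‖T‖ * ‖y‖) := by gcongr; exact T.le_opNorm _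
        _ ≤ t ^ 2 * (‖T‖ * (‖T‖ * 1)) := by gcongr
        _ = t ^ 2 * ‖T‖ ^ 2 := by ring
    linarith
  -- lower bound
  have hlow : 1 - δ + t * r < ‖w‖ := by
    calc 1 - δ + t * r < RCLike.re (f y) + t * r := by linarith
      _ = RCLike.re (f w) := hfw.symm
      _ ≤ ‖f w‖ := RCLike.re_le_norm _
      _ ≤ ‖f‖ * ‖w‖ := f.le_opNorm _
      _ = ‖w‖ := by rw [hf, one_mul]
  have hmain : t * r < δ + t ^ 2 * ‖T‖ ^ 2 := by linarith
  have hsq : (0:ℝ) < Real.sqrt δ := Real.sqrt_pos.mpr hδ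
  have htM : t * ‖T‖ = Real.sqrt δ := by rw [ht]; field_simp
  have hmain' : Real.sqrt δ * r < 2 * δ * ‖T‖ := by
    have h2 : t ^ 2 * ‖T‖ ^ 2 = δ := by
      have : (t * ‖T‖) ^ 2 = Real.sqrt δ ^ 2 := by rw [htM]
      rw [Real.sq_sqrt hδ.le] at this
      linarith [this, sq_nonneg (t*‖T‖)]  -- fallback
    rw [h2] at hmain
    have := mul_lt_mul_of_pos_right hmain hM
    calc Real.sqrt δ * r = t * r * ‖T‖ := by rw [← htM]; ring
      _ < (δ + δ) * ‖T‖ := this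
      _ = 2 * δ * ‖T‖ := by ring
  nlinarith [hmain', hsq, Real.sq_sqrt hδ.le, hrpos, hM]

end Aux

theorem stmt_15 (𝕜 : Type*) [RCLike 𝕜] (X Y : Type*) [NormedAddCommGroup X] [NormedSpace 𝕜 X]
    [NormedAddCommGroup Y] [NormedSpace 𝕜 Y] [CompleteSpace X] [CompleteSpace Y]
    (k : ℕ) (Q : X → Y) (hQ : IsHomPoly 𝕜 k Q) (hQ1 : polyNorm Q = 1)
    (hker : { y : Y | ∀ T : Y →L[𝕜] Y, numRadOp 𝕜 T = 0 → T y = 0 } = {0}) :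
    polyIndex 𝕜 k Q = 0 := by
  classical
  obtain ⟨A, hA⟩ := hQ
  -- basic facts about Q
  set SQ := { r : ℝ | ∃ x : X, ‖x‖ ≤ 1 ∧ r = ‖Q x‖ } with hSQ
  have hSQne : SQ.Nonempty := ⟨‖Q 0‖, 0, by simp, rfl⟩
  have hSQbdd : BddAbove SQ := by
    refine ⟨‖A‖, ?_⟩
    rintro r ⟨x, hx, rfl⟩
    calc ‖Q x‖ = ‖A (fun _ => x)‖ := by rw [hA]
      _ ≤ ‖A‖ * ∏ _i : Fin k, ‖x‖ := A.le_opNorm _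
      _ ≤ ‖A‖ * 1 := by
          gcongr
          exact Finset.prod_le_one (fun _ _ => norm_nonneg x) (fun _ _ => hx)
      _ = ‖A‖ := mul_one _
  have hQle : ∀ x : X, ‖x‖ ≤ 1 → ‖Q x‖ ≤ 1 := fun x hx => by
    have : ‖Q x‖ ≤ sSup SQ := le_csSup hSQbdd ⟨x, hx, rfl⟩
    rwa [show sSup SQ = 1 from hQ1] at this
  -- find x₀ with Q x₀ ≠ 0
  obtain ⟨r₀, ⟨x₀, hx₀, rfl⟩, hr₀⟩ : ∃ r ∈ SQ, (1:ℝ)/2 < r := by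
    apply exists_lt_of_lt_csSup hSQne
    rw [show sSup SQ = 1 from hQ1]; norm_num
  have hQx₀ : Q x₀ ≠ 0 := by
    intro h; rw [h, norm_zero] at hr₀; linarith
  -- get the operator T
  have hnm : Q x₀ ∉ ({0} : Set Y) := by simpa using hQx₀
  rw [← hker] at hnm
  simp only [Set.mem_setOf_eq, not_forall] at hnm
  obtain ⟨T, hT0, hTQx₀⟩ := hnm
  have hTQx₀' : T (Q x₀) ≠ 0 := by tauto
  have hT0' : numRadOp 𝕜 T = 0 := by tauto
  have hTpos : 0 < ‖T‖ := by
    rcases (norm_nonneg T).lt_or_eq with h | h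
    · exact h
    · exfalso; apply hTQx₀'
      have : T = 0 := by rwa [eq_comm, norm_eq_zero] at h
      rw [this]; rfl
  -- the supremum N of ‖T (Q x)‖ over the unit ball
  set STQ := { r : ℝ | ∃ x : X, ‖x‖ ≤ 1 ∧ r = ‖T (Q x)‖ } with hSTQ
  have hSTQne : STQ.Nonempty := ⟨‖T (Q 0)‖, 0, by simp, rfl⟩
  have hSTQbdd : BddAbove STQ := by
    refine ⟨‖T‖, ?_⟩
    rintro r ⟨x, hx, rfl⟩
    calc ‖T (Q x)‖ ≤ ‖T‖ * ‖Q x‖ := T.le_opNorm _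
      _ ≤ ‖T‖ * 1 := by gcongr; exact hQle x hx
      _ = ‖T‖ := mul_one _
  set N := sSup STQ with hN
  have hNpos : 0 < N := by
    have h1 : ‖T (Q x₀)‖ ≤ N := le_csSup hSTQbdd ⟨x₀, hx₀, rfl⟩
    have h2 : 0 < ‖T (Q x₀)‖ := norm_pos_iff.mpr hTQx₀'
    linarith
  have hNle : ∀ x : X, ‖x‖ ≤ 1 → ‖T (Q x)‖ ≤ N := fun x hx =>
    le_csSup hSTQbdd ⟨x, hx, rfl⟩
  -- the polynomial P
  set P : X → Y := fun x => ((N⁻¹ : ℝ) : 𝕜) • T (Q x) with hP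
  have hPnorm : ∀ x : X, ‖P x‖ = N⁻¹ * ‖T (Q x)‖ := fun x => by
    rw [hP, norm_smul, RCLike.norm_ofReal, abs_of_pos (inv_pos.mpr hNpos)]
  have hPhom : IsHomPoly 𝕜 k P := by
    refine ⟨((N⁻¹ : ℝ) : 𝕜) • T.compContinuousMultilinearMap A, fun x => ?_⟩
    simp [hP, hA x]
  have hP1 : polyNorm P = 1 := by
    unfold polyNorm
    apply csSup_eq_of_forall_le_of_forall_lt_exists_gt
    · exact ⟨‖P 0‖, 0, by simp, rfl⟩
    · rintro r ⟨x, hx, rfl⟩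
      rw [hPnorm x]
      calc N⁻¹ * ‖T (Q x)‖ ≤ N⁻¹ * N := by gcongr; exact hNle x hx
        _ = 1 := inv_mul_cancel₀ hNpos.ne'
    · intro w hw
      obtain ⟨s, ⟨x, hx, rfl⟩, hs⟩ : ∃ s ∈ STQ, w * N < s := by
        apply exists_lt_of_lt_csSup hSTQne
        calc w * N < 1 * N := mul_lt_mul_of_pos_right hw hNpos
          _ = N := one_mul N
      refine ⟨‖P x‖, ⟨x, hx, rfl⟩, ?_⟩
      rw [hPnorm x, show N⁻¹ * ‖T (Q x)‖ = ‖T (Q x)‖ / N by ring, lt_div_iff₀ hNpos]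
      exact hs
  -- numRad 𝕜 Q P = 0
  have hvnonneg : ∀ δ : ℝ, 0 ≤ vQdelta 𝕜 Q P δ := fun δ => by
    apply Real.sSup_nonneg
    rintro r ⟨x, f, _, _, _, rfl⟩
    exact norm_nonneg _
  have hvsmall : ∀ ε : ℝ, 0 < ε → ∃ δ : ℝ, 0 < δ ∧ vQdelta 𝕜 Q P δ ≤ ε := by
    intro ε hε
    refine ⟨(ε * N / (2 * ‖T‖)) ^ 2, by positivity, ?_⟩
    have hsqrt : Real.sqrt ((ε * N / (2 * ‖T‖)) ^ 2) = ε * N / (2 * ‖T‖) :=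
      Real.sqrt_sq (by positivity)
    apply Real.sSup_le _ hε.le
    rintro r ⟨x, f, hx, hf, hre, rfl⟩
    have hQxle : ‖Q x‖ ≤ 1 := hQle x hx.le
    have hkey := key_bound T hT0' hQxle hf (by positivity) hre
    rw [hsqrt] at hkey
    have : ‖f (P x)‖ = N⁻¹ * ‖f (T (Q x))‖ := by
      rw [hP]
      simp only [map_smul, smul_eq_mul, norm_mul, RCLike.norm_ofReal,
        abs_of_pos (inv_pos.mpr hNpos)]
    rw [this]
    calc N⁻¹ * ‖f (T (Q x))‖ ≤ N⁻¹ * (2 * ‖T‖ * (ε * N / (2 * ‖T‖))) := by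
          gcongr
        _ = ε := by field_simp
  have hnumRad : numRad 𝕜 Q P = 0 := by
    unfold numRad
    have hlb : ∀ r ∈ { r : ℝ | ∃ δ : ℝ, 0 < δ ∧ r = vQdelta 𝕜 Q P δ }, 0 ≤ r := by
      rintro r ⟨δ, hδ, rfl⟩; exact hvnonneg δ
    refine le_antisymm ?_ (Real.sInf_nonneg hlb)
    by_contra h
    push_neg at h
    obtain ⟨δ, hδ, hv⟩ := hvsmall (sInf { r : ℝ | ∃ δ : ℝ, 0 < δ ∧ r = vQdelta 𝕜 Q P δ } / 2) (by linarith)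
    have : sInf { r : ℝ | ∃ δ : ℝ, 0 < δ ∧ r = vQdelta 𝕜 Q P δ } ≤ vQdelta 𝕜 Q P δ :=
      csInf_le ⟨0, hlb⟩ ⟨δ, hδ, rfl⟩
    linarith
  -- conclude
  unfold polyIndex
  have hlb : ∀ r ∈ { r : ℝ | ∃ P' : X → Y, IsHomPoly 𝕜 k P' ∧ polyNorm P' = 1 ∧ r = numRad 𝕜 Q P' }, 0 ≤ r := by
    rintro r ⟨P', _, _, rfl⟩
    apply Real.sInf_nonneg
    rintro r ⟨δ, hδ, rfl⟩
    apply Real.sSup_nonneg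
    rintro r ⟨x, f, _, _, _, rfl⟩
    exact norm_nonneg _
  refine le_antisymm ?_ (Real.sInf_nonneg hlb)
  exact csInf_le ⟨0, hlb⟩ ⟨P, hPhom, hP1, hnumRad.symm⟩
end

section
/- Let X, Y be Banach spaces, Q a continuous k-homogeneous polynomial from X to Y with ‖Q‖ = 1, and 0 ≤ α ≤ 1. If there exists a surjective linear isometry T : Y → Y with classical numerical radius v(T) ≤ α, then n_Q^{(k)}(X, Y) ≤ α. -/
set_option maxHeartbeats 1000000 in
open RCLike in
lemma ekeland_aux {Y : Type*} [NormedAddCommGroup Y] [CompleteSpace Y]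
    {B : Set Y} (hB : IsClosed B) {φ : Y → ℝ} (hφ : Continuous φ)
    {b : ℝ} (hb : ∀ z ∈ B, b ≤ φ z) {y₀ : Y} (hy₀ : y₀ ∈ B) {κ : ℝ} (hκ : 0 < κ) :
    ∃ u ∈ B, φ u + κ * ‖u - y₀‖ ≤ φ y₀ ∧ ∀ z ∈ B, φ u - κ * ‖z - u‖ ≤ φ z := by
  classical
  set S : Y → Set Y := fun v => {z | z ∈ B ∧ φ z + κ * ‖z - v‖ ≤ φ v} with hS
  have hself : ∀ v ∈ B, v ∈ S v := fun v hv => ⟨hv, by simp⟩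
  have htrans : ∀ u v w : Y, v ∈ S u → w ∈ S v → w ∈ S u := by
    rintro u v w ⟨hvB, hv⟩ ⟨hwB, hw⟩
    refine ⟨hwB, ?_⟩
    have : ‖w - u‖ ≤ ‖w - v‖ + ‖v - u‖ := by
      simpa [dist_eq_norm] using dist_triangle w v u
    nlinarith [norm_nonneg (w - v), norm_nonneg (v - u)]
  have hSclosed : ∀ v, IsClosed (S v) := by
    intro v
    have : S v = B ∩ {z | φ z + κ * ‖z - v‖ ≤ φ v} := rfl
    rw [this]
    exact hB.inter (isClosed_le (by fun_prop) continuous_const)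
  -- approximate minimization step
  have hstep : ∀ (u : Y), u ∈ B → ∀ n : ℕ, ∃ z, z ∈ S u ∧ ∀ w ∈ S u, φ z < φ w + (1/2 : ℝ)^n := by
    intro u hu n
    have hne : (φ '' S u).Nonempty := ⟨φ u, u, hself u hu, rfl⟩
    have hbdd : BddBelow (φ '' S u) := ⟨b, by rintro r ⟨z, hz, rfl⟩; exact hb z hz.1⟩
    have hlt : sInf (φ '' S u) < sInf (φ '' S u) + (1/2:ℝ)^n := by
      have : (0:ℝ) < (1/2:ℝ)^n := by positivity
      linarith
    obtain ⟨r, ⟨z, hz, rfl⟩, hr⟩ := (csInf_lt_iff hbdd hne).mp hlt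
    exact ⟨z, hz, fun w hw => lt_of_lt_of_le hr (by
      have : sInf (φ '' S u) ≤ φ w := csInf_le hbdd ⟨w, hw, rfl⟩
      linarith)⟩
  choose! next hnext1 hnext2 using hstep
  set F : ℕ → Y := fun n => Nat.rec y₀ (fun n u => next u n) n with hF
  have hF0 : F 0 = y₀ := rfl
  have hFsucc : ∀ n, F (n+1) = next (F n) n := fun n => rfl
  have hFB : ∀ n, F n ∈ B := by
    intro n
    induction n with
    | zero => exact hy₀
    | succ n ih => rw [hFsucc]; exact (hnext1 (F n) ih n).1
  have hFS : ∀ n, F (n+1) ∈ S (F n) := fun n => by rw [hFsucc]; exact hnext1 (F n) (hFB n) n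
  have hchain : ∀ n m, n ≤ m → F m ∈ S (F n) := by
    intro n m hnm
    induction m with
    | zero =>
      have : n = 0 := Nat.le_zero.mp hnm
      subst this; exact hself _ (hFB 0)
    | succ m ih =>
      rcases Nat.lt_or_ge n (m+1) with h | h
      · exact htrans _ _ _ (ih (Nat.lt_succ_iff.mp h)) (hFS m)
      · have : n = m + 1 := le_antisymm hnm h
        subst this; exact hself (F (m+1)) (hFB (m+1))
  -- summability & limit
  have hsum : ∀ n, κ * (∑ i ∈ Finset.range n, dist (F i) (F (i+1))) ≤ φ (F 0) - φ (F n) := by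
    intro n
    induction n with
    | zero => simp
    | succ n ih =>
      rw [Finset.sum_range_succ, mul_add]
      have h2 := (hFS n).2
      rw [dist_eq_norm']
      nlinarith [norm_nonneg (F (n+1) - F n)]
  have hsummable : Summable (fun n => dist (F n) (F (n+1))) := by
    apply summable_of_sum_range_le (fun n => dist_nonneg)
    intro n
    have h1 := hsum n
    have h2 := hb _ (hFB n)
    have : κ * ∑ i ∈ Finset.range n, dist (F i) (F (i+1)) ≤ φ (F 0) - b := by linarith
    calc ∑ i ∈ Finset.range n, dist (F i) (F (i+1))
        = κ⁻¹ * (κ * ∑ i ∈ Finset.range n, dist (F i) (F (i+1))) := by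
          field_simp
      _ ≤ κ⁻¹ * (φ (F 0) - b) := by
          apply mul_le_mul_of_nonneg_left this (by positivity)
  have hcauchy : CauchySeq F := cauchySeq_of_summable_dist hsummable
  obtain ⟨u, hu⟩ := cauchySeq_tendsto_of_complete hcauchy
  have huB : u ∈ B := hB.mem_of_tendsto hu (Filter.Eventually.of_forall hFB)
  have huS : ∀ n, u ∈ S (F n) := by
    intro n
    refine (hSclosed (F n)).mem_of_tendsto hu ?_
    filter_upwards [Filter.eventually_ge_atTop n] with m hm
    exact hchain n m hm
  refine ⟨u, huB, by simpa [hF0] using (huS 0).2, ?_⟩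
  intro z hzB
  by_contra hcon
  push_neg at hcon
  have hzS : ∀ n, z ∈ S (F n) := by
    intro n
    refine ⟨hzB, ?_⟩
    have h1 := (huS n).2
    have htri : ‖z - F n‖ ≤ ‖z - u‖ + ‖u - F n‖ := by
      simpa [dist_eq_norm] using dist_triangle z u (F n)
    nlinarith [norm_nonneg (z - u), norm_nonneg (u - F n)]
  have hfu : ∀ n, φ u ≤ φ (F (n+1)) := by
    intro n
    have := (huS (n+1)).2
    nlinarith [norm_nonneg (u - F (n+1))]
  have hlt : ∀ n : ℕ, φ u < φ z + (1/2:ℝ)^n := by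
    intro n
    have := hnext2 (F n) (hFB n) n z (hzS n)
    rw [← hFsucc] at this
    exact lt_of_le_of_lt (hfu n) this
  have hle : φ u ≤ φ z := by
    apply le_of_forall_pos_le_add
    intro ε hε
    obtain ⟨n, hn⟩ := exists_pow_lt_of_lt_one hε (by norm_num : (1/2:ℝ) < 1)
    exact le_of_lt (lt_of_lt_of_le (hlt n) (by linarith))
  nlinarith [norm_nonneg (z - u)]


section AuxLemmas
open RCLike

variable {𝕜 : Type*} [RCLike 𝕜] {Y : Type*} [NormedAddCommGroup Y] [NormedSpace 𝕜 Y]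

set_option maxHeartbeats 1600000 in
lemma bpb_aux [CompleteSpace Y] (f : Y →L[𝕜] 𝕜) (hf : ‖f‖ = 1) (y₀ : Y) (hy₀ : ‖y₀‖ ≤ 1)
    {κ : ℝ} (hκ0 : 0 < κ) (hκ2 : κ ≤ 1/2) (hre : 1 - κ^2 < re (f y₀)) :
    ∃ (u : Y) (g : Y →L[𝕜] 𝕜), ‖u‖ = 1 ∧ ‖g‖ = 1 ∧ g u = 1 ∧ ‖u - y₀‖ ≤ κ ∧ ‖f - g‖ ≤ 14*κ := by
  letI : NormedSpace ℝ Y := NormedSpace.restrictScalars ℝ 𝕜 Y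
  letI : IsScalarTower ℝ 𝕜 Y := RestrictScalars.isScalarTower ℝ 𝕜 Y
  set ρ : Y →L[ℝ] ℝ := (reCLM : 𝕜 →L[ℝ] ℝ).comp (f.restrictScalars ℝ) with hρdef
  have hρ : ∀ z, ρ z = re (f z) := fun z => rfl
  clear_value ρ
  clear hρdef
  have hρabs : ∀ z, |ρ z| ≤ ‖z‖ := fun z => by
    rw [hρ]
    calc |re (f z)| ≤ ‖f z‖ := abs_re_le_norm _
      _ ≤ ‖z‖ := by simpa [hf] using f.le_opNorm z
  have hρle : ∀ z, ρ z ≤ ‖z‖ := fun z => (le_abs_self _).trans (hρabs z)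
  -- Ekeland step
  have hball : y₀ ∈ Metric.closedBall (0:Y) 1 := by simpa using hy₀
  obtain ⟨u, huB, hu1, hu2⟩ := ekeland_aux (φ := fun z => -(ρ z))
    Metric.isClosed_closedBall (ρ.continuous.neg) (b := -1)
    (fun z hz => by
      have h1 := hρle z
      have hz1 : ‖z‖ ≤ 1 := by simpa using hz
      simp only [neg_le_neg_iff]
      linarith)
    hball hκ0
  have huN : ‖u‖ ≤ 1 := by simpa using huB
  have hρy₀ : 1 - κ^2 < ρ y₀ := by rw [hρ]; exact hre
  have hruy : ρ y₀ + κ * ‖u - y₀‖ ≤ ρ u := by linarith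
  have hru : 1 - κ^2 < ρ u := by nlinarith [norm_nonneg (u - y₀)]
  have hr34 : (3:ℝ)/4 ≤ ρ u := by nlinarith
  have hρu1 : ρ u ≤ 1 := (hρle u).trans huN
  have huy : ‖u - y₀‖ ≤ κ := by
    have h : κ * ‖u - y₀‖ ≤ κ * κ := by nlinarith
    exact le_of_mul_le_mul_left h hκ0
  have hEk : ∀ z, ‖z‖ ≤ 1 → ρ z - ρ u ≤ κ * ‖z - u‖ := fun z hz => by
    have := hu2 z (by simpa using hz)
    linarith
  -- the open convex cone U and the set s = u + U
  set U : Set Y := {w : Y | κ * ‖w‖ < ρ w} with hUdef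
  have hUopen : IsOpen U := isOpen_lt (by fun_prop) ρ.continuous
  have hcone : ∀ w ∈ U, ∀ t : ℝ, 0 < t → t • w ∈ U := by
    intro w hw t ht
    simp only [hUdef, Set.mem_setOf_eq, norm_smul, map_smul, smul_eq_mul,
      Real.norm_eq_abs, abs_of_pos ht] at hw ⊢
    nlinarith
  set s : Set Y := {v : Y | v - u ∈ U} with hsdef
  have hsopen : IsOpen s := hUopen.preimage (by fun_prop)
  have hsconv : Convex ℝ s := by
    intro v₁ h₁ v₂ h₂ a b ha hb hab
    simp only [hsdef, Set.mem_setOf_eq] at h₁ h₂ ⊢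
    have hdec : (a • v₁ + b • v₂) - u = a • (v₁ - u) + b • (v₂ - u) := by
      calc (a • v₁ + b • v₂) - u = (a • v₁ + b • v₂) - (a+b) • u := by rw [hab, one_smul]
        _ = a • (v₁ - u) + b • (v₂ - u) := by rw [add_smul, smul_sub, smul_sub]; abel
    rw [hdec]
    simp only [hUdef, Set.mem_setOf_eq] at h₁ h₂ ⊢
    rcases eq_or_lt_of_le ha with heq | ha'
    · rw [← heq] at hab ⊢
      rw [zero_add] at hab
      rw [hab]
      simpa using h₂
    · have hn : ‖a • (v₁ - u) + b • (v₂ - u)‖ ≤ a * ‖v₁ - u‖ + b * ‖v₂ - u‖ := by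
        calc ‖a • (v₁ - u) + b • (v₂ - u)‖ ≤ ‖a • (v₁ - u)‖ + ‖b • (v₂ - u)‖ := norm_add_le _ _
          _ = a * ‖v₁ - u‖ + b * ‖v₂ - u‖ := by
            rw [norm_smul, norm_smul, Real.norm_eq_abs, Real.norm_eq_abs,
              abs_of_nonneg ha, abs_of_nonneg hb]
      have hρsum : ρ (a • (v₁ - u) + b • (v₂ - u)) = a * ρ (v₁ - u) + b * ρ (v₂ - u) := by
        rw [map_add, map_smul, map_smul, smul_eq_mul, smul_eq_mul]
      rw [hρsum]
      nlinarith [mul_lt_mul_of_pos_left h₁ ha', mul_le_mul_of_nonneg_left h₂.le hb]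
  have hdisj : Disjoint s (Metric.closedBall (0:Y) 1) := by
    rw [Set.disjoint_left]
    intro v hv hvB
    simp only [hsdef, hUdef, Set.mem_setOf_eq, map_sub] at hv
    have := hEk v (by simpa using hvB)
    linarith
  obtain ⟨φ₁, c, hsc, hBc⟩ :=
    _root_.geometric_hahn_banach_open hsconv hsopen (convex_closedBall (0:Y) 1) hdisj
  have hcφu : c ≤ φ₁ u := hBc u (by simpa using huN)
  have hκ34 : κ < (3:ℝ)/4 := by linarith
  have hUu : ∀ t : ℝ, 0 < t → t • u ∈ U := by
    intro t ht
    simp only [hUdef, Set.mem_setOf_eq, norm_smul, map_smul, smul_eq_mul,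
      Real.norm_eq_abs, abs_of_pos ht]
    nlinarith [mul_le_mul_of_nonneg_left huN (mul_pos hκ0 ht).le,
      mul_lt_mul_of_pos_left (hκ34.trans_le hr34) ht]
  have htu : ∀ t : ℝ, 0 < t → φ₁ u + t * φ₁ u < c := by
    intro t ht
    have hmem : (u + t • u) ∈ s := by
      simp only [hsdef, Set.mem_setOf_eq, add_sub_cancel_left]
      exact hUu t ht
    have := hsc _ hmem
    rwa [map_add, map_smul, smul_eq_mul] at this
  have hφu_neg : φ₁ u < 0 := by have := htu 1 one_pos; linarith
  have hφuc : φ₁ u ≤ c := by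
    by_contra h
    push_neg at h
    have ht : 0 < (c - φ₁ u) / φ₁ u := div_pos_iff.mpr (Or.inr ⟨by linarith, hφu_neg⟩)
    have h2 := htu _ ht
    have heq : φ₁ u + (c - φ₁ u) / φ₁ u * φ₁ u = c := by
      rw [div_mul_cancel₀ _ hφu_neg.ne]; ring
    rw [heq] at h2
    exact lt_irrefl c h2
  have hUnonpos : ∀ w ∈ U, φ₁ w ≤ 0 := by
    intro w hw
    by_contra h
    push_neg at h
    have ht : 0 < (c + 1 - φ₁ u) / φ₁ w := div_pos (by linarith) h
    have hmem : (u + ((c + 1 - φ₁ u) / φ₁ w) • w) ∈ s := by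
      simp only [hsdef, Set.mem_setOf_eq, add_sub_cancel_left]
      exact hcone w hw _ ht
    have h2 := hsc _ hmem
    rw [map_add, map_smul, smul_eq_mul] at h2
    have heq : φ₁ u + (c + 1 - φ₁ u) / φ₁ w * φ₁ w = c + 1 := by
      rw [div_mul_cancel₀ _ h.ne']; ring
    rw [heq] at h2
    linarith
  -- the functional ψ and its normalization
  set ψ : Y →L[ℝ] ℝ := -φ₁ with hψdef
  have hψa : ∀ z, ψ z = -(φ₁ z) := fun z => rfl
  clear_value ψ
  clear hψdef
  have hψu_pos : 0 < ψ u := by rw [hψa]; linarith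
  have hψB : ∀ z, ‖z‖ ≤ 1 → ψ z ≤ ψ u := by
    intro z hz
    have := hBc z (by simpa using hz)
    rw [hψa, hψa]; linarith
  have hψbound : ∀ z, |ψ z| ≤ ψ u * ‖z‖ := by
    intro z
    rcases eq_or_ne z 0 with rfl | hne
    · simp
    have hz : 0 < ‖z‖ := norm_pos_iff.mpr hne
    have hn1 : ‖‖z‖⁻¹ • z‖ ≤ 1 := by
      rw [norm_smul, Real.norm_eq_abs, abs_of_pos (by positivity), inv_mul_cancel₀ hz.ne']
    have h1 := hψB _ hn1
    have h2 := hψB _ (by rwa [norm_neg] : ‖-(‖z‖⁻¹ • z)‖ ≤ 1)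
    rw [map_smul, smul_eq_mul] at h1
    rw [map_neg, map_smul, smul_eq_mul] at h2
    have h1' := mul_le_mul_of_nonneg_left h1 hz.le
    have h2' := mul_le_mul_of_nonneg_left h2 hz.le
    rw [← mul_assoc, mul_inv_cancel₀ hz.ne', one_mul] at h1'
    rw [mul_neg, ← mul_assoc, mul_inv_cancel₀ hz.ne', one_mul] at h2'
    rw [abs_le]
    constructor <;> nlinarith [mul_comm (‖z‖) (ψ u)]
  have hψnorm : ‖ψ‖ = ψ u := by
    refine le_antisymm (ψ.opNorm_le_bound hψu_pos.le (fun z => by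
      rw [Real.norm_eq_abs]; exact hψbound z)) ?_
    have h1 := ψ.le_opNorm u
    rw [Real.norm_eq_abs, abs_of_pos hψu_pos] at h1
    nlinarith [norm_nonneg u, ψ.opNorm_nonneg]
  have hunorm : ‖u‖ = 1 := by
    refine le_antisymm huN ?_
    have h1 := ψ.le_opNorm u
    rw [Real.norm_eq_abs, abs_of_pos hψu_pos, hψnorm] at h1
    nlinarith
  set ψh : Y →L[ℝ] ℝ := (ψ u)⁻¹ • ψ with hψhdef
  have hψha : ∀ z, ψh z = (ψ u)⁻¹ * ψ z := fun z => rfl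
  clear_value ψh
  clear hψhdef
  have hψhu : ψh u = 1 := by rw [hψha, inv_mul_cancel₀ hψu_pos.ne']
  have hψhnorm : ‖ψh‖ = 1 := by
    refine le_antisymm (ψh.opNorm_le_bound zero_le_one (fun z => ?_)) ?_
    · rw [Real.norm_eq_abs, hψha, abs_mul, abs_of_pos (inv_pos.mpr hψu_pos), one_mul]
      have h3 := hψbound z
      have h2 : (0:ℝ) < (ψ u)⁻¹ := inv_pos.mpr hψu_pos
      calc (ψ u)⁻¹ * |ψ z| ≤ (ψ u)⁻¹ * (ψ u * ‖z‖) :=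
            mul_le_mul_of_nonneg_left (hψbound z) h2.le
        _ = ‖z‖ := inv_mul_cancel_left₀ hψu_pos.ne' _
    · have h1 := ψh.le_opNorm u
      rw [hunorm, mul_one, hψhu] at h1
      simpa using h1
  have hψhUpos : ∀ w ∈ U, 0 ≤ ψh w := by
    intro w hw
    rw [hψha]
    exact mul_nonneg (inv_pos.mpr hψu_pos).le (by rw [hψa]; linarith [hUnonpos w hw])
  have hψhpos : ∀ w, κ * ‖w‖ ≤ ρ w → 0 ≤ ψh w := by
    intro w hw
    by_contra h
    push_neg at h
    set t : ℝ := -(ψh w) / 2 with htdef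
    have ht : 0 < t := by rw [htdef]; linarith
    have hwtU : w + t • u ∈ U := by
      simp only [hUdef, Set.mem_setOf_eq]
      have hn : ‖w + t • u‖ ≤ ‖w‖ + t * ‖u‖ := by
        calc ‖w + t • u‖ ≤ ‖w‖ + ‖t • u‖ := norm_add_le _ _
          _ = ‖w‖ + t * ‖u‖ := by rw [norm_smul, Real.norm_eq_abs, abs_of_pos ht]
      have hρ2 : ρ (w + t • u) = ρ w + t * ρ u := by rw [map_add, map_smul, smul_eq_mul]
      rw [hρ2, hunorm] at *
      nlinarith
    have h0 := hψhUpos _ hwtU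
    rw [map_add, map_smul, smul_eq_mul, hψhu, mul_one] at h0
    rw [htdef] at h0
    linarith
  -- quantitative estimate
  have hest : ∀ w : Y, |ρ w - ψh w| ≤ 13 * κ * ‖w‖ := by
    intro w
    rcases eq_or_ne w 0 with rfl | hw0
    · simp
    have hw : 0 < ‖w‖ := norm_pos_iff.mpr hw0
    have hr0 : (0:ℝ) < ρ u := by linarith
    have ha : |ρ w| ≤ ‖w‖ := hρabs w
    set a : ℝ := ρ w with hadef
    set r : ℝ := ρ u with hrdef
    set w' : Y := w - (a/r) • u with hw'def
    have hρw' : ρ w' = 0 := by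
      rw [hw'def, map_sub, map_smul, smul_eq_mul, ← hadef, ← hrdef]
      field_simp
      ring
    have hw'n : ‖w'‖ ≤ 3 * ‖w‖ := by
      have h1 : ‖w'‖ ≤ ‖w‖ + ‖(a/r) • u‖ := norm_sub_le _ _
      rw [norm_smul, Real.norm_eq_abs, hunorm, mul_one, abs_div, abs_of_pos hr0] at h1
      have h2 : |a| / r * r = |a| := div_mul_cancel₀ _ hr0.ne'
      nlinarith [abs_nonneg a, div_nonneg (abs_nonneg a) hr0.le]
    set t : ℝ := 1/(12*κ*‖w‖) with htdef
    have ht : 0 < t := by rw [htdef]; positivity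
    have htprod : t * (12*κ*‖w‖) = 1 := by rw [htdef]; field_simp
    have hbound : ∀ sg : ℝ, |sg| = t → κ * ‖u + sg • w'‖ ≤ ρ (u + sg • w') := by
      intro sg hs
      have hn : ‖u + sg • w'‖ ≤ 1 + t * ‖w'‖ := by
        calc ‖u + sg • w'‖ ≤ ‖u‖ + ‖sg • w'‖ := norm_add_le _ _
          _ = 1 + |sg| * ‖w'‖ := by rw [hunorm, norm_smul, Real.norm_eq_abs]
          _ = 1 + t * ‖w'‖ := by rw [hs]
      have hρv : ρ (u + sg • w') = r := by
        rw [map_add, map_smul, smul_eq_mul, hρw', mul_zero, add_zero]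
      rw [hρv]
      have h3 : t * ‖w'‖ ≤ t * (3*‖w‖) := mul_le_mul_of_nonneg_left hw'n ht.le
      have h4 : κ * (t * (3*‖w‖)) ≤ 1/4 := by nlinarith
      have h5 : κ * ‖u + sg • w'‖ ≤ κ * (1 + t*‖w'‖) := mul_le_mul_of_nonneg_left hn hκ0.le
      nlinarith
    have h1 := hψhpos _ (hbound t (abs_of_pos ht))
    have h2 := hψhpos _ (hbound (-t) (by rw [abs_neg, abs_of_pos ht]))
    rw [map_add, map_smul, smul_eq_mul, hψhu] at h1 h2
    have hψw' : |ψh w'| ≤ 12*κ*‖w‖ := by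
      rw [abs_le]
      constructor <;> nlinarith
    have hψhw : ψh w = ψh w' + a/r := by
      rw [hw'def, map_sub, map_smul, smul_eq_mul, hψhu, mul_one]
      ring
    have hsplit : ρ w - ψh w = (a - a/r) - ψh w' := by rw [hψhw, ← hadef]; ring
    rw [hsplit]
    have haar : |a - a/r| ≤ (2/3)*κ*‖w‖ := by
      have heq : a - a/r = a * ((r-1)/r) := by field_simp
      rw [heq, abs_mul, abs_div, abs_of_pos hr0]
      have hr1 : r ≤ 1 := hρu1
      rw [show |r - 1| = 1 - r by rw [abs_of_nonpos (by linarith)]; ring]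
      have h6 : (1-r)/r ≤ (2/3)*κ := by
        rw [div_le_iff₀ hr0]
        nlinarith
      have h7 : (0:ℝ) ≤ (1-r)/r := div_nonneg (by linarith) hr0.le
      calc |a| * ((1-r)/r) ≤ ‖w‖ * ((2/3)*κ) := mul_le_mul ha h6 h7 (norm_nonneg w)
        _ = (2/3)*κ*‖w‖ := by ring
    calc |(a - a/r) - ψh w'| ≤ |a - a/r| + |ψh w'| := abs_sub _ _
      _ ≤ (2/3)*κ*‖w‖ + 12*κ*‖w‖ := add_le_add haar hψw'
      _ ≤ 13*κ*‖w‖ := by nlinarith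
  -- extension to 𝕜
  set g : Y →L[𝕜] 𝕜 := StrongDual.extendRCLike ψh with hgdef
  have hg_norm : ‖g‖ = 1 := by rw [hgdef, StrongDual.norm_extendRCLike, hψhnorm]
  have hg_re : ∀ z, re (g z) = ψh z := by
    intro z
    rw [hgdef, StrongDual.extendRCLike_apply]
    rw [map_sub]
    simp [RCLike.mul_re, RCLike.I_re, RCLike.ofReal_im, RCLike.ofReal_re]
  clear_value g
  clear hgdef
  have hgu : g u = 1 := by
    have h1 : re (g u) = 1 := by rw [hg_re, hψhu]
    have h2 : ‖g u‖ ≤ 1 := by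
      have := g.le_opNorm u
      rw [hg_norm, hunorm, one_mul] at this
      exact this
    have h3 : re (g u) * re (g u) + im (g u) * im (g u) ≤ 1 := by
      have hnq : normSq (g u) = ‖g u‖^2 := normSq_eq_def' _
      rw [normSq_apply] at hnq
      nlinarith [norm_nonneg (g u)]
    have h4 : im (g u) = 0 := by
      have h5 : im (g u) * im (g u) ≤ 0 := by nlinarith
      exact mul_self_eq_zero.mp (le_antisymm h5 (mul_self_nonneg _))
    exact RCLike.ext (by rw [h1, RCLike.one_re]) (by rw [h4, RCLike.one_im])
  have hfg : ‖f - g‖ ≤ 14*κ := by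
    have hre_fg : ∀ z, re ((f - g) z) = ρ z - ψh z := by
      intro z
      rw [ContinuousLinearMap.sub_apply, map_sub, hρ, hg_re]
    refine (f - g).opNorm_le_bound (by positivity) (fun z => ?_)
    rcases eq_or_ne ((f - g) z) 0 with hz | hz
    · rw [hz, norm_zero]; positivity
    set σ : 𝕜 := (starRingEnd 𝕜) ((f - g) z) / (‖(f - g) z‖ : 𝕜) with hσ
    have hnz : (0:ℝ) < ‖(f - g) z‖ := norm_pos_iff.mpr hz
    have hσn : ‖σ‖ = 1 := by
      rw [hσ, norm_div, RCLike.norm_conj, RCLike.norm_ofReal, abs_of_pos hnz,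
        div_self hnz.ne']
    have happ : (f - g) (σ • z) = ((‖(f - g) z‖ : ℝ) : 𝕜) := by
      rw [map_smul, smul_eq_mul, hσ, div_mul_eq_mul_div, RCLike.conj_mul]
      rw [sq]
      rw [mul_div_assoc, div_self (by exact_mod_cast hnz.ne' : ((‖(f - g) z‖ : ℝ) : 𝕜) ≠ 0), mul_one]
    have hre2 := hre_fg (σ • z)
    rw [happ, RCLike.ofReal_re] at hre2
    have habs := hest (σ • z)
    rw [← hre2] at habs
    have hns : ‖σ • z‖ = ‖z‖ := by rw [norm_smul, hσn, one_mul]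
    rw [hns] at habs
    have := le_of_abs_le habs
    nlinarith [norm_nonneg z]
  exact ⟨u, g, hunorm, hg_norm, hgu, huy, hfg⟩


set_option maxHeartbeats 1000000 in
lemma key_lemma [CompleteSpace Y] (T : Y →L[𝕜] Y) (hT : ‖T‖ ≤ 1) (α : ℝ)
    (hv : numRadOp 𝕜 T ≤ α) {κ : ℝ} (hκ0 : 0 < κ) (hκ2 : κ ≤ 1/2)
    (y₀ : Y) (f : Y →L[𝕜] 𝕜) (hy₀ : ‖y₀‖ ≤ 1) (hf : ‖f‖ = 1)
    (hre : 1 - κ^2 < re (f y₀)) : ‖f (T y₀)‖ ≤ α + 16*κ := by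
  obtain ⟨u, g, hu, hg, hgu, huy, hfg⟩ := bpb_aux f hf y₀ hy₀ hκ0 hκ2 hre
  have hmem : ‖g (T u)‖ ∈ { r : ℝ | ∃ (y : Y) (f : Y →L[𝕜] 𝕜), ‖y‖ = 1 ∧ ‖f‖ = 1 ∧
      f y = 1 ∧ r = ‖f (T y)‖ } := ⟨u, g, hu, hg, hgu, rfl⟩
  have hbdd : BddAbove { r : ℝ | ∃ (y : Y) (f : Y →L[𝕜] 𝕜), ‖y‖ = 1 ∧ ‖f‖ = 1 ∧
      f y = 1 ∧ r = ‖f (T y)‖ } := by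
    refine ⟨1, ?_⟩
    rintro r ⟨y, f', hy, hf', -, rfl⟩
    calc ‖f' (T y)‖ ≤ ‖f'‖ * ‖T y‖ := f'.le_opNorm _
      _ ≤ 1 * (‖T‖ * ‖y‖) := by
          rw [hf', one_mul, one_mul]; exact T.le_opNorm y
      _ ≤ 1 := by rw [one_mul, hy, mul_one]; exact hT
  have hgTu : ‖g (T u)‖ ≤ α := le_trans (le_csSup hbdd hmem) hv
  have h1 : ‖f (T y₀) - f (T u)‖ ≤ κ := by
    rw [← map_sub, ← map_sub]
    calc ‖f (T (y₀ - u))‖ ≤ ‖f‖ * ‖T (y₀ - u)‖ := f.le_opNorm _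
      _ ≤ 1 * (‖T‖ * ‖y₀ - u‖) := by rw [hf, one_mul, one_mul]; exact T.le_opNorm _
      _ ≤ 1 * (1 * κ) := by
          have h2 : ‖y₀ - u‖ ≤ κ := by rwa [norm_sub_rev] at huy
          have := mul_le_mul hT h2 (norm_nonneg _) zero_le_one
          rw [one_mul, one_mul]
          exact this
      _ = κ := by ring
  have h2 : ‖f (T u) - g (T u)‖ ≤ 14*κ := by
    have h3 : f (T u) - g (T u) = (f - g) (T u) := by
      rw [ContinuousLinearMap.sub_apply]
    rw [h3]
    calc ‖(f - g) (T u)‖ ≤ ‖f - g‖ * ‖T u‖ := (f - g).le_opNorm _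
      _ ≤ (14*κ) * 1 := by
          refine mul_le_mul hfg ?_ (norm_nonneg _) (by positivity)
          calc ‖T u‖ ≤ ‖T‖ * ‖u‖ := T.le_opNorm u
            _ ≤ 1 := by rw [hu, mul_one]; exact hT
      _ = 14*κ := by ring
  calc ‖f (T y₀)‖ = ‖(f (T y₀) - f (T u)) + (f (T u) - g (T u)) + g (T u)‖ := by ring_nf
    _ ≤ ‖(f (T y₀) - f (T u)) + (f (T u) - g (T u))‖ + ‖g (T u)‖ := norm_add_le _ _
    _ ≤ ‖f (T y₀) - f (T u)‖ + ‖f (T u) - g (T u)‖ + ‖g (T u)‖ := by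
        linarith [norm_add_le (f (T y₀) - f (T u)) (f (T u) - g (T u))]
    _ ≤ κ + 14*κ + α := by linarith
    _ ≤ α + 16*κ := by linarith


end AuxLemmas

set_option maxHeartbeats 1000000 in
open RCLike in
theorem polyIndex_aux (𝕜 : Type*) [RCLike 𝕜] (X Y : Type*) [NormedAddCommGroup X] [NormedSpace 𝕜 X]
    [NormedAddCommGroup Y] [NormedSpace 𝕜 Y] [CompleteSpace X] [CompleteSpace Y]
    (k : ℕ) (Q : X → Y) (hQ : IsHomPoly 𝕜 k Q) (hQ1 : polyNorm Q = 1)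
    (α : ℝ) (hα0 : 0 ≤ α) (hα1 : α ≤ 1)
    (T : Y →L[𝕜] Y) (hsurj : Function.Surjective T) (hiso : ∀ y, ‖T y‖ = ‖y‖)
    (hv : numRadOp 𝕜 T ≤ α) :
    numRad 𝕜 Q (fun x => T (Q x)) ≤ α ∧ polyNorm (fun x => T (Q x)) = 1 ∧
      IsHomPoly 𝕜 k (fun x => T (Q x)) := by
  obtain ⟨A, hA⟩ := hQ
  have hT1 : ‖T‖ ≤ 1 := T.opNorm_le_bound zero_le_one (fun y => by rw [hiso, one_mul])
  have hQle : ∀ x : X, ‖x‖ ≤ 1 → ‖Q x‖ ≤ 1 := by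
    intro x hx
    have hbdd : BddAbove { r : ℝ | ∃ x : X, ‖x‖ ≤ 1 ∧ r = ‖Q x‖ } := by
      refine ⟨‖A‖, ?_⟩
      rintro r ⟨x', hx', rfl⟩
      calc ‖Q x'‖ = ‖A (fun _ => x')‖ := by rw [hA]
        _ ≤ ‖A‖ * ∏ _i : Fin k, ‖x'‖ := A.le_opNorm _
        _ ≤ ‖A‖ * 1 := by
            refine mul_le_mul_of_nonneg_left ?_ (norm_nonneg A)
            exact Finset.prod_le_one (fun _ _ => norm_nonneg _) (fun _ _ => hx')
        _ = ‖A‖ := mul_one _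
    have := le_csSup hbdd (show ‖Q x‖ ∈ { r : ℝ | ∃ x : X, ‖x‖ ≤ 1 ∧ r = ‖Q x‖ } from ⟨x, hx, rfl⟩)
    rwa [← polyNorm, hQ1] at this
  constructor
  · -- numRad ≤ α
    have hvq0 : ∀ δ : ℝ, 0 ≤ vQdelta 𝕜 Q (fun x => T (Q x)) δ := by
      intro δ
      apply Real.sSup_nonneg
      rintro r ⟨x, f, -, -, -, rfl⟩
      exact norm_nonneg _
    have hbddB : BddBelow { r : ℝ | ∃ δ : ℝ, 0 < δ ∧ r = vQdelta 𝕜 Q (fun x => T (Q x)) δ } := by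
      refine ⟨0, ?_⟩
      rintro r ⟨δ, -, rfl⟩
      exact hvq0 δ
    apply le_of_forall_pos_le_add
    intro ε hε
    set κ : ℝ := min (ε/16) (1/2) with hκdef
    have hκ0 : 0 < κ := lt_min (by positivity) (by norm_num)
    have hκ2 : κ ≤ 1/2 := min_le_right _ _
    have hκε : 16*κ ≤ ε := by
      have : κ ≤ ε/16 := min_le_left _ _
      linarith
    have hstep : numRad 𝕜 Q (fun x => T (Q x)) ≤ vQdelta 𝕜 Q (fun x => T (Q x)) (κ^2) :=
      csInf_le hbddB ⟨κ^2, by positivity, rfl⟩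
    have hbound : vQdelta 𝕜 Q (fun x => T (Q x)) (κ^2) ≤ α + ε := by
      apply Real.sSup_le
      · rintro r ⟨x, f, hx, hf, hrex, rfl⟩
        have hy₀ : ‖Q x‖ ≤ 1 := hQle x hx.le
        have := key_lemma T hT1 α hv hκ0 hκ2 (Q x) f hy₀ hf hrex
        linarith
      · linarith
    linarith
  constructor
  · -- polyNorm = 1
    have hset : { r : ℝ | ∃ x : X, ‖x‖ ≤ 1 ∧ r = ‖T (Q x)‖ } =
        { r : ℝ | ∃ x : X, ‖x‖ ≤ 1 ∧ r = ‖Q x‖ } := by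
      ext r
      constructor
      · rintro ⟨x, hx, rfl⟩; exact ⟨x, hx, (hiso (Q x))⟩
      · rintro ⟨x, hx, rfl⟩; exact ⟨x, hx, (hiso (Q x)).symm⟩
    rw [polyNorm, hset, ← polyNorm, hQ1]
  · exact ⟨T.compContinuousMultilinearMap A, fun x => by
      rw [ContinuousLinearMap.compContinuousMultilinearMap_coe]
      simp only [Function.comp_apply]
      rw [hA]⟩


theorem stmt_16 (𝕜 : Type*) [RCLike 𝕜] (X Y : Type*) [NormedAddCommGroup X] [NormedSpace 𝕜 X]
    [NormedAddCommGroup Y] [NormedSpace 𝕜 Y] [CompleteSpace X] [CompleteSpace Y]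
    (k : ℕ) (Q : X → Y) (hQ : IsHomPoly 𝕜 k Q) (hQ1 : polyNorm Q = 1)
    (α : ℝ) (hα0 : 0 ≤ α) (hα1 : α ≤ 1)
    (T : Y →L[𝕜] Y) (hsurj : Function.Surjective T) (hiso : ∀ y, ‖T y‖ = ‖y‖)
    (hv : numRadOp 𝕜 T ≤ α) :
    polyIndex 𝕜 k Q ≤ α := by
  obtain ⟨h1, h2, h3⟩ := polyIndex_aux 𝕜 X Y k Q hQ hQ1 α hα0 hα1 T hsurj hiso hv
  have hbdd : BddBelow { r : ℝ | ∃ P : X → Y, IsHomPoly 𝕜 k P ∧ polyNorm P = 1 ∧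
      r = numRad 𝕜 Q P } := by
    refine ⟨0, ?_⟩
    rintro r ⟨P, -, -, rfl⟩
    apply Real.sInf_nonneg
    rintro r ⟨δ, -, rfl⟩
    apply Real.sSup_nonneg
    rintro r ⟨x, f, -, -, -, rfl⟩
    exact norm_nonneg _
  have hmem : numRad 𝕜 Q (fun x => T (Q x)) ∈ { r : ℝ | ∃ P : X → Y, IsHomPoly 𝕜 k P ∧
      polyNorm P = 1 ∧ r = numRad 𝕜 Q P } := ⟨fun x => T (Q x), h3, h2, rfl⟩
  exact le_trans (csInf_le hbdd hmem) h1
end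

section
/- Let X be a finite-dimensional normed space, Y a Banach space, and Q, P continuous k-homogeneous polynomials from X to Y with ‖Q‖ = 1. Then V_Q(P) = { y*(P x) : x ∈ S_X, y* ∈ S_{Y*}, y*(Q x) = 1 }, where V_Q(P) = ⋂_{δ>0} closure{ y*(P x) : y* ∈ S_{Y*}, x ∈ S_X, Re y*(Q x) > 1 − δ }. -/
private lemma aux_mem_closedBall {𝕜 E : Type*} [RCLike 𝕜] [NormedAddCommGroup E]
    [NormedSpace 𝕜 E] (g : E →L[𝕜] 𝕜) (r : ℝ)
    (h : ‖g‖ ≤ r) : g ∈ Metric.closedBall 0 r := by simpa using h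

private lemma aux_norm_le {𝕜 E : Type*} [RCLike 𝕜] [NormedAddCommGroup E]
    [NormedSpace 𝕜 E] (g : E →L[𝕜] 𝕜) (r : ℝ)
    (h : g ∈ Metric.closedBall 0 r) : ‖g‖ ≤ r := by simpa using h

set_option maxHeartbeats 1000000 in
theorem stmt_18 (𝕜 : Type*) [RCLike 𝕜] (X Y : Type*) [NormedAddCommGroup X] [NormedSpace 𝕜 X]
    [NormedAddCommGroup Y] [NormedSpace 𝕜 Y] [FiniteDimensional 𝕜 X] [CompleteSpace Y]
    (k : ℕ) (Q P : X → Y) (hQ : IsHomPoly 𝕜 k Q) (hP : IsHomPoly 𝕜 k P)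
    (hQ1 : polyNorm Q = 1) :
    VQ 𝕜 Q P = { z : 𝕜 | ∃ (x : X) (f : Y →L[𝕜] 𝕜), ‖x‖ = 1 ∧ ‖f‖ = 1 ∧
      f (Q x) = 1 ∧ z = f (P x) } := by
  obtain ⟨A, hA⟩ := hQ
  obtain ⟨B, hB⟩ := hP
  have hQcont : Continuous Q := by
    have h1 : Continuous fun x : X => A (fun _ => x) :=
      A.cont.comp (continuous_pi fun _ => continuous_id)
    convert h1 using 1
    exact funext hA
  have hPcont : Continuous P := by
    have h1 : Continuous fun x : X => B (fun _ => x) :=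
      B.cont.comp (continuous_pi fun _ => continuous_id)
    convert h1 using 1
    exact funext hB
  -- ‖Q x‖ ≤ 1 on the unit ball
  have hQle : ∀ x : X, ‖x‖ ≤ 1 → ‖Q x‖ ≤ 1 := by
    intro x hx
    rw [← hQ1]
    apply le_csSup
    · refine ⟨‖A‖, ?_⟩
      rintro r ⟨y, hy, rfl⟩
      rw [hA]
      calc ‖A fun _ => y‖ ≤ ‖A‖ * ∏ _i : Fin k, ‖y‖ := A.le_opNorm _
        _ ≤ ‖A‖ * 1 :=
            mul_le_mul_of_nonneg_left
              (Finset.prod_le_one (fun _ _ => norm_nonneg _) (fun _ _ => hy)) A.opNorm_nonneg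
        _ = ‖A‖ := mul_one _
    · exact ⟨x, hx, rfl⟩
  haveI : ProperSpace X := FiniteDimensional.proper_rclike 𝕜 X
  ext z
  simp only [VQ, Set.mem_iInter, Set.mem_setOf_eq, Set.mem_Ioi]
  constructor
  · intro hz
    -- extract approximate sequences
    have hex : ∀ n : ℕ, ∃ (x : X) (f : Y →L[𝕜] 𝕜), ‖x‖ = 1 ∧ ‖f‖ = 1 ∧
        1 - (1 / (n + 1) : ℝ) < RCLike.re (f (Q x)) ∧ ‖f (P x) - z‖ < 1 / (n + 1) := by
      intro n
      have hpos : (0 : ℝ) < 1 / (n + 1) := by positivity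
      have h1 := hz (1 / (n + 1)) hpos
      rw [Metric.mem_closure_iff] at h1
      obtain ⟨w, ⟨x, f, hx, hf, hre, hw⟩, hdist⟩ := h1 (1 / (n + 1)) hpos
      refine ⟨x, f, hx, hf, hre, ?_⟩
      rw [← hw]
      rw [dist_comm, dist_eq_norm] at hdist
      exact hdist
    choose xs fs hxs hfs hres hzs using hex
    -- subsequence with xs converging
    have hxmem : ∀ n, xs n ∈ Metric.sphere (0 : X) 1 := by
      intro n; rw [mem_sphere_zero_iff_norm]; exact hxs n
    obtain ⟨x, hxsph, φ, hφ, hφtendsto⟩ :=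
      (isCompact_sphere (0 : X) 1).tendsto_subseq hxmem
    -- the finite-dimensional subspace W
    set W : Submodule 𝕜 Y := Submodule.span 𝕜 {Q x, P x} with hW
    haveI : FiniteDimensional 𝕜 W :=
      FiniteDimensional.span_of_finite 𝕜 (Set.toFinite _)
    have hQmem : Q x ∈ W := Submodule.subset_span (by left; rfl)
    have hPmem : P x ∈ W := Submodule.subset_span (by right; rfl)
    -- restrict the functionals to W
    set gs : ℕ → (W →L[𝕜] 𝕜) := fun n => (fs (φ n)).comp W.subtypeL with hgs
    have hgsle : ∀ n, ‖gs n‖ ≤ 1 := by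
      intro n
      refine ContinuousLinearMap.opNorm_le_bound _ zero_le_one ?_
      intro w
      calc ‖(fs (φ n)) (w : Y)‖ ≤ ‖fs (φ n)‖ * ‖(w : Y)‖ := (fs (φ n)).le_opNorm _
        _ = 1 * ‖w‖ := by rw [hfs]; rfl
    have hgsmem : ∀ n, gs n ∈ Metric.closedBall (0 : W →L[𝕜] 𝕜) 1 := by
      intro n; exact aux_mem_closedBall _ _ (hgsle n)
    haveI : ProperSpace (W →L[𝕜] 𝕜) := FiniteDimensional.proper_rclike 𝕜 _
    obtain ⟨g, hgball, ψ, hψ, hψtendsto⟩ :=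
      (isCompact_closedBall (0 : W →L[𝕜] 𝕜) 1).tendsto_subseq hgsmem
    set ρ : ℕ → ℕ := fun n => φ (ψ n) with hρ
    have hρmono : StrictMono ρ := hφ.comp hψ
    have hxρ : Filter.Tendsto (fun n => xs (ρ n)) Filter.atTop (nhds x) :=
      hφtendsto.comp hψ.tendsto_atTop
    -- pointwise convergence of gs ∘ ψ
    have hgpt : ∀ v : W, Filter.Tendsto (fun n => gs (ψ n) v) Filter.atTop (nhds (g v)) := by
      intro v
      have : Continuous fun h : W →L[𝕜] 𝕜 => h v :=
        (ContinuousLinearMap.apply 𝕜 𝕜 v).continuous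
      exact (this.tendsto g).comp hψtendsto
    -- ‖fs (ρ n)‖ = 1 is used for error bounds
    have herr : ∀ (u : X → Y), Continuous u →
        Filter.Tendsto (fun n => fs (ρ n) (u (xs (ρ n))) - fs (ρ n) (u x))
          Filter.atTop (nhds 0) := by
      intro u hu
      have h1 : Filter.Tendsto (fun n => u (xs (ρ n))) Filter.atTop (nhds (u x)) :=
        (hu.tendsto x).comp hxρ
      have hnorm : Filter.Tendsto (fun n => ‖u (xs (ρ n)) - u x‖) Filter.atTop (nhds 0) :=
        tendsto_iff_norm_sub_tendsto_zero.mp h1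
      have hb : ∀ n, ‖fs (ρ n) (u (xs (ρ n))) - fs (ρ n) (u x)‖ ≤ ‖u (xs (ρ n)) - u x‖ := by
        intro n
        rw [← map_sub]
        calc ‖fs (ρ n) (u (xs (ρ n)) - u x)‖ ≤ ‖fs (ρ n)‖ * ‖u (xs (ρ n)) - u x‖ :=
            (fs (ρ n)).le_opNorm _
          _ = ‖u (xs (ρ n)) - u x‖ := by rw [hfs, one_mul]
      rw [tendsto_zero_iff_norm_tendsto_zero]
      exact squeeze_zero (fun n => norm_nonneg _) hb hnorm
    -- fs (ρ n) (Q (xs (ρ n))) → 1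
    have haux : ∀ n : ℕ, (1 : ℝ) / (ρ n + 1) ≤ 1 / (n + 1) := by
      intro n
      refine one_div_le_one_div_of_le (by positivity) ?_
      have := hρmono.id_le n
      have h2 : (n : ℝ) ≤ (ρ n : ℝ) := by exact_mod_cast this
      linarith
    have hQ1lim : Filter.Tendsto (fun n => fs (ρ n) (Q (xs (ρ n)))) Filter.atTop (nhds 1) := by
      rw [tendsto_iff_norm_sub_tendsto_zero]
      have hb : ∀ n, ‖fs (ρ n) (Q (xs (ρ n))) - 1‖ ≤ Real.sqrt (2 / (n + 1)) := by
        intro n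
        set a := fs (ρ n) (Q (xs (ρ n))) with ha
        have h1 : ‖a‖ ≤ 1 := by
          calc ‖a‖ ≤ ‖fs (ρ n)‖ * ‖Q (xs (ρ n))‖ := (fs (ρ n)).le_opNorm _
            _ ≤ 1 * 1 := by
                refine mul_le_mul (le_of_eq (hfs _)) (hQle _ (le_of_eq (hxs _))) (norm_nonneg _)
                  zero_le_one
            _ = 1 := one_mul 1
        have h2 : 1 - (1 / (ρ n + 1) : ℝ) < RCLike.re a := hres (ρ n)
        have h3 : ‖a - 1‖ ^ 2 ≤ 2 / (n + 1) := by
          have e1 : ‖a - 1‖ ^ 2 = RCLike.re (a - 1) * RCLike.re (a - 1) +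
              RCLike.im (a - 1) * RCLike.im (a - 1) := RCLike.norm_sq_eq_def
          have e2 : ‖a‖ ^ 2 = RCLike.re a * RCLike.re a +
              RCLike.im a * RCLike.im a := RCLike.norm_sq_eq_def
          have e3 : RCLike.re (a - 1) = RCLike.re a - 1 := by simp
          have e4 : RCLike.im (a - 1) = RCLike.im a := by simp
          have h4 : ‖a‖ ^ 2 ≤ 1 := by nlinarith [norm_nonneg a]
          have h5 : (1 : ℝ) / (ρ n + 1) ≤ 1 / (n + 1) := haux n
          rw [e1, e3, e4]
          have e5 : (RCLike.re a - 1) * (RCLike.re a - 1) + RCLike.im a * RCLike.im a =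
              RCLike.re a * RCLike.re a + RCLike.im a * RCLike.im a - 2 * RCLike.re a + 1 := by
            ring
          rw [e5]
          have e6 : (2:ℝ) / (n + 1) = 2 * (1 / (n + 1)) := by ring
          rw [e6]
          linarith [e2, h4, h2, h5]
        calc ‖a - 1‖ = Real.sqrt (‖a - 1‖ ^ 2) := (Real.sqrt_sq (norm_nonneg _)).symm
          _ ≤ Real.sqrt (2 / (n + 1)) := Real.sqrt_le_sqrt h3
      have hsq : Filter.Tendsto (fun n : ℕ => Real.sqrt (2 / (n + 1))) Filter.atTop
          (nhds 0) := by
        have h0 : Filter.Tendsto (fun n : ℕ => (2 : ℝ) / (n + 1)) Filter.atTop (nhds 0) := by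
          have h2 := tendsto_one_div_add_atTop_nhds_zero_nat.const_mul (2 : ℝ)
          simpa [mul_one_div, div_eq_mul_inv] using h2
        have h1 := h0.sqrt
        rwa [Real.sqrt_zero] at h1
      exact squeeze_zero (fun n => norm_nonneg _) hb hsq
    -- fs (ρ n) (P (xs (ρ n))) → z
    have hPzlim : Filter.Tendsto (fun n => fs (ρ n) (P (xs (ρ n)))) Filter.atTop (nhds z) := by
      rw [tendsto_iff_norm_sub_tendsto_zero]
      have hb : ∀ n, ‖fs (ρ n) (P (xs (ρ n))) - z‖ ≤ 1 / (n + 1) :=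
        fun n => le_trans (le_of_lt (hzs (ρ n))) (haux n)
      exact squeeze_zero (fun n => norm_nonneg _) hb tendsto_one_div_add_atTop_nhds_zero_nat
    -- g ⟨Q x⟩ = 1
    have hgQ : g ⟨Q x, hQmem⟩ = 1 := by
      have h1 : Filter.Tendsto (fun n => fs (ρ n) (Q x)) Filter.atTop (nhds 1) := by
        have h2 := hQ1lim.sub (herr Q hQcont)
        simpa using h2
      have h4 := hgpt ⟨Q x, hQmem⟩
      have h5 : Filter.Tendsto (fun n => fs (ρ n) (Q x)) Filter.atTop (nhds (g ⟨Q x, hQmem⟩)) := by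
        refine h4.congr fun n => ?_
        simp [hgs, hρ]
      exact tendsto_nhds_unique h5 h1
    -- g ⟨P x⟩ = z
    have hgP : g ⟨P x, hPmem⟩ = z := by
      have h1 : Filter.Tendsto (fun n => fs (ρ n) (P x)) Filter.atTop (nhds z) := by
        have h2 := hPzlim.sub (herr P hPcont)
        simpa using h2
      have h4 := hgpt ⟨P x, hPmem⟩
      have h5 : Filter.Tendsto (fun n => fs (ρ n) (P x)) Filter.atTop (nhds (g ⟨P x, hPmem⟩)) := by
        refine h4.congr fun n => ?_
        simp [hgs, hρ]
      exact tendsto_nhds_unique h5 h1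
    -- extend g by Hahn–Banach
    obtain ⟨f, hfext, hfnorm⟩ := exists_extension_norm_eq W g
    have hfQ : f (Q x) = 1 := by
      have := hfext ⟨Q x, hQmem⟩
      rw [this, hgQ]
    have hxnorm : ‖x‖ = 1 := by rwa [mem_sphere_zero_iff_norm] at hxsph
    have hgle : ‖g‖ ≤ 1 := aux_norm_le _ _ hgball
    have hfnorm1 : ‖f‖ = 1 := by
      refine le_antisymm (hfnorm ▸ hgle) ?_
      have h1 : (1 : ℝ) = ‖f (Q x)‖ := by rw [hfQ]; simp
      calc (1:ℝ) = ‖f (Q x)‖ := h1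
        _ ≤ ‖f‖ * ‖Q x‖ := f.le_opNorm _
        _ ≤ ‖f‖ * 1 := mul_le_mul_of_nonneg_left (hQle x (le_of_eq hxnorm)) (norm_nonneg _)
        _ = ‖f‖ := mul_one _
    refine ⟨x, f, hxnorm, hfnorm1, hfQ, ?_⟩
    have := hfext ⟨P x, hPmem⟩
    rw [this, hgP]
  · rintro ⟨x, f, hx, hf, hfq, rfl⟩
    intro δ hδ
    apply subset_closure
    refine ⟨x, f, hx, hf, ?_, rfl⟩
    rw [hfq]
    simp only [RCLike.one_re]
    linarith
end

section
/- Let Y be a Banach space, Q a norm-one continuous k-homogeneous polynomial from a Banach space X to Y, and 0 ≤ α ≤ 1. Suppose for every ε > 0 there exists T_ε ∈ L(Y) with classical numerical radius v(T_ε) ≤ α and ‖T_ε ∘ Q‖ > 1 − ε. Then n_Q^{(k)}(X, Y) ≤ α. -/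
set_option maxHeartbeats 1000000


section myAux

open NormedSpace Filter Topology Set Metric RCLike

variable {𝕜 : Type*} [RCLike 𝕜] {Y : Type*} [NormedAddCommGroup Y] [NormedSpace 𝕜 Y]

noncomputable instance myRatAlg : NormedAlgebra ℚ (Y →L[𝕜] Y) :=
  NormedAlgebra.restrictScalars ℚ 𝕜 _

/-- Convexity of the norm along a ray: the difference quotient is monotone. -/
lemma aux_slope (u w : Y) {h h₁ : ℝ} (hh : 0 < h) (hle : h ≤ h₁) :
    ‖u + (h : 𝕜) • w‖ ≤ ‖u‖ + (h / h₁) * (‖u + (h₁ : 𝕜) • w‖ - ‖u‖) := by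
  have h₁pos : 0 < h₁ := hh.trans_le hle
  have key : u + (h : 𝕜) • w
      = ((1 - h / h₁ : ℝ) : 𝕜) • u + ((h / h₁ : ℝ) : 𝕜) • (u + (h₁ : 𝕜) • w) := by
    rw [smul_add, smul_smul, ← RCLike.ofReal_mul, div_mul_cancel₀ _ h₁pos.ne', ← add_assoc,
      ← add_smul, ← RCLike.ofReal_add]
    have : (1 - h / h₁) + h / h₁ = 1 := by ring
    rw [this, RCLike.ofReal_one, one_smul]
  have hq0 : 0 ≤ h / h₁ := le_of_lt (div_pos hh h₁pos)
  have hq1 : h / h₁ ≤ 1 := div_le_one_of_le₀ hle h₁pos.le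
  calc ‖u + (h : 𝕜) • w‖
      = ‖((1 - h / h₁ : ℝ) : 𝕜) • u + ((h / h₁ : ℝ) : 𝕜) • (u + (h₁ : 𝕜) • w)‖ := by rw [← key]
    _ ≤ ‖((1 - h / h₁ : ℝ) : 𝕜) • u‖ + ‖((h / h₁ : ℝ) : 𝕜) • (u + (h₁ : 𝕜) • w)‖ :=
        norm_add_le _ _
    _ = (1 - h / h₁) * ‖u‖ + (h / h₁) * ‖u + (h₁ : 𝕜) • w‖ := by
        rw [norm_smul, norm_smul, RCLike.norm_ofReal, RCLike.norm_ofReal,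
          abs_of_nonneg (by linarith), abs_of_nonneg hq0]
    _ = ‖u‖ + (h / h₁) * (‖u + (h₁ : 𝕜) • w‖ - ‖u‖) := by ring

/-- Pointwise upper bound on the right derivative of the norm along the orbit, via
Banach–Alaoglu and Hahn–Banach (exact states). -/
lemma aux_normDeriv [CompleteSpace Y] {S : Y →L[𝕜] Y} {μ : ℝ}
    (Hμ : ∀ (y : Y) (f : Y →L[𝕜] 𝕜), ‖y‖ = 1 → ‖f‖ = 1 → f y = 1 → ‖f (S y)‖ ≤ μ)
    {u : Y} (hu : u ≠ 0) {r : ℝ} (hr0 : 0 < r) (hr : μ * ‖u‖ < r) :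
    ∃ h : ℝ, 0 < h ∧ ‖u + (h : 𝕜) • S u‖ < ‖u‖ + h * r := by
  by_contra hcon
  push_neg at hcon
  have hupos : 0 < ‖u‖ := norm_pos_iff.2 hu
  set z : ℕ → Y := fun n => u + ((1 / (n + 1) : ℝ) : 𝕜) • S u with hzdef
  have hp : ∀ n : ℕ, 0 < (1 / ((n : ℝ) + 1)) := fun n => by positivity
  have hznorm : ∀ n : ℕ, ‖u‖ + (1 / ((n : ℝ) + 1)) * r ≤ ‖z n‖ := fun n => hcon _ (hp n)
  have hzn : ∀ n, z n ≠ 0 := by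
    intro n h0
    have h1 := hznorm n
    rw [h0, norm_zero] at h1
    nlinarith [mul_pos (hp n) hr0]
  choose f hf1 hf2 using fun n => exists_dual_vector 𝕜 (z n) (norm_ne_zero_iff.2 (hzn n))
  have hkey : ∀ n : ℕ, (f n) u = ((‖z n‖ : ℝ) : 𝕜) - ((1 / ((n : ℝ) + 1) : ℝ) : 𝕜) * (f n) (S u) := by
    intro n
    have h1 : (f n) (z n) = (f n) u + ((1 / ((n : ℝ) + 1) : ℝ) : 𝕜) * (f n) (S u) := by
      rw [hzdef]
      simp [map_add, map_smul, smul_eq_mul]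
    have h2 := hf2 n
    rw [h1] at h2
    rw [← h2]; ring
  have hre : ∀ n : ℕ, re ((f n) u) = ‖z n‖ - (1 / ((n : ℝ) + 1)) * re ((f n) (S u)) := by
    intro n
    rw [hkey n, map_sub, RCLike.ofReal_re, RCLike.re_ofReal_mul]
  have hfSu : ∀ n : ℕ, ‖(f n) (S u)‖ ≤ ‖S u‖ := by
    intro n
    calc ‖(f n) (S u)‖ ≤ ‖f n‖ * ‖S u‖ := (f n).le_opNorm _
      _ = ‖S u‖ := by rw [hf1 n, one_mul]
  have hnormfu : ∀ n : ℕ, ‖(f n) u‖ ≤ ‖u‖ := by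
    intro n
    calc ‖(f n) u‖ ≤ ‖f n‖ * ‖u‖ := (f n).le_opNorm _
      _ = ‖u‖ := by rw [hf1 n, one_mul]
  have hreub : ∀ n : ℕ, re ((f n) u) ≤ ‖u‖ := fun n => (RCLike.re_le_norm _).trans (hnormfu n)
  have hrelb : ∀ n : ℕ, ‖u‖ + (1 / ((n : ℝ) + 1)) * (r - ‖S u‖) ≤ re ((f n) u) := by
    intro n
    have h1 : re ((f n) (S u)) ≤ ‖S u‖ := (RCLike.re_le_norm _).trans (hfSu n)
    have h3 := hznorm n
    rw [hre n]
    nlinarith [hp n]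
  have hClaim2 : ∀ n : ℕ, r ≤ re ((f n) (S u)) := by
    intro n
    have h2 := hreub n
    have h3 := hznorm n
    have h4 := hre n
    have h5 : (1 / ((n : ℝ) + 1)) * r ≤ (1 / ((n : ℝ) + 1)) * re ((f n) (S u)) := by nlinarith
    exact le_of_mul_le_mul_left h5 (hp n)
  -- convergence of (f n) u to ‖u‖
  have hC : ∀ n : ℕ, ‖u‖ - re ((f n) u) ≤ (1 / ((n : ℝ) + 1)) * |‖S u‖ - r| := by
    intro n
    have h1 := hrelb n
    have h2 : (1 / ((n : ℝ) + 1)) * (‖S u‖ - r) ≤ (1 / ((n : ℝ) + 1)) * |‖S u‖ - r| := by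
      have := le_abs_self (‖S u‖ - r)
      nlinarith [hp n]
    nlinarith
  have hsq : ∀ n : ℕ, ‖(f n) u - ((‖u‖ : ℝ) : 𝕜)‖ ^ 2 ≤ 4 * ‖u‖ * (‖u‖ - re ((f n) u)) := by
    intro n
    have h1 : ‖(f n) u - ((‖u‖ : ℝ) : 𝕜)‖ ^ 2
        = (re ((f n) u) - ‖u‖) ^ 2 + (im ((f n) u)) ^ 2 := by
      rw [RCLike.norm_sq_eq_def, map_sub, map_sub, RCLike.ofReal_re, RCLike.ofReal_im]
      ring
    have h2 : ‖(f n) u‖ ^ 2 = (re ((f n) u)) ^ 2 + (im ((f n) u)) ^ 2 := by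
      rw [RCLike.norm_sq_eq_def]; ring
    have h3 : ‖(f n) u‖ ^ 2 ≤ ‖u‖ ^ 2 := by
      have := hnormfu n
      nlinarith [norm_nonneg ((f n) u)]
    have h4 := hreub n
    nlinarith [norm_nonneg u]
  have htendfu : Tendsto (fun n => (f n) u) atTop (𝓝 ((‖u‖ : ℝ) : 𝕜)) := by
    rw [tendsto_iff_norm_sub_tendsto_zero]
    have hb : ∀ n : ℕ, ‖(f n) u - ((‖u‖ : ℝ) : 𝕜)‖
        ≤ Real.sqrt (4 * ‖u‖ * |‖S u‖ - r| * (1 / ((n : ℝ) + 1))) := by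
      intro n
      rw [← Real.sqrt_sq (norm_nonneg ((f n) u - _))]
      apply Real.sqrt_le_sqrt
      have h1 := hsq n
      have h2 := hC n
      nlinarith [norm_nonneg u, hp n, abs_nonneg (‖S u‖ - r)]
    apply squeeze_zero (fun n => norm_nonneg _) hb
    have h1 : Tendsto (fun n : ℕ => 4 * ‖u‖ * |‖S u‖ - r| * (1 / ((n : ℝ) + 1))) atTop (𝓝 0) := by
      simpa using tendsto_one_div_add_atTop_nhds_zero_nat.const_mul (4 * ‖u‖ * |‖S u‖ - r|)
    have h2 : Tendsto Real.sqrt (𝓝 0) (𝓝 0) := by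
      simpa using Real.continuous_sqrt.tendsto 0
    exact h2.comp h1
  -- Banach–Alaoglu cluster point
  have hK := WeakDual.isCompact_closedBall (𝕜 := 𝕜) (E := Y) 0 1
  set F : ℕ → WeakDual 𝕜 Y := fun n => StrongDual.toWeakDual (f n) with hFdef
  have hmemK : ∀ n, F n ∈ WeakDual.toStrongDual (𝕜 := 𝕜) (E := Y) ⁻¹' Metric.closedBall 0 1 := by
    intro n
    simp only [Set.mem_preimage, Metric.mem_closedBall, dist_zero_right]
    rw [show ‖WeakDual.toStrongDual (F n)‖ = ‖f n‖ from rfl, hf1 n]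
  have hle : Filter.map F atTop ≤
      𝓟 (WeakDual.toStrongDual (𝕜 := 𝕜) (E := Y) ⁻¹' Metric.closedBall 0 1) :=
    le_principal_iff.2 (Filter.mem_map.2 (Filter.univ_mem' hmemK))
  obtain ⟨φ, hφK, hφ⟩ := hK.exists_clusterPt hle
  have hφnorm : ‖WeakDual.toStrongDual φ‖ ≤ 1 := by
    have h0 := hφK
    simpa only [Set.mem_preimage, Metric.mem_closedBall, dist_zero_right] using h0
  have hevalu : ClusterPt (φ u) (Filter.map (fun n => (f n) u) atTop) := by
    have hcont : ContinuousAt (fun ψ : WeakDual 𝕜 Y => ψ u) φ :=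
      (WeakDual.eval_continuous u).continuousAt
    have h1 := hφ.map hcont (tendsto_map (f := fun ψ : WeakDual 𝕜 Y => ψ u))
    rwa [Filter.map_map] at h1
  have hu_eq : φ u = ((‖u‖ : ℝ) : 𝕜) := by
    apply eq_of_nhds_neBot
    exact hevalu.mono htendfu
  have hevalS : ClusterPt (re (φ (S u))) (Filter.map (fun n => re ((f n) (S u))) atTop) := by
    have hcont : ContinuousAt (fun ψ : WeakDual 𝕜 Y => re (ψ (S u))) φ :=
      (RCLike.continuous_re.comp (WeakDual.eval_continuous (S u))).continuousAt
    have h1 := hφ.map hcont (tendsto_map (f := fun ψ : WeakDual 𝕜 Y => re (ψ (S u))))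
    rwa [Filter.map_map] at h1
  have hre_ge : r ≤ re (φ (S u)) := by
    have h1 : Filter.map (fun n => re ((f n) (S u))) atTop ≤ 𝓟 (Ici r) :=
      le_principal_iff.2 (Filter.mem_map.2 (Filter.univ_mem' fun n => hClaim2 n))
    have h2 := hevalS.mono h1
    have h3 := mem_closure_iff_clusterPt.2 h2
    rwa [IsClosed.closure_eq isClosed_Ici] at h3
  -- exact state
  set g : Y →L[𝕜] 𝕜 := WeakDual.toStrongDual φ with hgdef
  have hgu : g u = ((‖u‖ : ℝ) : 𝕜) := hu_eq
  set v : Y := ((‖u‖⁻¹ : ℝ) : 𝕜) • u with hvdef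
  have hvnorm : ‖v‖ = 1 := by
    rw [hvdef, norm_smul, RCLike.norm_ofReal, abs_of_nonneg (inv_nonneg.2 (norm_nonneg u)),
      inv_mul_cancel₀ hupos.ne']
  have hgv : g v = 1 := by
    rw [hvdef, map_smul, smul_eq_mul, hgu, ← RCLike.ofReal_mul, inv_mul_cancel₀ hupos.ne',
      RCLike.ofReal_one]
  have hgnorm : ‖g‖ = 1 := by
    refine le_antisymm hφnorm ?_
    have h1 := g.le_opNorm v
    rw [hgv, hvnorm, mul_one] at h1
    simpa using h1
  have hfin := Hμ v g hvnorm hgnorm hgv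
  have hSv : g (S v) = ((‖u‖⁻¹ : ℝ) : 𝕜) * g (S u) := by
    rw [hvdef, map_smul, map_smul, smul_eq_mul]
  rw [hSv, norm_mul, RCLike.norm_ofReal, abs_of_nonneg (inv_nonneg.2 (norm_nonneg u))] at hfin
  have h9 : ‖g (S u)‖ ≤ μ * ‖u‖ := by
    have h10 := mul_le_mul_of_nonneg_left hfin hupos.le
    rw [← mul_assoc, mul_inv_cancel₀ hupos.ne', one_mul] at h10
    linarith
  have h10 : re (φ (S u)) ≤ ‖g (S u)‖ := RCLike.re_le_norm _
  linarith

/-- Semigroup bound: `‖e^{tS} y‖ ≤ e^{μ t} ‖y‖` where `μ` dominates the (exact-state)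
numerical range of `S`. -/
lemma aux_expBound [CompleteSpace Y] {S : Y →L[𝕜] Y} {μ : ℝ} (hμ0 : 0 ≤ μ)
    (Hμ : ∀ (y : Y) (f : Y →L[𝕜] 𝕜), ‖y‖ = 1 → ‖f‖ = 1 → f y = 1 → ‖f (S y)‖ ≤ μ)
    (y : Y) {t : ℝ} (ht : 0 ≤ t) :
    ‖exp ((t : 𝕜) • S) y‖ ≤ Real.exp (μ * t) * ‖y‖ := by
  rcases eq_or_ne y 0 with rfl | hy
  · simp [map_zero]
  have hinj : ∀ s : ℝ, exp ((s : 𝕜) • S) y ≠ 0 := by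
    intro s h0
    have hcomm : Commute (((-s : ℝ) : 𝕜) • S) (((s : ℝ) : 𝕜) • S) :=
      ((Commute.refl S).smul_left _).smul_right _
    have h1 : exp (((-s : ℝ) : 𝕜) • S) * exp (((s : ℝ) : 𝕜) • S) = 1 := by
      rw [← exp_add_of_commute hcomm]
      have h2 : ((-s : ℝ) : 𝕜) • S + ((s : ℝ) : 𝕜) • S = 0 := by
        rw [← add_smul, ← RCLike.ofReal_add]
        norm_num
      rw [h2, exp_zero]
    have h3 := congrArg (fun A : Y →L[𝕜] Y => A y) h1
    simp only [ContinuousLinearMap.mul_apply, ContinuousLinearMap.one_apply] at h3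
    rw [h0, map_zero] at h3
    exact hy h3.symm
  have hcont : ContinuousOn (fun s : ℝ => ‖exp ((s : 𝕜) • S) y‖) (Icc 0 t) := by
    have c1 : Continuous fun s : ℝ => ((s : ℝ) : 𝕜) • S :=
      by fun_prop
    have c2 : Continuous fun A : Y →L[𝕜] Y => A y :=
      (ContinuousLinearMap.apply 𝕜 Y y).continuous
    exact ((c2.comp (exp_continuous.comp c1)).norm).continuousOn
  have hfreq : ∀ x ∈ Ico 0 t, ∀ r, μ * ‖exp ((x : 𝕜) • S) y‖ < r →
      ∃ᶠ z in 𝓝[>] x, (z - x)⁻¹ * (‖exp ((z : 𝕜) • S) y‖ - ‖exp ((x : 𝕜) • S) y‖) < r := by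
    intro x _ r hrgt
    set u := exp ((x : 𝕜) • S) y with hudef
    have hune : u ≠ 0 := hinj x
    have hupos : 0 < ‖u‖ := norm_pos_iff.2 hune
    set r' := (μ * ‖u‖ + r) / 2 with hr'def
    have hr'1 : μ * ‖u‖ < r' := by rw [hr'def]; linarith
    have hr'2 : r' < r := by rw [hr'def]; linarith
    have hr'0 : 0 < r' := lt_of_le_of_lt (by positivity) hr'1
    obtain ⟨h₁, hh₁, hslope⟩ := aux_normDeriv Hμ hune hr'0 hr'1
    have hlo := (hasFDerivAt_exp_zero (𝕂 := 𝕜) (𝔸 := Y →L[𝕜] Y)).isLittleO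
    set c₀ := (r - r') / (‖S‖ * ‖u‖ + 1) with hc₀def
    have hc₀pos : 0 < c₀ := div_pos (by linarith) (by positivity)
    have hev : ∀ᶠ A : (Y →L[𝕜] Y) in 𝓝 0, ‖exp A - 1 - A‖ ≤ c₀ * ‖A‖ := by
      have h1 := hlo.def hc₀pos
      simpa [exp_zero] using h1
    have hpath : Tendsto (fun h : ℝ => ((h : ℝ) : 𝕜) • S) (𝓝[>] 0) (𝓝 0) := by
      have h1 : Tendsto (fun h : ℝ => ((h : ℝ) : 𝕜) • S) (𝓝 0) (𝓝 0) := by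
        have h2 := (show Continuous (fun h : ℝ => ((h : ℝ) : 𝕜) • S) by fun_prop).tendsto (0 : ℝ)
        simpa using h2
      exact h1.mono_left nhdsWithin_le_nhds
    have hev2 : ∀ᶠ h : ℝ in 𝓝[>] (0 : ℝ),
        ‖exp (((h : ℝ) : 𝕜) • S) - 1 - ((h : ℝ) : 𝕜) • S‖ ≤ c₀ * (h * ‖S‖) := by
      filter_upwards [hpath.eventually hev, self_mem_nhdsWithin] with h hh hh0
      have hns : ‖((h : ℝ) : 𝕜) • S‖ = h * ‖S‖ := by
        rw [show ‖((h : ℝ) : 𝕜) • S‖ = ‖((h : ℝ) : 𝕜)‖ * ‖S‖ from norm_smul ((h : ℝ) : 𝕜) S,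
          RCLike.norm_ofReal, abs_of_pos hh0]
      rwa [hns] at hh
    have hsmall : ∀ᶠ h : ℝ in 𝓝[>] (0 : ℝ), h ≤ h₁ := by
      have h1 : ∀ᶠ h in 𝓝 (0 : ℝ), h < h₁ := eventually_lt_nhds hh₁
      exact (h1.mono fun h hh => hh.le).filter_mono nhdsWithin_le_nhds
    have hquot : ∀ᶠ h : ℝ in 𝓝[>] (0 : ℝ),
        h⁻¹ * (‖exp (((x + h : ℝ) : 𝕜) • S) y‖ - ‖u‖) < r := by
      filter_upwards [hev2, hsmall, self_mem_nhdsWithin] with h hE hle h0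
      have hsplit : exp (((x + h : ℝ) : 𝕜) • S) y = exp ((h : 𝕜) • S) u := by
        have hcomm : Commute ((h : 𝕜) • S) ((x : 𝕜) • S) :=
          ((Commute.refl S).smul_left _).smul_right _
        have h1 : ((x + h : ℝ) : 𝕜) • S = (h : 𝕜) • S + (x : 𝕜) • S := by
          rw [← add_smul]
          congr 1
          push_cast
          ring
        rw [h1, exp_add_of_commute hcomm, ContinuousLinearMap.mul_apply, hudef]
      have hb1 : ‖exp ((h : 𝕜) • S) u‖
          ≤ ‖u + (h : 𝕜) • S u‖ + c₀ * (h * ‖S‖) * ‖u‖ := by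
        have h1 : exp ((h : 𝕜) • S) u
            = (u + (h : 𝕜) • S u) + (exp ((h : 𝕜) • S) - 1 - (h : 𝕜) • S) u := by
          simp only [ContinuousLinearMap.sub_apply, ContinuousLinearMap.one_apply,
            ContinuousLinearMap.smul_apply]
          abel
        rw [h1]
        refine (norm_add_le _ _).trans ?_
        have h2 : ‖(exp ((h : 𝕜) • S) - 1 - (h : 𝕜) • S) u‖ ≤ c₀ * (h * ‖S‖) * ‖u‖ := by
          refine (ContinuousLinearMap.le_opNorm _ _).trans ?_
          exact mul_le_mul_of_nonneg_right hE (norm_nonneg u)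
        linarith
      have hb2 : ‖u + (h : 𝕜) • S u‖ < ‖u‖ + h * r' := by
        have h1 := aux_slope (𝕜 := 𝕜) u (S u) h0 hle
        have h2 : (h / h₁) * (‖u + (h₁ : 𝕜) • S u‖ - ‖u‖) < (h / h₁) * (h₁ * r') := by
          have hq : 0 < h / h₁ := div_pos h0 hh₁
          have h3 : ‖u + (h₁ : 𝕜) • S u‖ - ‖u‖ < h₁ * r' := by linarith
          exact mul_lt_mul_of_pos_left h3 hq
        have h4 : (h / h₁) * (h₁ * r') = h * r' := by
          field_simp
          try ring
        linarith
      have hc₀r : c₀ * (h * ‖S‖) * ‖u‖ ≤ h * (r - r') := by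
        have h1 : c₀ * (‖S‖ * ‖u‖) ≤ r - r' := by
          rw [hc₀def, div_mul_eq_mul_div, div_le_iff₀ (by positivity)]
          nlinarith [norm_nonneg S, norm_nonneg u]
        calc c₀ * (h * ‖S‖) * ‖u‖ = h * (c₀ * (‖S‖ * ‖u‖)) := by ring
          _ ≤ h * (r - r') := mul_le_mul_of_nonneg_left h1 h0.le
      rw [hsplit]
      have htotal : ‖exp ((h : 𝕜) • S) u‖ - ‖u‖ < h * r := by
        calc ‖exp ((h : 𝕜) • S) u‖ - ‖u‖
            ≤ ‖u + (h : 𝕜) • S u‖ + c₀ * (h * ‖S‖) * ‖u‖ - ‖u‖ := by linarith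
          _ < h * r' + h * (r - r') := by linarith
          _ = h * r := by ring
      rw [inv_mul_eq_div, div_lt_iff₀ h0]
      linarith
    have hmap : Tendsto (fun z : ℝ => z - x) (𝓝[>] x) (𝓝[>] 0) := by
      apply tendsto_nhdsWithin_of_tendsto_nhds_of_eventually_within
      · have h1 : Tendsto (fun z : ℝ => z - x) (𝓝 x) (𝓝 (x - x)) :=
          (continuous_id.sub continuous_const).tendsto x
        rw [sub_self] at h1
        exact h1.mono_left nhdsWithin_le_nhds
      · filter_upwards [self_mem_nhdsWithin] with z hz
        exact sub_pos.2 (Set.mem_Ioi.1 hz)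
    have hfin := hmap.eventually hquot
    refine (hfin.mono ?_).frequently
    intro z hz
    have h1 : x + (z - x) = z := by ring
    rwa [h1] at hz
  have ha0 : ‖exp (((0 : ℝ) : 𝕜) • S) y‖ ≤ ‖y‖ := by
    norm_num [exp_zero]
  have hbound : ∀ x ∈ Ico (0 : ℝ) t, μ * ‖exp ((x : 𝕜) • S) y‖
      ≤ μ * ‖exp ((x : 𝕜) • S) y‖ + 0 := fun x _ => by rw [add_zero]
  have key := le_gronwallBound_of_liminf_deriv_right_le
    (f := fun s : ℝ => ‖exp ((s : 𝕜) • S) y‖)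
    (f' := fun s : ℝ => μ * ‖exp ((s : 𝕜) • S) y‖)
    (δ := ‖y‖) (K := μ) (ε := 0) (a := 0) (b := t)
    hcont hfreq ha0 hbound
  have h1 := key t (right_mem_Icc.2 ht)
  rw [sub_zero, gronwallBound_ε0] at h1
  linarith [h1]

/-- Approximate states see at most the numerical radius, up to `ε`. -/
lemma aux_approx [CompleteSpace Y] (T : Y →L[𝕜] Y) {ε : ℝ} (hε : 0 < ε) :
    ∃ δ : ℝ, 0 < δ ∧ ∀ (y : Y) (f : Y →L[𝕜] 𝕜), ‖y‖ ≤ 1 → ‖f‖ = 1 →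
      1 - δ < RCLike.re (f y) → ‖f (T y)‖ ≤ numRadOp 𝕜 T + ε := by
  set μ := numRadOp 𝕜 T with hμdef
  have hbddT : BddAbove {r : ℝ | ∃ (y : Y) (f : Y →L[𝕜] 𝕜),
      ‖y‖ = 1 ∧ ‖f‖ = 1 ∧ f y = 1 ∧ r = ‖f (T y)‖} := by
    refine ⟨‖T‖, ?_⟩
    rintro r ⟨y, f, hy, hf, -, rfl⟩
    calc ‖f (T y)‖ ≤ ‖f‖ * ‖T y‖ := f.le_opNorm _
      _ ≤ 1 * (‖T‖ * ‖y‖) := by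
          rw [hf]
          exact mul_le_mul_of_nonneg_left (T.le_opNorm y) zero_le_one
      _ = ‖T‖ := by rw [hy]; ring
  have hμ0 : 0 ≤ μ := by
    apply Real.sSup_nonneg
    rintro r ⟨y, f, _, _, _, rfl⟩
    positivity
  have HμT : ∀ (y : Y) (f : Y →L[𝕜] 𝕜), ‖y‖ = 1 → ‖f‖ = 1 → f y = 1 → ‖f (T y)‖ ≤ μ :=
    fun y f hy hf hfy => le_csSup hbddT ⟨y, f, hy, hf, hfy, rfl⟩
  set η := ε / 2 with hηdef
  have hηpos : 0 < η := by positivity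
  -- event 1 : real exponential bound
  have hder : HasDerivAt (fun s : ℝ => Real.exp (μ * s)) μ 0 := by
    have h1 : HasDerivAt (fun s : ℝ => μ * s) μ 0 := by
      simpa using (hasDerivAt_id (0 : ℝ)).const_mul μ
    simpa using h1.exp
  have hev1 : ∀ᶠ s in 𝓝[>] (0 : ℝ), Real.exp (μ * s) - 1 < s * (μ + η / 2) := by
    have hslope := hasDerivAt_iff_tendsto_slope.1 hder
    have h2 : ∀ᶠ s in 𝓝[≠] (0 : ℝ),
        slope (fun s : ℝ => Real.exp (μ * s)) 0 s < μ + η / 2 :=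
      hslope.eventually (Filter.Tendsto.eventually_lt_const (by linarith) tendsto_id)
    have hsub : (Set.Ioi (0 : ℝ)) ⊆ {(0 : ℝ)}ᶜ := fun s hs => ne_of_gt hs
    have h3 := h2.filter_mono (nhdsWithin_mono 0 hsub)
    filter_upwards [h3, self_mem_nhdsWithin] with s hs hs0
    rw [slope_def_field] at hs
    have h4 : (Real.exp (μ * s) - Real.exp (μ * 0)) / (s - 0) < μ + η / 2 := hs
    rw [mul_zero, Real.exp_zero, sub_zero] at h4
    have h5 := (div_lt_iff₀ hs0).1 h4
    linarith
  -- event 2 : operator exponential remainder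
  have hlo := (hasFDerivAt_exp_zero (𝕂 := 𝕜) (𝔸 := Y →L[𝕜] Y)).isLittleO
  set c₀ := η / (2 * (‖T‖ + 1)) with hc₀def
  have hc₀pos : 0 < c₀ := by positivity
  have hev : ∀ᶠ A : (Y →L[𝕜] Y) in 𝓝 0, ‖exp A - 1 - A‖ ≤ c₀ * ‖A‖ := by
    have h1 := hlo.def hc₀pos
    simpa [exp_zero] using h1
  obtain ⟨ρ, hρpos, hρ⟩ := Metric.eventually_nhds_iff.1 hev
  have hev3 : ∀ᶠ s in 𝓝[>] (0 : ℝ), s * ‖T‖ < ρ := by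
    have h1 : Tendsto (fun s : ℝ => s * ‖T‖) (𝓝 0) (𝓝 0) := by
      simpa using (continuous_mul_right ‖T‖).tendsto (0 : ℝ)
    exact (h1.eventually (Filter.Tendsto.eventually_lt_const hρpos tendsto_id)).filter_mono
      nhdsWithin_le_nhds
  obtain ⟨t, htex⟩ := ((hev1.and hev3).and self_mem_nhdsWithin).exists
  obtain ⟨⟨ht1, ht2⟩, htpos⟩ := htex
  refine ⟨t * η, by positivity, ?_⟩
  intro y f hy hf hre
  set z := f (T y) with hzdef
  by_cases hz0 : z = 0
  · rw [hz0, norm_zero]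
    linarith
  set θ : 𝕜 := ((‖z‖ : ℝ) : 𝕜) / z with hθdef
  have hθn : ‖θ‖ = 1 := by
    rw [hθdef, norm_div, RCLike.norm_ofReal, abs_of_nonneg (norm_nonneg _)]
    exact div_self (norm_ne_zero_iff.2 hz0)
  have hθz : θ * z = ((‖z‖ : ℝ) : 𝕜) := div_mul_cancel₀ _ hz0
  set S := θ • T with hSdef
  have hSnorm : ‖S‖ = ‖T‖ := by
    rw [hSdef, show ‖θ • T‖ = ‖θ‖ * ‖T‖ from norm_smul θ T, hθn, one_mul]
  have HμS : ∀ (y' : Y) (f' : Y →L[𝕜] 𝕜), ‖y'‖ = 1 → ‖f'‖ = 1 → f' y' = 1 →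
      ‖f' (S y')‖ ≤ μ := by
    intro y' f' h1 h2 h3
    have h4 : f' (S y') = θ * f' (T y') := by
      rw [hSdef, ContinuousLinearMap.smul_apply, map_smul, smul_eq_mul]
    rw [h4, norm_mul, hθn, one_mul]
    exact HμT y' f' h1 h2 h3
  have hexp := aux_expBound hμ0 HμS y htpos.le
  have hnts : ‖(t : 𝕜) • S‖ = t * ‖T‖ := by
    rw [show ‖(t : 𝕜) • S‖ = ‖((t : ℝ) : 𝕜)‖ * ‖S‖ from norm_smul ((t : ℝ) : 𝕜) S,
      RCLike.norm_ofReal, abs_of_pos htpos, hSnorm]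
  have hEop : ‖exp ((t : 𝕜) • S) - 1 - (t : 𝕜) • S‖ ≤ c₀ * (t * ‖T‖) := by
    have h1 : dist ((t : 𝕜) • S) 0 < ρ := by
      rw [dist_zero_right, hnts]
      exact ht2
    have h2 := hρ h1
    rwa [hnts] at h2
  have hb : ‖y + (t : 𝕜) • S y‖ ≤ 1 + t * (μ + η) := by
    have hsplit : y + (t : 𝕜) • S y
        = exp ((t : 𝕜) • S) y - (exp ((t : 𝕜) • S) - 1 - (t : 𝕜) • S) y := by
      simp only [ContinuousLinearMap.sub_apply, ContinuousLinearMap.one_apply,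
        ContinuousLinearMap.smul_apply]
      abel
    rw [hsplit]
    refine (norm_sub_le _ _).trans ?_
    have h6 : ‖(exp ((t : 𝕜) • S) - 1 - (t : 𝕜) • S) y‖ ≤ c₀ * (t * ‖T‖) := by
      refine (ContinuousLinearMap.le_opNorm _ _).trans ?_
      calc ‖exp ((t : 𝕜) • S) - 1 - (t : 𝕜) • S‖ * ‖y‖ ≤ (c₀ * (t * ‖T‖)) * 1 := by
            exact mul_le_mul hEop hy (norm_nonneg y) (by positivity)
        _ = c₀ * (t * ‖T‖) := mul_one _
    have h7 : ‖exp ((t : 𝕜) • S) y‖ ≤ Real.exp (μ * t) := by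
      refine hexp.trans ?_
      calc Real.exp (μ * t) * ‖y‖ ≤ Real.exp (μ * t) * 1 :=
            mul_le_mul_of_nonneg_left hy (Real.exp_pos _).le
        _ = Real.exp (μ * t) := mul_one _
    have h8 : Real.exp (μ * t) ≤ 1 + t * (μ + η / 2) := by linarith [ht1]
    have h9 : c₀ * (t * ‖T‖) ≤ t * (η / 2) := by
      rw [hc₀def, div_mul_eq_mul_div, div_le_iff₀ (by positivity)]
      nlinarith [norm_nonneg T, htpos.le, hηpos.le]
    linarith
  have h11 : RCLike.re (f (y + (t : 𝕜) • S y)) = RCLike.re (f y) + t * ‖z‖ := by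
    have h1 : f ((t : 𝕜) • S y) = (t : 𝕜) * (θ * z) := by
      rw [map_smul, smul_eq_mul, hSdef, ContinuousLinearMap.smul_apply, map_smul, smul_eq_mul,
        ← hzdef]
    rw [map_add, map_add, h1, hθz, ← RCLike.ofReal_mul, RCLike.ofReal_re]
  have h12 : RCLike.re (f (y + (t : 𝕜) • S y)) ≤ 1 + t * (μ + η) := by
    refine (RCLike.re_le_norm _).trans ?_
    refine (f.le_opNorm _).trans ?_
    rw [hf, one_mul]
    exact hb
  have h13 : t * ‖z‖ < t * (μ + 2 * η) := by
    have h15 : RCLike.re (f y) + t * ‖z‖ ≤ 1 + t * (μ + η) := by rw [← h11]; exact h12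
    linarith
  have h14 : ‖z‖ ≤ μ + 2 * η := (lt_of_mul_lt_mul_left h13 htpos.le).le
  calc ‖z‖ ≤ μ + 2 * η := h14
    _ = μ + ε := by rw [hηdef]; ring

end myAux

theorem stmt_19 (𝕜 : Type*) [RCLike 𝕜] (X Y : Type*) [NormedAddCommGroup X] [NormedSpace 𝕜 X]
    [NormedAddCommGroup Y] [NormedSpace 𝕜 Y] [CompleteSpace X] [CompleteSpace Y]
    (k : ℕ) (Q : X → Y) (hQ : IsHomPoly 𝕜 k Q) (hQ1 : polyNorm Q = 1)
    (α : ℝ) (hα0 : 0 ≤ α) (hα1 : α ≤ 1)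
    (hT : ∀ ε : ℝ, 0 < ε → ∃ T : Y →L[𝕜] Y, numRadOp 𝕜 T ≤ α ∧
      1 - ε < polyNorm (fun x => T (Q x))) :
    polyIndex 𝕜 k Q ≤ α := by
  classical
  obtain ⟨A, hA⟩ := hQ
  have hQb : ∀ x : X, ‖x‖ ≤ 1 → ‖Q x‖ ≤ ‖A‖ := by
    intro x hx
    rw [hA]
    refine (A.le_opNorm _).trans ?_
    have h1 : (∏ _i : Fin k, ‖x‖) ≤ 1 :=
      Finset.prod_le_one (fun _ _ => norm_nonneg x) (fun _ _ => hx)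
    have h2 : (0 : ℝ) ≤ ‖A‖ := norm_nonneg A
    nlinarith
  have hQ1' : ∀ x : X, ‖x‖ ≤ 1 → ‖Q x‖ ≤ 1 := by
    intro x hx
    have hbdd : BddAbove {r : ℝ | ∃ x : X, ‖x‖ ≤ 1 ∧ r = ‖Q x‖} :=
      ⟨‖A‖, by rintro r ⟨x', hx', rfl⟩; exact hQb x' hx'⟩
    calc ‖Q x‖ ≤ sSup {r : ℝ | ∃ x : X, ‖x‖ ≤ 1 ∧ r = ‖Q x‖} := le_csSup hbdd ⟨x, hx, rfl⟩
      _ = 1 := hQ1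
  by_contra hlt
  push_neg at hlt
  set η := (polyIndex 𝕜 k Q - α) / 2 with hηdef
  have hηpos : 0 < η := by rw [hηdef]; linarith
  have hsuff : polyIndex 𝕜 k Q ≤ α + η := by
    set ε := min (1 / 2 : ℝ) (η / (1 + α + η)) with hεdef
    have hεpos : 0 < ε := lt_min (by norm_num) (by positivity)
    have hεhalf : ε ≤ 1 / 2 := min_le_left _ _
    have hkey : (α + ε) / (1 - ε) ≤ α + η := by
      rw [div_le_iff₀ (by linarith)]
      have h2 : ε ≤ η / (1 + α + η) := min_le_right _ _
      have h3 : ε * (1 + α + η) ≤ η := (le_div_iff₀ (by positivity)).1 h2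
      nlinarith [hεpos.le, hα0]
    obtain ⟨T, hvT, hcT⟩ := hT ε hεpos
    set c := polyNorm (fun x => T (Q x)) with hcdef
    have hc1 : 1 - ε < c := hcT
    have hcpos : 0 < c := by linarith
    set S1 := {r : ℝ | ∃ x : X, ‖x‖ ≤ 1 ∧ r = ‖T (Q x)‖} with hS1def
    have hS1ne : S1.Nonempty := ⟨‖T (Q 0)‖, 0, by simp, rfl⟩
    have hS1b : BddAbove S1 := by
      refine ⟨‖T‖, ?_⟩
      rintro r ⟨x, hx, rfl⟩
      calc ‖T (Q x)‖ ≤ ‖T‖ * ‖Q x‖ := T.le_opNorm _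
        _ ≤ ‖T‖ * 1 := mul_le_mul_of_nonneg_left (hQ1' x hx) (norm_nonneg T)
        _ = ‖T‖ := mul_one _
    have hcsup : c = sSup S1 := rfl
    have hTQle : ∀ x : X, ‖x‖ ≤ 1 → ‖T (Q x)‖ ≤ c := by
      intro x hx
      rw [hcsup]
      exact le_csSup hS1b ⟨x, hx, rfl⟩
    set P : X → Y := fun x => ((c⁻¹ : ℝ) : 𝕜) • T (Q x) with hPdef
    have hPnormx : ∀ x : X, ‖P x‖ = c⁻¹ * ‖T (Q x)‖ := by
      intro x
      rw [hPdef]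
      rw [norm_smul, RCLike.norm_ofReal, abs_of_nonneg (inv_nonneg.2 hcpos.le)]
    have hPle : ∀ x : X, ‖x‖ ≤ 1 → ‖P x‖ ≤ 1 := by
      intro x hx
      rw [hPnormx x]
      calc c⁻¹ * ‖T (Q x)‖ ≤ c⁻¹ * c :=
            mul_le_mul_of_nonneg_left (hTQle x hx) (inv_nonneg.2 hcpos.le)
        _ = 1 := inv_mul_cancel₀ hcpos.ne'
    have hS2b : BddAbove {r : ℝ | ∃ x : X, ‖x‖ ≤ 1 ∧ r = ‖P x‖} :=
      ⟨1, by rintro r ⟨x, hx, rfl⟩; exact hPle x hx⟩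
    have hPnorm1 : polyNorm P = 1 := by
      apply le_antisymm
      · exact Real.sSup_le (by rintro r ⟨x, hx, rfl⟩; exact hPle x hx) zero_le_one
      · apply le_of_forall_lt
        intro b hb
        have hbc : b * c < sSup S1 := by
          rw [← hcsup]
          nlinarith
        obtain ⟨r1, hr1mem, hbr⟩ := exists_lt_of_lt_csSup hS1ne hbc
        obtain ⟨x, hx, hr1⟩ := hr1mem
        have hlt2 : b < ‖P x‖ := by
          rw [hPnormx x, ← hr1]
          rw [inv_mul_eq_div, lt_div_iff₀ hcpos]
          linarith
        calc b < ‖P x‖ := hlt2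
          _ ≤ polyNorm P := le_csSup hS2b ⟨x, hx, rfl⟩
    have hPhom : IsHomPoly 𝕜 k P := by
      refine ⟨((c⁻¹ : ℝ) : 𝕜) • (T.compContinuousMultilinearMap A), fun x => ?_⟩
      rw [hPdef]
      simp [hA x]
    obtain ⟨δ, hδpos, happrox⟩ := aux_approx T hεpos
    have hvQnonneg : ∀ (P' : X → Y) (δ' : ℝ), 0 ≤ vQdelta 𝕜 Q P' δ' := by
      intro P' δ'
      apply Real.sSup_nonneg
      rintro r ⟨x, f, _, _, _, rfl⟩
      positivity
    have hnumRadnonneg : ∀ P' : X → Y, 0 ≤ numRad 𝕜 Q P' := by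
      intro P'
      apply Real.sInf_nonneg
      rintro r ⟨δ', _, rfl⟩
      exact hvQnonneg P' δ'
    have h1 : polyIndex 𝕜 k Q ≤ numRad 𝕜 Q P := by
      apply csInf_le
      · exact ⟨0, by rintro r ⟨P', _, _, rfl⟩; exact hnumRadnonneg P'⟩
      · exact ⟨P, hPhom, hPnorm1, rfl⟩
    have h2 : numRad 𝕜 Q P ≤ vQdelta 𝕜 Q P δ := by
      apply csInf_le
      · exact ⟨0, by rintro r ⟨δ', _, rfl⟩; exact hvQnonneg P δ'⟩
      · exact ⟨δ, hδpos, rfl⟩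
    have h3 : vQdelta 𝕜 Q P δ ≤ (α + ε) / (1 - ε) := by
      apply Real.sSup_le
      · rintro r ⟨x, f, hx, hf, hrex, rfl⟩
        have hQx : ‖Q x‖ ≤ 1 := hQ1' x (le_of_eq hx)
        have h4 := happrox (Q x) f hQx hf hrex
        have h5 : ‖f (P x)‖ = c⁻¹ * ‖f (T (Q x))‖ := by
          rw [hPdef]
          simp only [map_smul, smul_eq_mul, norm_mul, RCLike.norm_ofReal]
          rw [abs_of_nonneg (inv_nonneg.2 hcpos.le)]
        rw [h5]
        have h6 : ‖f (T (Q x))‖ ≤ α + ε := h4.trans (by linarith)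
        have h7 : c⁻¹ ≤ (1 - ε)⁻¹ := by
          apply inv_anti₀ (by linarith) hc1.le
        calc c⁻¹ * ‖f (T (Q x))‖ ≤ (1 - ε)⁻¹ * (α + ε) :=
              mul_le_mul h7 h6 (norm_nonneg _) (inv_nonneg.2 (by linarith))
          _ = (α + ε) / (1 - ε) := (div_eq_inv_mul _ _).symm
      · exact div_nonneg (by linarith) (by linarith)
    linarith
  rw [hηdef] at hsuff
  linarith
end
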